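/- arXiv:1703.06356 — 12 statements merged into one kernel-verified Lean document; each statement's English description precedes it below -/
import Mathlib

section
/- Let A = (Q, Σ, δ) be a deterministic finite automaton that is monotonic, i.e., there is a linear order ≤ on Q such that for every letter x ∈ Σ, q₁ ≤ q₂ implies δ(q₁,x) ≤ δ(q₂,x). Then a subset S ⊆ Q is synchronizing (there exists a word w and a state q with δ(s,w) = q for all s ∈ S) if and only if every two-element subset of S is synchronizing. -/
/-- A subset `S` of states of a monotonic DFA is synchronizing iff every pair
of states of `S` is synchronizing. -/
theorem stmt0 {Q A : Type*} [Fintype Q] [Nonempty Q] [Fintype A] [LinearOrder Q]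
    (δ : Q → A → Q) (hmono : ∀ x : A, Monotone (fun q => δ q x)) (S : Set Q) :
    (∃ (w : List A) (q : Q), ∀ s ∈ S, w.foldl δ s = q) ↔
      (∀ a ∈ S, ∀ b ∈ S, ∃ (w : List A) (q : Q),
        ∀ s ∈ ({a, b} : Set Q), w.foldl δ s = q) := by
  classical
  constructor
  · rintro ⟨w, q, hq⟩ a ha b hb
    refine ⟨w, q, ?_⟩
    rintro s (rfl | rfl)
    · exact hq _ ha
    · exact hq _ hb
  · intro h
    have hmonoW : ∀ w : List A, Monotone (fun s => w.foldl δ s) := by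
      intro w
      induction w with
      | nil => exact monotone_id
      | cons x w ih => exact fun p r hpr => ih (hmono x hpr)
    rcases S.eq_empty_or_nonempty with rfl | hS
    · exact ⟨[], Classical.arbitrary Q, by simp⟩
    · set T := S.toFinite.toFinset with hT
      have hne : T.Nonempty := by
        rw [hT, Set.Finite.toFinset_nonempty]; exact hS
      set a := T.min' hne
      set b := T.max' hne
      have haS : a ∈ S := S.toFinite.mem_toFinset.mp (T.min'_mem hne)
      have hbS : b ∈ S := S.toFinite.mem_toFinset.mp (T.max'_mem hne)
      obtain ⟨w, q, hw⟩ := h a haS b hbS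
      have hqa : w.foldl δ a = q := hw a (Or.inl rfl)
      have hqb : w.foldl δ b = q := hw b (Or.inr rfl)
      refine ⟨w, q, fun s hs => ?_⟩
      have hsT : s ∈ T := S.toFinite.mem_toFinset.mpr hs
      have h1 : q ≤ w.foldl δ s := hqa ▸ hmonoW w (T.min'_le s hsT)
      have h2 : w.foldl δ s ≤ q := hqb ▸ hmonoW w (T.le_max' s hsT)
      exact le_antisymm h2 h1
end

section
/- In a monotonic automaton, any word of minimum length synchronizing the pair {min S, max S} is a word of minimum length synchronizing S, for any nonempty subset S of states. -/
lemma foldl_mono {Q A : Type*} [LinearOrder Q] (δ : Q → A → Q)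
    (hmono : ∀ x : A, Monotone (fun q => δ q x)) (w : List A) :
    Monotone (fun q => w.foldl δ q) := by
  induction w with
  | nil => exact monotone_id
  | cons a t ih => exact fun p q h => ih (hmono a h)

/-- In a monotonic automaton, any shortest word synchronizing `{min S, max S}`
is a shortest word synchronizing `S`. -/
theorem stmt2 {Q A : Type*} [LinearOrder Q] (δ : Q → A → Q)
    (hmono : ∀ x : A, Monotone (fun q => δ q x))
    (S : Set Q) (ql qr : Q) (hql : ql ∈ S) (hqr : qr ∈ S)
    (hmin : ∀ s ∈ S, ql ≤ s) (hmax : ∀ s ∈ S, s ≤ qr)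
    (w : List A) (hw : w.foldl δ ql = w.foldl δ qr)
    (hshort : ∀ w' : List A, w'.foldl δ ql = w'.foldl δ qr → w.length ≤ w'.length) :
    (∃ q : Q, ∀ s ∈ S, w.foldl δ s = q) ∧
      (∀ w' : List A, (∃ q : Q, ∀ s ∈ S, w'.foldl δ s = q) → w.length ≤ w'.length) := by
  constructor
  · refine ⟨w.foldl δ ql, fun s hs => ?_⟩
    have h1 := foldl_mono δ hmono w (hmin s hs)
    have h2 := foldl_mono δ hmono w (hmax s hs)
    exact le_antisymm (hw ▸ h2) h1
  · rintro w' ⟨q, hq⟩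
    exact hshort w' ((hq ql hql).trans (hq qr hqr).symm)
end

section
/- In a monotonic automaton, every maximal (by inclusion) synchronizing set of states is an interval with respect to the preserved linear order: if S is synchronizing and S ⊆ T for no strictly larger synchronizing set T, then S = [min S, max S]. -/
/-- In a monotonic automaton, every maximal (by inclusion) synchronizing set of
states is an interval with respect to the preserved linear order. -/
theorem stmt3 {Q A : Type*} [LinearOrder Q] (δ : Q → A → Q)
    (hmono : ∀ x : A, Monotone (fun q => δ q x))
    (S : Set Q) (a b : Q) (ha : a ∈ S) (hb : b ∈ S) (hbound : S ⊆ Set.Icc a b)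
    (hsync : ∃ (w : List A) (q : Q), ∀ s ∈ S, w.foldl δ s = q)
    (hmaximal : ∀ T : Set Q, S ⊆ T →
      (∃ (w : List A) (q : Q), ∀ s ∈ T, w.foldl δ s = q) → S = T) :
    S = Set.Icc a b := by
  obtain ⟨w, q, hq⟩ := hsync
  refine hmaximal _ hbound ⟨w, q, fun s hs => ?_⟩
  have h1 : w.foldl δ a ≤ w.foldl δ s := foldl_mono δ hmono w hs.1
  have h2 : w.foldl δ s ≤ w.foldl δ b := foldl_mono δ hmono w hs.2
  rw [hq a ha] at h1
  rw [hq b hb] at h2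
  exact le_antisymm h2 h1
end

section
/- For every positive integer k₀ there exist a deterministic finite automaton A over the binary alphabet {0,1} that is weakly acyclic, and a subset S of its states with |S| ≥ k₀, such that every pair of states in S is synchronizing, but the rank of S equals |S| − 1 (in particular, S itself is not synchronizing when |S| ≥ 2). -/
namespace Stmt5Aux

/-- Transition function on raw naturals.  States `k*t + i` with `t < k*k`, `i < k`
are "active" (agent `i` at time `t`); states `k*(k*k) + i` with `i < k` are dead
sinks; state `k*(k*k) + k` is the merge sink.  On `false` an active state advances
in time; on `true` agent `i` at time `t` goes to the merge sink if `i ∈ {t/k, t%k}`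
and otherwise dies. Sinks are fixed. -/
def f (k q : ℕ) (x : Bool) : ℕ :=
  if k * (k * k) ≤ q then q
  else if x then
    if q % k = q / k / k ∨ q % k = q / k % k then k * (k * k) + k
    else k * (k * k) + q % k
  else q + k

lemma le_f (k q : ℕ) (x : Bool) : q ≤ f k q x := by
  unfold f
  split
  · exact le_rfl
  · rename_i h
    split
    · split <;> omega
    · omega

lemma f_lt (k q : ℕ) (x : Bool) (hq : q < k * (k * k) + k + 1) :
    f k q x < k * (k * k) + k + 1 := by
  unfold f
  split
  · exact hq
  · rename_i h
    have hk : 0 < k := by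
      rcases Nat.eq_zero_or_pos k with h0 | h0
      · exfalso; apply h; simp [h0]
      · exact h0
    have := Nat.mod_lt q hk
    split
    · split <;> omega
    · omega

def dlt (k : ℕ) : Fin (k * (k * k) + k + 1) → Bool → Fin (k * (k * k) + k + 1) :=
  fun q x => ⟨f k q.val x, f_lt k q.val x q.isLt⟩

lemma ilt (k i : ℕ) (hi : i < k) : i < k * (k * k) + k + 1 := by
  have : k ≤ k * (k * k) + k := by omega
  omega

lemma active_lt (k t i : ℕ) (ht : t < k * k) (hi : i < k) :
    k * t + i < k * (k * k) := by
  have h1 : t + 1 ≤ k * k := ht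
  have h2 : k * (t + 1) ≤ k * (k * k) := Nat.mul_le_mul_left k h1
  have h3 : k * (t + 1) = k * t + k := by ring
  omega

lemma f_sink (k q : ℕ) (x : Bool) (h : k * (k * k) ≤ q) : f k q x = q := by
  unfold f; rw [if_pos h]

lemma f_active_false (k t i : ℕ) (ht : t < k * k) (hi : i < k) :
    f k (k * t + i) false = k * (t + 1) + i := by
  have h := active_lt k t i ht hi
  unfold f
  rw [if_neg (by omega)]
  simp only [Bool.false_eq_true, if_false]
  ring

lemma div_mod_active (k t i : ℕ) (hi : i < k) :
    (k * t + i) / k = t ∧ (k * t + i) % k = i := by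
  have hk : 0 < k := by omega
  constructor
  · rw [Nat.mul_add_div hk, Nat.div_eq_of_lt hi]
    omega
  · rw [Nat.mul_add_mod, Nat.mod_eq_of_lt hi]

lemma f_active_true (k t i : ℕ) (ht : t < k * k) (hi : i < k) :
    f k (k * t + i) true =
      if i = t / k ∨ i = t % k then k * (k * k) + k else k * (k * k) + i := by
  have h := active_lt k t i ht hi
  obtain ⟨hd, hm⟩ := div_mod_active k t i hi
  unfold f
  rw [if_neg (by omega)]
  simp only [if_true, hd, hm]

/-- The key structural lemma: after reading any word, either all agents are still
active at a common time `t`, or exactly the agents in one pair `{a, b}` have been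
merged and all others are in their private dead sinks. -/
lemma trichotomy (k : ℕ) (hk : 0 < k) (w : List Bool) :
    (∃ t, t ≤ k * k ∧ ∀ i, (hi : i < k) →
        (w.foldl (dlt k) ⟨i, ilt k i hi⟩).val = k * t + i) ∨
    (∃ a b, a < k ∧ b < k ∧ ∀ i, (hi : i < k) →
        (w.foldl (dlt k) ⟨i, ilt k i hi⟩).val =
          if i = a ∨ i = b then k * (k * k) + k else k * (k * k) + i) := by
  induction w using List.reverseRecOn with
  | nil =>
    left
    exact ⟨0, Nat.zero_le _, fun i hi => by simp⟩
  | append_singleton w x ih =>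
    rcases ih with ⟨t, ht, hrun⟩ | ⟨a, b, ha, hb, hrun⟩
    · rcases Nat.lt_or_ge t (k * k) with htl | hte
      · cases x with
        | false =>
          left
          refine ⟨t + 1, htl, fun i hi => ?_⟩
          rw [List.foldl_append]
          show (dlt k _ false).val = _
          simp only [dlt]
          rw [hrun i hi, f_active_false k t i htl hi]
        | true =>
          right
          refine ⟨t / k, t % k, ?_, Nat.mod_lt t hk, fun i hi => ?_⟩
          · exact Nat.div_lt_of_lt_mul (by rw [Nat.mul_comm] at htl ⊢; exact htl)
          · rw [List.foldl_append]
            show (dlt k _ true).val = _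
            simp only [dlt]
            rw [hrun i hi, f_active_true k t i htl hi]
      · -- t = k*k : everything is in a dead sink, fixed
        left
        refine ⟨t, ht, fun i hi => ?_⟩
        rw [List.foldl_append]
        show (dlt k _ x).val = _
        simp only [dlt]
        rw [hrun i hi, f_sink]
        have : k * (k * k) ≤ k * t := Nat.mul_le_mul_left k hte
        omega
    · right
      refine ⟨a, b, ha, hb, fun i hi => ?_⟩
      rw [List.foldl_append]
      show (dlt k _ x).val = _
      simp only [dlt]
      rw [hrun i hi]
      split <;> rw [f_sink] <;> omega

lemma run_false (k : ℕ) (t : ℕ) (ht : t ≤ k * k) (i : ℕ) (hi : i < k) :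
    ((List.replicate t false).foldl (dlt k) ⟨i, ilt k i hi⟩).val = k * t + i := by
  induction t with
  | zero => simp
  | succ t ihh =>
    rw [List.replicate_succ', List.foldl_append]
    show (dlt k _ false).val = _
    simp only [dlt]
    rw [ihh (by omega), f_active_false k t i (by omega) hi]

/-- If `g` identifies exactly one pair of a finset's elements and is otherwise
injective, the image has one fewer element. -/
lemma card_image_pair {α β : Type*} [DecidableEq α] [DecidableEq β]
    (s : Finset α) (g : α → β) (a b : α) (ha : a ∈ s) (hb : b ∈ s) (hab : a ≠ b)
    (hg : g a = g b) (hinj : Set.InjOn g (s.erase a)) :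
    (s.image g).card = s.card - 1 := by
  have himg : s.image g = (s.erase a).image g := by
    apply Finset.Subset.antisymm
    · intro y hy
      rw [Finset.mem_image] at hy ⊢
      obtain ⟨x, hx, rfl⟩ := hy
      by_cases hxa : x = a
      · exact ⟨b, Finset.mem_erase.mpr ⟨fun hba => hab hba.symm, hb⟩, by rw [hxa, hg]⟩
      · exact ⟨x, Finset.mem_erase.mpr ⟨hxa, hx⟩, rfl⟩
    · exact Finset.image_subset_image (Finset.erase_subset _ _)
  rw [himg, Finset.card_image_of_injOn hinj, Finset.card_erase_of_mem ha]

end Stmt5Aux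

open Stmt5Aux in
/-- For every positive `k₀` there is a binary weakly acyclic DFA and a subset
`S` of its states with `|S| ≥ k₀` such that every pair of states of `S` is
synchronizing but the rank of `S` equals `|S| - 1`. -/
theorem stmt5 (k0 : ℕ) (hk : 0 < k0) :
    ∃ (n : ℕ) (δ : Fin n → Bool → Fin n) (S : Finset (Fin n)),
      (∀ (q : Fin n) (x : Bool), q ≤ δ q x) ∧
      k0 ≤ S.card ∧
      (∀ a ∈ S, ∀ b ∈ S, ∃ w : List Bool, w.foldl δ a = w.foldl δ b) ∧
      (∃ w : List Bool, (S.image (fun s => w.foldl δ s)).card = S.card - 1) ∧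
      (∀ w : List Bool, S.card - 1 ≤ (S.image (fun s => w.foldl δ s)).card) := by
  set k := max k0 2 with hkdef
  have hk2 : 2 ≤ k := le_max_right _ _
  have hk0 : k0 ≤ k := le_max_left _ _
  have hkpos : 0 < k := by omega
  refine ⟨k * (k * k) + k + 1, dlt k,
    (Finset.range k).attachFin (fun m hm => ilt k m (Finset.mem_range.mp hm)),
    ?_, ?_, ?_, ?_, ?_⟩
  · intro q x
    exact le_f k q.val x
  · rw [Finset.card_attachFin, Finset.card_range]; exact hk0
  · -- every pair is synchronizing
    intro a hA b hB
    by_cases hab : a = b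
    · exact ⟨[], by rw [hab]⟩
    have ha : a.val < k := Finset.mem_range.mp ((Finset.mem_attachFin _).mp hA)
    have hb : b.val < k := Finset.mem_range.mp ((Finset.mem_attachFin _).mp hB)
    set t := k * a.val + b.val with htdef
    have htk : t < k * k := by
      have h2 : k * (a.val + 1) ≤ k * k := Nat.mul_le_mul_left k ha
      have h3 : k * (a.val + 1) = k * a.val + k := by ring
      omega
    refine ⟨List.replicate t false ++ [true], ?_⟩
    have key : ∀ c : Fin (k * (k * k) + k + 1), (hc : c.val < k) →
        (c.val = t / k ∨ c.val = t % k) →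
        ((List.replicate t false ++ [true]).foldl (dlt k) c).val
          = k * (k * k) + k := by
      intro c hc hcond
      rw [List.foldl_append]
      show (dlt k _ true).val = _
      simp only [dlt]
      have hc' : c = ⟨c.val, ilt k c.val hc⟩ := by ext; rfl
      rw [hc', run_false k t (le_of_lt htk) c.val hc,
        f_active_true k t c.val htk hc, if_pos hcond]
    obtain ⟨hd, hm⟩ := div_mod_active k a.val b.val hb
    apply Fin.ext
    rw [key a ha (Or.inl hd.symm), key b hb (Or.inr hm.symm)]
  · -- word [false, true] merges exactly agents 0 and 1
    have hrun : ∀ c : Fin (k * (k * k) + k + 1), c.val < k →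
        (([false, true]).foldl (dlt k) c).val =
          if c.val = 0 ∨ c.val = 1 then k * (k * k) + k else k * (k * k) + c.val := by
      intro c hc
      show (dlt k (dlt k c false) true).val = _
      simp only [dlt]
      have h0 : f k c.val false = k * 1 + c.val := by
        have h := f_active_false k 0 c.val (by nlinarith) hc
        rw [show k * 0 + c.val = c.val from by ring,
          show (0 : ℕ) + 1 = 1 from rfl] at h
        exact h
      rw [h0, f_active_true k 1 c.val (by nlinarith) hc,
        Nat.div_eq_of_lt (by omega), Nat.mod_eq_of_lt (by omega)]
    refine ⟨[false, true], ?_⟩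
    refine card_image_pair _ _ ⟨0, ilt k 0 (by omega)⟩ ⟨1, ilt k 1 (by omega)⟩
      ((Finset.mem_attachFin _).mpr (Finset.mem_range.mpr (by exact hkpos)))
      ((Finset.mem_attachFin _).mpr (Finset.mem_range.mpr
        (by exact Nat.lt_of_lt_of_le Nat.one_lt_two hk2)))
      (Fin.ne_of_val_ne (by norm_num)) ?_ ?_
    · apply Fin.ext
      show (([false, true]).foldl (dlt k) _).val = (([false, true]).foldl (dlt k) _).val
      rw [hrun _ (by exact hkpos), hrun _ (by exact Nat.lt_of_lt_of_le Nat.one_lt_two hk2)]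
      simp
    · intro x hx y hy hxy
      have hx' := Finset.mem_coe.mp hx
      have hy' := Finset.mem_coe.mp hy
      rw [Finset.mem_erase] at hx' hy'
      obtain ⟨hxa, hxS⟩ := hx'
      obtain ⟨hya, hyS⟩ := hy'
      have hxk : x.val < k := Finset.mem_range.mp ((Finset.mem_attachFin _).mp hxS)
      have hyk : y.val < k := Finset.mem_range.mp ((Finset.mem_attachFin _).mp hyS)
      have hx0 : x.val ≠ 0 := fun h => hxa (Fin.ext h)
      have hy0 : y.val ≠ 0 := fun h => hya (Fin.ext h)
      have h := congrArg Fin.val hxy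
      simp only at h
      rw [hrun x hxk, hrun y hyk] at h
      apply Fin.ext
      split_ifs at h <;> omega
  · -- every word keeps at least card-1 images
    intro w
    rcases trichotomy k hkpos w with ⟨t, ht, hrun⟩ | ⟨a, b, ha, hb, hrun⟩
    · have hcard : ((((Finset.range k).attachFin
          (fun m hm => ilt k m (Finset.mem_range.mp hm))).image
            (fun s => w.foldl (dlt k) s)).card) =
          ((Finset.range k).attachFin
            (fun m hm => ilt k m (Finset.mem_range.mp hm))).card := by
        apply Finset.card_image_of_injOn
        intro x hx y hy hxy
        have hxk : x.val < k :=
          Finset.mem_range.mp ((Finset.mem_attachFin _).mp (Finset.mem_coe.mp hx))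
        have hyk : y.val < k :=
          Finset.mem_range.mp ((Finset.mem_attachFin _).mp (Finset.mem_coe.mp hy))
        have h := congrArg Fin.val hxy
        simp only at h
        have ex : (⟨x.val, ilt k x.val hxk⟩ : Fin (k * (k * k) + k + 1)) = x := rfl
        have ey : (⟨y.val, ilt k y.val hyk⟩ : Fin (k * (k * k) + k + 1)) = y := rfl
        rw [← ex, ← ey, hrun x.val hxk, hrun y.val hyk] at h
        exact Fin.ext (by omega)
      rw [hcard]
      exact Nat.sub_le _ _
    · set A : Fin (k * (k * k) + k + 1) := ⟨a, ilt k a ha⟩ with hAdef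
      have hAS : A ∈ (Finset.range k).attachFin
          (fun m hm => ilt k m (Finset.mem_range.mp hm)) :=
        (Finset.mem_attachFin _).mpr (Finset.mem_range.mpr ha)
      have hrun' : ∀ c : Fin (k * (k * k) + k + 1), c.val < k →
          (w.foldl (dlt k) c).val =
            if c.val = a ∨ c.val = b then k * (k * k) + k else k * (k * k) + c.val := by
        intro c hc
        have ec : (⟨c.val, ilt k c.val hc⟩ : Fin (k * (k * k) + k + 1)) = c := rfl
        rw [← ec, hrun c.val hc]
      have hinj : Set.InjOn (fun s => w.foldl (dlt k) s)
          (((Finset.range k).attachFin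
            (fun m hm => ilt k m (Finset.mem_range.mp hm))).erase A) := by
        intro x hx y hy hxy
        have hx' := Finset.mem_coe.mp hx
        have hy' := Finset.mem_coe.mp hy
        rw [Finset.mem_erase] at hx' hy'
        obtain ⟨hxa, hxS⟩ := hx'
        obtain ⟨hya, hyS⟩ := hy'
        have hxk : x.val < k := Finset.mem_range.mp ((Finset.mem_attachFin _).mp hxS)
        have hyk : y.val < k := Finset.mem_range.mp ((Finset.mem_attachFin _).mp hyS)
        have hx0 : x.val ≠ a := fun h => hxa (Fin.ext h)
        have hy0 : y.val ≠ a := fun h => hya (Fin.ext h)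
        have h := congrArg Fin.val hxy
        simp only at h
        rw [hrun' x hxk, hrun' y hyk] at h
        apply Fin.ext
        split_ifs at h <;> omega
      calc ((Finset.range k).attachFin
              (fun m hm => ilt k m (Finset.mem_range.mp hm))).card - 1
          = (((Finset.range k).attachFin
              (fun m hm => ilt k m (Finset.mem_range.mp hm))).erase A).card := by
            rw [Finset.card_erase_of_mem hAS]
        _ = ((((Finset.range k).attachFin
              (fun m hm => ilt k m (Finset.mem_range.mp hm))).erase A).image
                (fun s => w.foldl (dlt k) s)).card :=
            (Finset.card_image_of_injOn hinj).symm
        _ ≤ _ := Finset.card_le_card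
            (Finset.image_subset_image (Finset.erase_subset _ _))
end

section
/- For each m ≥ 1 there exists a monotonic automaton with 2m+3 states over a three-letter alphabet and a two-element subset S of its states such that S is synchronizing and the shortest word synchronizing S has length exactly m² + m. -/
namespace Stmt7aux

def dd (m q : ℕ) (x : Fin 3) : ℕ :=
  if q = 0 ∨ q = m + 1 ∨ q = 2 * m + 2 then q
  else if q ≤ m then (if x = 0 then q + 1 else if x = 1 then q else 0)
  else if q = m + 2 then (if x = 0 then 2 * m + 1 else if x = 1 then q else m + 1)
  else (if x = 0 then 2 * m + 2 else if x = 1 then q - 1 else q)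

def R (m p q : ℕ) : ℕ := if q = m+1 then m+1-p else (m+1-p)*m + (q-(m+1))

lemma dd_lt (m q : ℕ) (x : Fin 3) (hq : q < 2 * m + 3) : dd m q x < 2 * m + 3 := by
  unfold dd; split_ifs <;> omega

lemma dd_mono (m : ℕ) (x : Fin 3) (p q : ℕ) (h : p ≤ q) : dd m p x ≤ dd m q x := by
  unfold dd; split_ifs <;> omega

lemma dd_zero (m : ℕ) (x : Fin 3) : dd m 0 x = 0 := by unfold dd; split_ifs <;> omega
lemma dd_mid (m : ℕ) (x : Fin 3) : dd m (m+1) x = m+1 := by unfold dd; split_ifs <;> omega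
lemma dd_top (m : ℕ) (x : Fin 3) : dd m (2*m+2) x = 2*m+2 := by unfold dd; split_ifs <;> omega

lemma dd_left0 (m p : ℕ) (h1 : 1 ≤ p) (h2 : p ≤ m) : dd m p 0 = p + 1 := by
  unfold dd; split_ifs <;> first | omega | simp_all
lemma dd_left1 (m p : ℕ) (h1 : 1 ≤ p) (h2 : p ≤ m) : dd m p 1 = p := by
  unfold dd; split_ifs <;> first | omega | simp_all
lemma dd_left2 (m p : ℕ) (h1 : 1 ≤ p) (h2 : p ≤ m) : dd m p 2 = 0 := by
  unfold dd; split_ifs <;> first | omega | simp_all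
lemma dd_c0 (m : ℕ) (hm : 1 ≤ m) : dd m (m+2) 0 = 2*m+1 := by
  unfold dd; split_ifs <;> first | omega | simp_all
lemma dd_c1 (m : ℕ) (hm : 1 ≤ m) : dd m (m+2) 1 = m+2 := by
  unfold dd; split_ifs <;> first | omega | simp_all
lemma dd_c2 (m : ℕ) (hm : 1 ≤ m) : dd m (m+2) 2 = m+1 := by
  unfold dd; split_ifs <;> first | omega | simp_all
lemma dd_r0 (m q : ℕ) (h1 : m+3 ≤ q) (h2 : q ≤ 2*m+1) : dd m q 0 = 2*m+2 := by
  unfold dd; split_ifs <;> first | omega | simp_all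
lemma dd_r1 (m q : ℕ) (h1 : m+3 ≤ q) (h2 : q ≤ 2*m+1) : dd m q 1 = q - 1 := by
  unfold dd; split_ifs <;> first | omega | simp_all
lemma dd_r2 (m q : ℕ) (h1 : m+3 ≤ q) (h2 : q ≤ 2*m+1) : dd m q 2 = q := by
  unfold dd; split_ifs <;> first | omega | simp_all

lemma dd_left_inv (m p : ℕ) (x : Fin 3) (h : p ≤ m+1) : dd m p x ≤ m+1 := by
  unfold dd; split_ifs <;> omega
lemma dd_right_inv (m q : ℕ) (x : Fin 3) (h1 : m+1 ≤ q) (h2 : q ≤ 2*m+2) :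
    m+1 ≤ dd m q x ∧ dd m q x ≤ 2*m+2 := by
  unfold dd; split_ifs <;> omega

lemma foldl_zero (m : ℕ) (w : List (Fin 3)) : w.foldl (dd m) 0 = 0 := by
  induction w with
  | nil => rfl
  | cons x w ih => simp [List.foldl_cons, dd_zero, ih]

lemma foldl_top (m : ℕ) (w : List (Fin 3)) : w.foldl (dd m) (2*m+2) = 2*m+2 := by
  induction w with
  | nil => rfl
  | cons x w ih => simp [List.foldl_cons, dd_top, ih]

lemma foldl_left_inv (m : ℕ) (w : List (Fin 3)) : ∀ p, p ≤ m+1 → w.foldl (dd m) p ≤ m+1 := by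
  induction w with
  | nil => intro p h; exact h
  | cons x w ih => intro p h; exact ih _ (dd_left_inv m p x h)

lemma foldl_right_inv (m : ℕ) (w : List (Fin 3)) :
    ∀ q, m+1 ≤ q → q ≤ 2*m+2 → m+1 ≤ w.foldl (dd m) q ∧ w.foldl (dd m) q ≤ 2*m+2 := by
  induction w with
  | nil => intro q h1 h2; exact ⟨h1, h2⟩
  | cons x w ih => intro q h1 h2
                   obtain ⟨a, b⟩ := dd_right_inv m q x h1 h2
                   exact ih _ a b

lemma step (m p q : ℕ) (hm : 1 ≤ m) (x : Fin 3) (hp1 : 1 ≤ p) (hp2 : p ≤ m+1)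
    (hq1 : m+1 ≤ q) (hq2 : q ≤ 2*m+1)
    (hp' : dd m p x ≠ 0) (hq' : dd m q x ≠ 2*m+2) :
    R m p q ≤ R m (dd m p x) (dd m q x) + 1 := by
  have hx : x = 0 ∨ x = 1 ∨ x = 2 := by fin_cases x <;> simp
  have hq3 : q = m+1 ∨ q = m+2 ∨ (m+3 ≤ q ∧ q ≤ 2*m+1) := by omega
  have hp3 : p ≤ m ∨ p = m+1 := by omega
  rcases hx with hx | hx | hx <;> subst hx
  · -- letter 0
    rcases hq3 with hq | hq | ⟨hq, hq'2⟩
    · subst hq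
      rcases hp3 with hp | hp
      · rw [dd_left0 m p hp1 hp, dd_mid]
        unfold R; rw [if_pos rfl, if_pos rfl]; omega
      · subst hp; rw [dd_mid]; exact Nat.le_succ _
    · subst hq
      rw [dd_c0 m hm]
      rcases hp3 with hp | hp
      · rw [dd_left0 m p hp1 hp]
        unfold R
        rw [if_neg (by omega), if_neg (by omega)]
        have e1 : m+1-p = (m-p)+1 := by omega
        have e2 : m+1-(p+1) = m-p := by omega
        have e3 : m+2-(m+1) = 1 := by omega
        have e4 : 2*m+1-(m+1) = m := by omega
        rw [e1, e2, e3, e4, add_mul, one_mul]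
      · subst hp; rw [dd_mid]
        unfold R
        rw [if_neg (by omega), if_neg (by omega)]
        have e1 : m+1-(m+1) = 0 := by omega
        rw [e1, Nat.zero_mul]; omega
    · exact absurd (dd_r0 m q hq hq'2) hq'
  · -- letter 1
    have hpp : dd m p 1 = p := by
      rcases hp3 with hp | hp
      · exact dd_left1 m p hp1 hp
      · subst hp; exact dd_mid m 1
    rw [hpp]
    rcases hq3 with hq | hq | ⟨hq, hq'2⟩
    · subst hq; rw [dd_mid]; exact Nat.le_succ _
    · subst hq; rw [dd_c1 m hm]; exact Nat.le_succ _
    · rw [dd_r1 m q hq hq'2]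
      unfold R
      rw [if_neg (by omega), if_neg (by omega)]
      have e : q-(m+1) = (q-1-(m+1))+1 := by omega
      rw [e]; linarith
  · -- letter 2
    have hp : p = m+1 := by
      rcases hp3 with hp | hp
      · exact absurd (dd_left2 m p hp1 hp) hp'
      · exact hp
    subst hp; rw [dd_mid]
    rcases hq3 with hq | hq | ⟨hq, hq'2⟩
    · subst hq; rw [dd_mid]; exact Nat.le_succ _
    · subst hq; rw [dd_c2 m hm]
      unfold R
      rw [if_neg (by omega), if_pos rfl]
      have e1 : m+1-(m+1) = 0 := by omega
      rw [e1, Nat.zero_mul]; omega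
    · rw [dd_r2 m q hq hq'2]; exact Nat.le_succ _

lemma key (m : ℕ) (hm : 1 ≤ m) : ∀ w : List (Fin 3), ∀ p q : ℕ,
    1 ≤ p → p ≤ m+1 → m+1 ≤ q → q ≤ 2*m+1 →
    w.foldl (dd m) p = w.foldl (dd m) q → R m p q ≤ w.length := by
  intro w
  induction w with
  | nil =>
      intro p q hp1 hp2 hq1 hq2 h
      simp only [List.foldl_nil] at h
      unfold R
      rw [if_pos (by omega)]
      simp only [List.length_nil]
      omega
  | cons x w ih =>
      intro p q hp1 hp2 hq1 hq2 h
      simp only [List.foldl_cons] at h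
      by_cases hp' : dd m p x = 0
      · exfalso
        rw [hp', foldl_zero] at h
        obtain ⟨hr1, hr2⟩ := dd_right_inv m q x hq1 (by omega)
        have := (foldl_right_inv m w (dd m q x) hr1 hr2).1
        omega
      by_cases hq' : dd m q x = 2*m+2
      · exfalso
        rw [hq', foldl_top] at h
        have := foldl_left_inv m w (dd m p x) (dd_left_inv m p x hp2)
        omega
      have h1 := dd_left_inv m p x hp2
      obtain ⟨h2, h3⟩ := dd_right_inv m q x hq1 (by omega)
      have hih := ih (dd m p x) (dd m q x) (by omega) h1 h2 (by omega) h
      have hs := step m p q hm x hp1 hp2 hq1 hq2 hp' hq'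
      simp only [List.length_cons]
      exact hs.trans (Nat.add_le_add_right hih 1)

/-! Upper bound -/

def blk (m : ℕ) : List (Fin 3) := List.replicate (m-1) 1 ++ [0]
def W (m : ℕ) : List (Fin 3) := (List.replicate m (blk m)).flatten ++ (List.replicate (m-1) 1 ++ [2])

lemma ones_fix (m : ℕ) : ∀ (k p : ℕ), 1 ≤ p → p ≤ m+1 →
    (List.replicate k (1 : Fin 3)).foldl (dd m) p = p := by
  intro k
  induction k with
  | zero => intro p _ _; rfl
  | succ k ih =>
      intro p h1 h2
      rw [List.replicate_succ, List.foldl_cons]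
      have hd : dd m p 1 = p := by
        rcases (by omega : p ≤ m ∨ p = m+1) with h | h
        · exact dd_left1 m p h1 h
        · subst h; exact dd_mid m 1
      rw [hd]; exact ih p h1 h2

lemma ones_down (m : ℕ) : ∀ (k q : ℕ), m+2 ≤ q → q ≤ 2*m+1 → k ≤ q - (m+2) →
    (List.replicate k (1 : Fin 3)).foldl (dd m) q = q - k := by
  intro k
  induction k with
  | zero => intro q _ _ _; rfl
  | succ k ih =>
      intro q h1 h2 h3
      rw [List.replicate_succ, List.foldl_cons]
      rw [dd_r1 m q (by omega) h2]
      rw [ih (q-1) (by omega) (by omega) (by omega)]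
      omega

lemma blk_left (m : ℕ) (hm : 1 ≤ m) (p : ℕ) (h1 : 1 ≤ p) (h2 : p ≤ m) :
    (blk m).foldl (dd m) p = p + 1 := by
  unfold blk
  rw [List.foldl_append, ones_fix m (m-1) p h1 (by omega)]
  simp only [List.foldl_cons, List.foldl_nil]
  exact dd_left0 m p h1 h2

lemma blk_right (m : ℕ) (hm : 1 ≤ m) :
    (blk m).foldl (dd m) (2*m+1) = 2*m+1 := by
  unfold blk
  rw [List.foldl_append, ones_down m (m-1) (2*m+1) (by omega) (by omega) (by omega)]
  have e : 2*m+1-(m-1) = m+2 := by omega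
  rw [e]
  simp only [List.foldl_cons, List.foldl_nil]
  exact dd_c0 m hm

lemma blocks_left (m : ℕ) (hm : 1 ≤ m) : ∀ (j p : ℕ), 1 ≤ p → p + j ≤ m+1 →
    ((List.replicate j (blk m)).flatten).foldl (dd m) p = p + j := by
  intro j
  induction j with
  | zero => intro p _ _; simp
  | succ j ih =>
      intro p h1 h2
      rw [List.replicate_succ]
      have ej : (blk m :: List.replicate j (blk m)).flatten = blk m ++ (List.replicate j (blk m)).flatten := rfl
      rw [ej, List.foldl_append]
      rw [blk_left m hm p h1 (by omega)]
      rw [ih (p+1) (by omega) (by omega)]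
      omega

lemma blocks_right (m : ℕ) (hm : 1 ≤ m) : ∀ (j : ℕ),
    ((List.replicate j (blk m)).flatten).foldl (dd m) (2*m+1) = 2*m+1 := by
  intro j
  induction j with
  | zero => simp
  | succ j ih =>
      rw [List.replicate_succ]
      have ej : (blk m :: List.replicate j (blk m)).flatten = blk m ++ (List.replicate j (blk m)).flatten := rfl
      rw [ej, List.foldl_append, blk_right m hm, ih]

lemma W_left (m : ℕ) (hm : 1 ≤ m) : (W m).foldl (dd m) 1 = m+1 := by
  unfold W
  rw [List.foldl_append, blocks_left m hm m 1 le_rfl (by omega)]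
  rw [List.foldl_append, ones_fix m (m-1) (1+m) (by omega) (by omega)]
  simp only [List.foldl_cons, List.foldl_nil]
  have e : 1 + m = m + 1 := by omega
  rw [e, dd_mid]

lemma W_right (m : ℕ) (hm : 1 ≤ m) : (W m).foldl (dd m) (2*m+1) = m+1 := by
  unfold W
  rw [List.foldl_append, blocks_right m hm m]
  rw [List.foldl_append, ones_down m (m-1) (2*m+1) (by omega) (by omega) (by omega)]
  have e : 2*m+1-(m-1) = m+2 := by omega
  rw [e]
  simp only [List.foldl_cons, List.foldl_nil]
  exact dd_c2 m hm

lemma W_length (m : ℕ) (hm : 1 ≤ m) : (W m).length = m ^ 2 + m := by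
  unfold W blk
  simp [List.length_flatten, List.map_replicate, List.sum_replicate, smul_eq_mul]
  rw [show m - 1 + 1 = m from by omega, sq m]

end Stmt7aux

namespace Stmt7aux
lemma foldl_val (m : ℕ) (w : List (Fin 3)) : ∀ p : Fin (2*m+3),
    (w.foldl (fun q x => (⟨dd m q.val x, dd_lt m q.val x q.isLt⟩ : Fin (2*m+3))) p).val
      = w.foldl (dd m) p.val := by
  induction w with
  | nil => intro p; rfl
  | cons x w ih =>
      intro p
      simp only [List.foldl_cons]
      exact ih _

end Stmt7aux

open Stmt7aux

/-- For each `m ≥ 1` there is a monotonic automaton with `2m+3` states over a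
three-letter alphabet and a two-element synchronizing subset `S` of its states
whose shortest synchronizing word has length exactly `m² + m`. -/
theorem stmt7 (m : ℕ) (hm : 1 ≤ m) :
    ∃ (δ : Fin (2 * m + 3) → Fin 3 → Fin (2 * m + 3)) (a b : Fin (2 * m + 3)),
      (∀ x : Fin 3, Monotone (fun q => δ q x)) ∧ a ≠ b ∧
      (∃ w : List (Fin 3), w.foldl δ a = w.foldl δ b ∧ w.length = m ^ 2 + m) ∧
      (∀ w : List (Fin 3), w.foldl δ a = w.foldl δ b → m ^ 2 + m ≤ w.length) := by
  refine ⟨fun q x => ⟨dd m q.val x, dd_lt m q.val x q.isLt⟩,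
    ⟨1, by omega⟩, ⟨2*m+1, by omega⟩, ?_, ?_, ?_, ?_⟩
  · intro x p q h
    exact dd_mono m x p.val q.val h
  · intro h
    rw [Fin.mk.injEq] at h
    omega
  · refine ⟨W m, ?_, W_length m hm⟩
    apply Fin.val_injective
    rw [foldl_val, foldl_val]
    simp only []
    rw [W_left m hm, W_right m hm]
  · intro w h
    have hv : w.foldl (dd m) 1 = w.foldl (dd m) (2*m+1) := by
      have := congrArg Fin.val h
      rwa [foldl_val, foldl_val] at this
    have hk := key m hm w 1 (2*m+1) le_rfl (by omega) (by omega) le_rfl hv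
    unfold R at hk
    rw [if_neg (by omega)] at hk
    rw [show m+1-1 = m from by omega, show 2*m+1-(m+1) = m from by omega] at hk
    calc m ^ 2 + m = m * m + m := by ring
    _ ≤ w.length := hk
end

section
/- For each m ≥ 1 there exists a monotonic automaton with 4m+3 states over the binary alphabet {0,1} and a two-element subset S of its states such that S is synchronizing and every word synchronizing S has length at least m²; moreover S is synchronized by a word of length m² + 2m. -/
set_option maxHeartbeats 1000000

/-- The transition function of the monotonic automaton, on `ℕ`.
States `0, 2m+1, 4m+2` are sinks; letter `true` moves down by one,
letter `false` jumps up. -/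
def dN (m q : ℕ) (x : Bool) : ℕ :=
  if q = 0 ∨ q = 2*m+1 ∨ q = 4*m+2 then q
  else if x then q - 1
  else if q ≤ m then q + m
  else if q ≤ 2*m then 2*m+1
  else if q ≤ 3*m+2 then q + m - 1
  else 4*m+2

lemma dN_sink (m q : ℕ) (x : Bool) (h : q = 0 ∨ q = 2*m+1 ∨ q = 4*m+2) : dN m q x = q := by
  simp only [dN]; rw [if_pos h]

lemma dN_true_eval (m q : ℕ) (h1 : 1 ≤ q) (h2 : q ≤ 4*m+1) (h3 : q ≠ 2*m+1) :
    dN m q true = q - 1 := by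
  simp only [dN, eq_self_iff_true, if_true]; split_ifs <;> omega

lemma dN_false_boost (m q : ℕ) (h1 : 1 ≤ q) (h2 : q ≤ m) : dN m q false = q + m := by
  simp only [dN, Bool.false_eq_true, if_false]; split_ifs <;> omega

lemma dN_false_mid (m q : ℕ) (h1 : m+1 ≤ q) (h2 : q ≤ 2*m) : dN m q false = 2*m+1 := by
  simp only [dN, Bool.false_eq_true, if_false]; split_ifs <;> omega

lemma dN_false_up (m q : ℕ) (hm : 1 ≤ m) (h1 : 2*m+2 ≤ q) (h2 : q ≤ 3*m+2) :
    dN m q false = q + m - 1 := by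
  simp only [dN, Bool.false_eq_true, if_false]; split_ifs <;> omega

lemma dN_lt (m q : ℕ) (x : Bool) (h : q < 4*m+3) : dN m q x < 4*m+3 := by
  cases x <;> simp only [dN, Bool.false_eq_true, if_false, eq_self_iff_true, if_true] <;>
    split_ifs <;> omega

lemma dN_le (m q : ℕ) (x : Bool) (h : q ≤ 2*m+1) : dN m q x ≤ 2*m+1 := by
  cases x <;> simp only [dN, Bool.false_eq_true, if_false, eq_self_iff_true, if_true] <;>
    split_ifs <;> omega

lemma dN_ge (m q : ℕ) (x : Bool) (h : 2*m+1 ≤ q) : 2*m+1 ≤ dN m q x := by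
  cases x <;> simp only [dN, Bool.false_eq_true, if_false, eq_self_iff_true, if_true] <;>
    split_ifs <;> omega

lemma dN_mono (m q q' : ℕ) (x : Bool) (h : q ≤ q') (h2 : q' ≤ 4*m+2) :
    dN m q x ≤ dN m q' x := by
  cases x <;> simp only [dN, Bool.false_eq_true, if_false, eq_self_iff_true, if_true] <;>
    split_ifs <;> omega

lemma fold_sink (m q : ℕ) (h : q = 0 ∨ q = 2*m+1 ∨ q = 4*m+2) :
    ∀ w : List Bool, w.foldl (dN m) q = q := by
  intro w; induction w with
  | nil => rfl
  | cons x w ih => rw [List.foldl_cons, dN_sink m q x h]; exact ih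

lemma fold_le (m : ℕ) : ∀ (w : List Bool) (q : ℕ), q ≤ 2*m+1 → w.foldl (dN m) q ≤ 2*m+1 := by
  intro w; induction w with
  | nil => intro q h; simpa using h
  | cons x w ih => intro q h; exact ih _ (dN_le m q x h)

lemma fold_ge (m : ℕ) : ∀ (w : List Bool) (q : ℕ), 2*m+1 ≤ q → 2*m+1 ≤ w.foldl (dN m) q := by
  intro w; induction w with
  | nil => intro q h; simpa using h
  | cons x w ih => intro q h; exact ih _ (dN_ge m q x h)

/-- Potential function: a lower bound on the length of any word synchronizing
the pair `(a, b)` (for `m ≥ 2`). -/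
def Phi (m a b : ℕ) : ℕ :=
  if a = 2*m+1 then b - (2*m+1)
  else if b - (2*m+1) < a then (if a - (b - (2*m+1)) ≤ m then b - (2*m+1) + 2 else b - (2*m+1) + 1)
  else if b - (2*m+1) = a then (if a ≤ m then b - (2*m+1) + m + 2 else b - (2*m+1) + m)
  else b - (2*m+1) + m * (b - (2*m+1) + 1 - a)

lemma step (m : ℕ) (hm : 2 ≤ m) (a b : ℕ) (x : Bool) (ha1 : 1 ≤ a) (ha2 : a ≤ 2*m+1)
    (hb1 : 2*m+1 ≤ b) (hb2 : b ≤ 4*m+1) (ha' : 1 ≤ dN m a x) (hb' : dN m b x ≤ 4*m+1) :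
    Phi m a b ≤ 1 + Phi m (dN m a x) (dN m b x) := by
  cases x with
  | true =>
    rcases eq_or_lt_of_le ha2 with haE | haL
    · -- a = 2m+1 : sink
      have hda : dN m a true = a := by
        simp only [dN]; rw [if_pos (Or.inr (Or.inl haE))]
      rw [hda]
      rcases eq_or_lt_of_le hb1 with hbE | hbL
      · have hdb : dN m b true = b := by
          simp only [dN]; rw [if_pos (Or.inr (Or.inl hbE.symm))]
        rw [hdb]
        exact Nat.le_add_left _ _
      · have hdb : dN m b true = b - 1 := by
          simp only [dN, eq_self_iff_true, if_true]; split_ifs <;> omega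
        rw [hdb]
        simp only [Phi]; split_ifs <;> omega
    · -- a ≤ 2m
      have hda : dN m a true = a - 1 := by
        simp only [dN, eq_self_iff_true, if_true]; split_ifs <;> omega
      rw [hda] at ha' ⊢
      rcases eq_or_lt_of_le hb1 with hbE | hbL
      · -- b = 2m+1
        have hdb : dN m b true = b := by
          simp only [dN]; rw [if_pos (Or.inr (Or.inl hbE.symm))]
        rw [hdb, ← hbE]
        simp only [Phi]; split_ifs <;> omega
      · -- b ≥ 2m+2
        have hdb : dN m b true = b - 1 := by
          simp only [dN, eq_self_iff_true, if_true]; split_ifs <;> omega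
        rw [hdb]
        simp only [Phi]; split_ifs <;> try omega
        rw [show b - (2*m+1) + 1 - a = b - 1 - (2*m+1) + 1 - (a - 1) from by omega]
        generalize m * (b - 1 - (2*m+1) + 1 - (a - 1)) = P
        omega
  | false =>
    have hb3 : ¬ (3*m+3 ≤ b) := by
      intro hb
      have hdb : dN m b false = 4*m+2 := by
        simp only [dN, Bool.false_eq_true, if_false]; split_ifs <;> omega
      omega
    rcases eq_or_lt_of_le hb1 with hbE | hbL
    · -- b = 2m+1 (sink)
      have hdb : dN m b false = b := by
        simp only [dN]; rw [if_pos (Or.inr (Or.inl hbE.symm))]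
      rw [hdb, ← hbE]
      by_cases ham : a ≤ m
      · have hda : dN m a false = a + m := by
          simp only [dN, Bool.false_eq_true, if_false]; split_ifs <;> omega
        rw [hda]
        simp only [Phi]; split_ifs <;> omega
      · by_cases ham2 : a ≤ 2*m
        · have hda : dN m a false = 2*m+1 := by
            simp only [dN, Bool.false_eq_true, if_false]; split_ifs <;> omega
          rw [hda]
          simp only [Phi]; split_ifs <;> omega
        · have haE : a = 2*m+1 := by omega
          have hda : dN m a false = a := by
            simp only [dN]; rw [if_pos (Or.inr (Or.inl haE))]
          rw [hda, haE]
          simp only [Phi]; split_ifs <;> omega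
    · -- 2m+2 ≤ b ≤ 3m+2
      have hdb : dN m b false = b + m - 1 := by
        simp only [dN, Bool.false_eq_true, if_false]; split_ifs <;> omega
      rw [hdb]
      by_cases ham : a ≤ m
      · -- boost case
        have hda : dN m a false = a + m := by
          simp only [dN, Bool.false_eq_true, if_false]; split_ifs <;> omega
        rw [hda]
        simp only [Phi]; split_ifs <;> try omega
        all_goals first
        | (rw [show b - (2*m+1) + 1 - a = 2 from by omega]; omega)
        | (rw [show b - (2*m+1) + 1 - a = (b + m - 1 - (2*m+1) + 1 - (a + m)) + 1 from by omega,
              Nat.mul_add, Nat.mul_one]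
           generalize m * (b + m - 1 - (2*m+1) + 1 - (a + m)) = P
           omega)
      · by_cases ham2 : a ≤ 2*m
        · -- a gets sunk
          have hda : dN m a false = 2*m+1 := by
            simp only [dN, Bool.false_eq_true, if_false]; split_ifs <;> omega
          rw [hda]
          simp only [Phi]; split_ifs <;> try omega
          all_goals (exfalso; omega)
        · -- a = 2m+1
          have haE : a = 2*m+1 := by omega
          have hda : dN m a false = a := by
            simp only [dN]; rw [if_pos (Or.inr (Or.inl haE))]
          rw [hda, haE]
          simp only [Phi]; split_ifs <;> omega

lemma key (m : ℕ) (hm : 2 ≤ m) :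
    ∀ (w : List Bool) (a b : ℕ), 1 ≤ a → a ≤ 2*m+1 → 2*m+1 ≤ b → b ≤ 4*m+1 →
      w.foldl (dN m) a = w.foldl (dN m) b → Phi m a b ≤ w.length := by
  intro w; induction w with
  | nil =>
    intro a b ha1 ha2 hb1 hb2 h
    simp only [List.foldl_nil] at h
    subst h
    have : a = 2*m+1 := le_antisymm ha2 hb1
    simp [Phi, this]
  | cons x w ih =>
    intro a b ha1 ha2 hb1 hb2 h
    simp only [List.foldl_cons] at h
    by_cases ha0 : dN m a x = 0
    · rw [ha0] at h
      rw [fold_sink m 0 (Or.inl rfl)] at h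
      have := fold_ge m w (dN m b x) (dN_ge m b x hb1)
      omega
    · by_cases hb4 : dN m b x = 4*m+2
      · rw [hb4] at h
        rw [fold_sink m (4*m+2) (Or.inr (Or.inr rfl))] at h
        have := fold_le m w (dN m a x) (dN_le m a x ha2)
        omega
      · have hb3 : dN m b x < 4*m+3 := dN_lt m b x (by omega)
        have h1 := ih (dN m a x) (dN m b x) (by omega) (dN_le m a x ha2)
          (dN_ge m b x hb1) (by omega) h
        have h2 := step m hm a b x ha1 ha2 hb1 hb2 (by omega) (by omega)
        simp only [List.length_cons]
        omega

/-- `(1^m 0)` repeated `i` times. -/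
def cycs (m : ℕ) : ℕ → List Bool
  | 0 => []
  | i+1 => (List.replicate m true ++ [false]) ++ cycs m i

lemma cycs_length (m : ℕ) : ∀ i, (cycs m i).length = i * (m+1) := by
  intro i; induction i with
  | zero => simp [cycs]
  | succ i ih => simp [cycs, ih]; ring

lemma fold_ones_low (m : ℕ) : ∀ (k q : ℕ), k ≤ q → q ≤ 2*m →
    (List.replicate k true).foldl (dN m) q = q - k := by
  intro k; induction k with
  | zero => intro q _ _; simp
  | succ k ih =>
    intro q h1 h2
    rw [List.replicate_succ, List.foldl_cons,
        dN_true_eval m q (by omega) (by omega) (by omega), ih (q-1) (by omega) (by omega)]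
    omega

lemma fold_ones_high (m : ℕ) : ∀ (k q : ℕ), 2*m+1 ≤ q - k → q ≤ 4*m+1 →
    (List.replicate k true).foldl (dN m) q = q - k := by
  intro k; induction k with
  | zero => intro q _ _; simp
  | succ k ih =>
    intro q h1 h2
    rw [List.replicate_succ, List.foldl_cons,
        dN_true_eval m q (by omega) (by omega) (by omega), ih (q-1) (by omega) (by omega)]
    omega

lemma cycs_fold_a (m : ℕ) (hm : 1 ≤ m) : ∀ i, (cycs m i).foldl (dN m) (m+1) = m+1 := by
  intro i; induction i with
  | zero => rfl
  | succ i ih =>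
    rw [cycs, List.foldl_append, List.foldl_append,
        fold_ones_low m m (m+1) (by omega) (by omega)]
    have h1 : m + 1 - m = 1 := by omega
    rw [h1, List.foldl_cons, List.foldl_nil, dN_false_boost m 1 (by omega) (by omega)]
    have h2 : (1:ℕ) + m = m + 1 := by omega
    rw [h2]; exact ih

lemma cycs_fold_b (m : ℕ) (hm : 1 ≤ m) : ∀ (i q : ℕ), 3*m+2+i ≤ q → q ≤ 4*m+1 →
    (cycs m i).foldl (dN m) q = q - i := by
  intro i; induction i with
  | zero => intro q _ _; simp [cycs]
  | succ i ih =>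
    intro q h1 h2
    rw [cycs, List.foldl_append, List.foldl_append,
        fold_ones_high m m q (by omega) (by omega), List.foldl_cons, List.foldl_nil,
        dN_false_up m (q - m) hm (by omega) (by omega)]
    have h3 : q - m + m - 1 = q - 1 := by omega
    rw [h3, ih (q-1) (by omega) (by omega)]
    omega

/-- The synchronizing word of length `m² + 2m`. -/
def wrd (m : ℕ) : List Bool :=
  cycs m (m-1) ++ ([false] ++ List.replicate (2*m) true)

lemma wrd_length (m : ℕ) (hm : 1 ≤ m) : (wrd m).length = m^2 + 2*m := by
  obtain ⟨k, rfl⟩ : ∃ k, m = k + 1 := ⟨m - 1, by omega⟩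
  simp [wrd, cycs_length]
  ring

lemma wrd_fold_a (m : ℕ) (hm : 1 ≤ m) : (wrd m).foldl (dN m) (m+1) = 2*m+1 := by
  rw [wrd, List.foldl_append, cycs_fold_a m hm, List.foldl_append, List.foldl_cons,
      List.foldl_nil, dN_false_mid m (m+1) (by omega) (by omega),
      fold_sink m (2*m+1) (Or.inr (Or.inl rfl))]

lemma wrd_fold_b (m : ℕ) (hm : 1 ≤ m) : (wrd m).foldl (dN m) (4*m+1) = 2*m+1 := by
  rw [wrd, List.foldl_append, cycs_fold_b m hm (m-1) (4*m+1) (by omega) (by omega)]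
  have h1 : 4*m+1 - (m-1) = 3*m+2 := by omega
  rw [h1, List.foldl_append, List.foldl_cons, List.foldl_nil,
      dN_false_up m (3*m+2) hm (by omega) (by omega)]
  have h2 : 3*m+2+m-1 = 4*m+1 := by omega
  rw [h2, fold_ones_high m (2*m) (4*m+1) (by omega) (by omega)]
  omega

/-- The transition function on `Fin (4m+3)`. -/
def dF (m : ℕ) : Fin (4*m+3) → Bool → Fin (4*m+3) :=
  fun q x => ⟨dN m q.val x, dN_lt m q.val x q.isLt⟩

lemma foldl_val (m : ℕ) : ∀ (w : List Bool) (q : Fin (4*m+3)),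
    (w.foldl (dF m) q).val = w.foldl (dN m) q.val := by
  intro w; induction w with
  | nil => intro q; rfl
  | cons x w ih => intro q; rw [List.foldl_cons, List.foldl_cons]; exact ih (dF m q x)

/-- For each `m ≥ 1` there is a binary monotonic automaton with `4m+3` states
and a two-element subset `S` of its states such that every word synchronizing
`S` has length at least `m²`, and `S` is synchronized by a word of length
`m² + 2m`. -/
theorem stmt8 (m : ℕ) (hm : 1 ≤ m) :
    ∃ (δ : Fin (4 * m + 3) → Bool → Fin (4 * m + 3)) (a b : Fin (4 * m + 3)),
      (∀ x : Bool, Monotone (fun q => δ q x)) ∧ a ≠ b ∧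
      (∃ w : List Bool, w.foldl δ a = w.foldl δ b ∧ w.length = m ^ 2 + 2 * m) ∧
      (∀ w : List Bool, w.foldl δ a = w.foldl δ b → m ^ 2 ≤ w.length) := by
  refine ⟨dF m, ⟨m+1, by omega⟩, ⟨4*m+1, by omega⟩, ?_, ?_, ?_, ?_⟩
  · intro x u v huv
    have : u.val ≤ v.val := huv
    show (dF m u x).val ≤ (dF m v x).val
    exact dN_mono m u.val v.val x this (by omega)
  · intro h
    rw [Fin.ext_iff] at h
    simp at h
    omega
  · refine ⟨wrd m, ?_, wrd_length m hm⟩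
    apply Fin.ext
    rw [foldl_val, foldl_val]
    show (wrd m).foldl (dN m) (m+1) = (wrd m).foldl (dN m) (4*m+1)
    rw [wrd_fold_a m hm, wrd_fold_b m hm]
  · intro w h
    have h' : w.foldl (dN m) (m+1) = w.foldl (dN m) (4*m+1) := by
      have := congrArg Fin.val h
      rwa [foldl_val, foldl_val] at this
    rcases eq_or_lt_of_le hm with hm1 | hm2
    · -- m = 1
      rcases w with _ | ⟨x, w⟩
      · simp only [List.foldl_nil] at h'
        omega
      · have : 1 ≤ (x :: w).length := by simp
        have hmm : m = 1 := hm1.symm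
        subst hmm
        simpa using this
    · -- m ≥ 2
      have hk := key m hm2 w (m+1) (4*m+1) (by omega) (by omega) (by omega) (by omega) h'
      have hphi : Phi m (m+1) (4*m+1) = 2*m + m*m := by
        simp only [Phi]; split_ifs <;> try omega
        rw [show 4*m+1 - (2*m+1) + 1 - (m+1) = m from by omega]
        generalize m*m = P
        omega
      rw [hphi] at hk
      have : m^2 = m*m := by ring
      omega
end

section
/- For every k > 0 there exist k monotonic automata, each with 3 states over a common alphabet of k letters and each with one initial and one accepting state, such that some word is accepted by all k automata, but every word accepted simultaneously by all of them has length at least 2^k − 1. -/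
namespace Stmt9

variable {k : ℕ}

def pred3 : Fin 3 → Fin 3
  | 0 => 0
  | 1 => 0
  | 2 => 1

/-- Transition of automaton `i` on letter `x` (states: 0 = fail, 1 = s, 2 = t). -/
def D (i : Fin k) (q : Fin 3) (x : Fin k) : Fin 3 :=
  if x.val < i.val then q
  else if x.val = i.val then (if q = 0 then 0 else 2)
  else pred3 q

/-- Simultaneous step of all automata. -/
def stp (σ : Fin k → Fin 3) (x : Fin k) : Fin k → Fin 3 := fun i => D i (σ i) x

/-- Counter value of a configuration. -/
def cnt (σ : Fin k → Fin 3) : ℕ := ∑ i : Fin k, if σ i = 2 then 2 ^ i.val else 0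

lemma D_zero (i x : Fin k) : D i (0 : Fin 3) x = 0 := by
  unfold D
  split_ifs with h1 h2 h3
  · rfl
  · rfl
  · exact absurd rfl h3
  · rfl

lemma geo (n : ℕ) : ∑ i ∈ Finset.range n, 2 ^ i = 2 ^ n - 1 := by
  induction n with
  | zero => simp
  | succ n ih =>
    rw [Finset.sum_range_succ, ih, pow_succ]
    have : 1 ≤ 2 ^ n := Nat.one_le_two_pow
    omega

lemma sum_lt_eq (x : ℕ) (hx : x ≤ k) :
    (∑ i : Fin k, if i.val < x then 2 ^ i.val else 0) = 2 ^ x - 1 := by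
  rw [Fin.sum_univ_eq_sum_range (fun i => if i < x then 2 ^ i else 0)]
  rw [← Finset.sum_filter]
  have : Finset.filter (fun i => i < x) (Finset.range k) = Finset.range x := by
    ext i
    simp only [Finset.mem_filter, Finset.mem_range]
    omega
  rw [this, geo]

lemma foldl_bridge (w : List (Fin k)) (σ : Fin k → Fin 3) (i : Fin k) :
    w.foldl (D i) (σ i) = (w.foldl stp σ) i := by
  induction w generalizing σ with
  | nil => rfl
  | cons a w ih =>
    simp only [List.foldl_cons]
    exact ih (stp σ a)

lemma Vback (w : List (Fin k)) (σ : Fin k → Fin 3)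
    (h : ∀ i, (w.foldl stp σ) i ≠ 0) : ∀ i, σ i ≠ 0 := by
  induction w generalizing σ with
  | nil => exact h
  | cons a w ih =>
    intro i hi
    have h3 := ih (stp σ a) h i
    apply h3
    simp only [stp, hi, D_zero]

lemma step_le (σ : Fin k → Fin 3) (x : Fin k)
    (h : ∀ i, σ i ≠ 0) (h' : ∀ i, stp σ x i ≠ 0) :
    cnt (stp σ x) ≤ cnt σ + 1 := by
  -- all automata below x must be in state 2 before, state 1 after
  have h2 : ∀ i : Fin k, i.val < x.val → σ i = 2 ∧ stp σ x i = 1 := by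
    intro i hi
    have hd : stp σ x i = pred3 (σ i) := by
      simp only [stp, D]
      rw [if_neg (show ¬ x.val < i.val by omega), if_neg (show ¬ x.val = i.val by omega)]
    have hq : ∀ q : Fin 3, q ≠ 0 → pred3 q ≠ 0 → q = 2 ∧ pred3 q = 1 := by decide
    obtain ⟨ha, hb⟩ := hq (σ i) (h i) (by rw [← hd]; exact h' i)
    exact ⟨ha, by rw [hd]; exact hb⟩
  have key : ∀ i : Fin k,
      (if stp σ x i = 2 then 2 ^ i.val else 0) + (if i.val < x.val then 2 ^ i.val else 0)
      ≤ (if σ i = 2 then 2 ^ i.val else 0) + (if i = x then 2 ^ x.val else 0) := by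
    intro i
    rcases lt_trichotomy i.val x.val with hlt | heq | hgt
    · obtain ⟨h2a, h2b⟩ := h2 i hlt
      rw [h2a, h2b]
      have : ((1 : Fin 3) = 2) = False := by simp
      simp only [this, if_false, if_pos hlt, if_pos rfl, zero_add]
      exact Nat.le_add_right _ _
    · have hix : i = x := Fin.ext heq
      subst hix
      rw [if_neg (lt_irrefl i.val), if_pos rfl]
      have hle : (if stp σ i i = 2 then 2 ^ i.val else 0) ≤ 2 ^ i.val := by
        split_ifs
        · exact le_rfl
        · exact Nat.zero_le _
      omega
    · have hne : i ≠ x := by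
        intro hc; rw [hc] at hgt; omega
      have hst : stp σ x i = σ i := by
        simp only [stp, D]
        rw [if_pos hgt]
      rw [hst, if_neg (show ¬ i.val < x.val by omega), if_neg hne]
  have hsum := Finset.sum_le_sum (fun i (_ : i ∈ Finset.univ) => key i)
  rw [Finset.sum_add_distrib, Finset.sum_add_distrib] at hsum
  have e1 : (∑ i : Fin k, if i.val < x.val then 2 ^ i.val else 0) = 2 ^ x.val - 1 :=
    sum_lt_eq x.val (le_of_lt x.isLt)
  have e2 : (∑ i : Fin k, if i = x then 2 ^ x.val else 0) = 2 ^ x.val := by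
    rw [Finset.sum_ite_eq' Finset.univ x (fun _ => 2 ^ x.val)]
    simp
  rw [e1, e2] at hsum
  have hpos : 1 ≤ 2 ^ x.val := Nat.one_le_two_pow
  unfold cnt
  omega

lemma bound (w : List (Fin k)) (σ : Fin k → Fin 3)
    (h : ∀ i, (w.foldl stp σ) i ≠ 0) :
    cnt (w.foldl stp σ) ≤ cnt σ + w.length := by
  induction w generalizing σ with
  | nil => simp
  | cons a w ih =>
    simp only [List.foldl_cons, List.length_cons]
    have h2 : ∀ i, (w.foldl stp (stp σ a)) i ≠ 0 := h
    have hVs : ∀ i, stp σ a i ≠ 0 := Vback w (stp σ a) h2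
    have hV : ∀ i, σ i ≠ 0 := by
      intro i hi
      exact hVs i (by simp only [stp, hi, D_zero])
    have hb1 := ih (stp σ a) h2
    have hb2 := step_le σ a hV hVs
    omega

/-- The accepting word (binary counter word). -/
def W (k : ℕ) : ℕ → List (Fin k)
  | 0 => []
  | n + 1 => W k n ++ (if h : n < k then [(⟨n, h⟩ : Fin k)] else []) ++ W k n

lemma W_spec (n : ℕ) (hn : n ≤ k) (σ : Fin k → Fin 3)
    (hσ : ∀ i : Fin k, i.val < n → σ i = 1) :
    (W k n).foldl stp σ = fun i => if i.val < n then 2 else σ i := by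
  induction n generalizing σ with
  | zero => funext i; simp [W]
  | succ n ih =>
    have hnk : n < k := hn
    simp only [W, dif_pos hnk, List.foldl_append, List.foldl_cons, List.foldl_nil]
    rw [ih (by omega) σ (fun i hi => hσ i (by omega))]
    have hσ2 : stp (fun i => if i.val < n then 2 else σ i) ⟨n, hnk⟩
        = fun i => if i.val < n then 1 else if i.val = n then 2 else σ i := by
      funext i
      simp only [stp, D]
      rcases lt_trichotomy i.val n with hlt | heq | hgt
      · rw [if_neg (show ¬ (⟨n, hnk⟩ : Fin k).val < i.val by simp; omega),
            if_neg (show ¬ (⟨n, hnk⟩ : Fin k).val = i.val by simp; omega)]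
        rw [if_pos hlt, if_pos hlt]
        rfl
      · rw [if_neg (show ¬ (⟨n, hnk⟩ : Fin k).val < i.val by simp; omega),
            if_pos (show (⟨n, hnk⟩ : Fin k).val = i.val by simp; omega)]
        have hσi : (if i.val < n then (2 : Fin 3) else σ i) = 1 := by
          rw [if_neg (show ¬ i.val < n by omega)]
          exact hσ i (by omega)
        simp only [hσi]
        rw [if_neg (show ¬ i.val < n by omega), if_pos heq]
        decide
      · rw [if_pos (show (⟨n, hnk⟩ : Fin k).val < i.val by simp; omega)]
        rw [if_neg (show ¬ i.val < n by omega), if_neg (show ¬ i.val < n by omega),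
            if_neg (show ¬ i.val = n by omega)]
    rw [hσ2, ih (by omega) _ (fun i hi => by rw [if_pos hi])]
    funext i
    by_cases h1 : i.val < n
    · have h2 : i.val < n + 1 := by omega
      rw [if_pos h1, if_pos h2]
    · by_cases h2 : i.val = n
      · have h3 : i.val < n + 1 := by omega
        rw [if_neg h1, if_neg h1, if_pos h2, if_pos h3]
      · have h3 : ¬ i.val < n + 1 := by omega
        rw [if_neg h1, if_neg h1, if_neg h2, if_neg h3]

end Stmt9

/-- For every `k > 0` there exist `k` monotonic automata, each with 3 states
over a common alphabet of `k` letters, with initial and accepting states, such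
that some word is accepted by all of them but every common accepted word has
length at least `2^k - 1`. -/
theorem stmt9 (k : ℕ) (hk : 0 < k) :
    ∃ (δ : Fin k → Fin 3 → Fin k → Fin 3) (init acc : Fin k → Fin 3),
      (∀ i : Fin k, ∀ x : Fin k, Monotone (fun q => δ i q x)) ∧
      (∃ w : List (Fin k), ∀ i : Fin k, w.foldl (δ i) (init i) = acc i) ∧
      (∀ w : List (Fin k), (∀ i : Fin k, w.foldl (δ i) (init i) = acc i) →
        2 ^ k - 1 ≤ w.length) := by
  classical
  refine ⟨Stmt9.D, fun _ => 1, fun _ => 2, ?_, ?_, ?_⟩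
  · intro i x
    unfold Stmt9.D
    rcases lt_trichotomy x.val i.val with hlt | heq | hgt
    · simp only [if_pos hlt]
      exact monotone_id
    · simp only [if_neg (show ¬ x.val < i.val by omega), if_pos heq]
      exact (by decide : Monotone (fun q : Fin 3 => if q = 0 then (0 : Fin 3) else 2))
    · simp only [if_neg (show ¬ x.val < i.val by omega),
        if_neg (show ¬ x.val = i.val by omega)]
      exact (by decide : Monotone (Stmt9.pred3))
  · refine ⟨Stmt9.W k k, fun i => ?_⟩
    have hW := Stmt9.W_spec (k := k) k le_rfl (fun _ => 1) (fun _ _ => rfl)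
    have hb := Stmt9.foldl_bridge (Stmt9.W k k) (fun _ => (1 : Fin 3)) i
    rw [hb, hW]
    simp [i.isLt]
  · intro w hw
    have hfold : ∀ i : Fin k, (w.foldl Stmt9.stp (fun _ => 1)) i = 2 := by
      intro i
      rw [← Stmt9.foldl_bridge w (fun _ => 1) i]
      exact hw i
    have hV : ∀ i, (w.foldl Stmt9.stp (fun _ => (1 : Fin 3))) i ≠ 0 := by
      intro i
      rw [hfold i]
      decide
    have hb := Stmt9.bound w (fun _ => 1) hV
    have hc0 : Stmt9.cnt (fun _ : Fin k => (1 : Fin 3)) = 0 := by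
      unfold Stmt9.cnt
      simp
    have hcf : Stmt9.cnt (w.foldl Stmt9.stp (fun _ => 1)) = 2 ^ k - 1 := by
      unfold Stmt9.cnt
      rw [Finset.sum_congr rfl (fun i _ => by rw [hfold i, if_pos rfl])]
      rw [Fin.sum_univ_eq_sum_range (fun i => 2 ^ i), Stmt9.geo]
    rw [hcf, hc0] at hb
    omega
end

section
/- Given a set X of n Boolean variables x₁,...,xₙ and a clause c, let A_c be the clause-gadget automaton over Σ = {0,1,r} with states {q₁,...,q_{n+1}} ∪ {q'₂,...,q'ₙ} ∪ {s,t}, initial state q₁ and accepting state t, where for 1 ≤ i ≤ n the letter x ∈ {0,1} maps q_i to q'_{i+1} (or t if i = n) if the assignment x_i = x satisfies c, and to q_{i+1} otherwise; each q'_i is mapped by 0 and 1 forward along the primed chain to t; t is fixed by all letters; and r maps every state except t to the sink s. Then for any word z₁...zₙ ∈ {0,1}ⁿ, the automaton A_c accepts z₁...zₙ r if and only if the assignment x_i = z_i satisfies the clause c. -/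
/-- Correctness of the clause gadget: the gadget automaton `A_c` (letters
`some x` for `x ∈ {0,1}` and `none` for `r`; `c i x` tells whether the
assignment `x_i = x` satisfies the clause) accepts `z₁…zₙ r` from `q₁`
(i.e. the run ends in the accepting state `t`) iff the assignment
`x_i = z_i` satisfies the clause. -/
theorem stmt12 {Q : Type*} (n : ℕ) (hn : 1 ≤ n)
    (δ : Q → Option Bool → Q) (s t : Q) (q q' : ℕ → Q)
    (c : ℕ → Bool → Bool)
    (hst : s ≠ t)
    (hq : ∀ i, 1 ≤ i → i ≤ n → ∀ x : Bool,
      δ (q i) (some x) = if c i x then (if i = n then t else q' (i + 1)) else q (i + 1))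
    (hq' : ∀ i, 2 ≤ i → i ≤ n → ∀ x : Bool,
      δ (q' i) (some x) = if i = n then t else q' (i + 1))
    (ht : ∀ x : Option Bool, δ t x = t)
    (hs : ∀ x : Option Bool, δ s x = s)
    (hrq : ∀ i, 1 ≤ i → i ≤ n + 1 → δ (q i) none = s)
    (hrq' : ∀ i, 2 ≤ i → i ≤ n → δ (q' i) none = s)
    (z : ℕ → Bool) :
    (((List.range n).map (fun i => (some (z (i + 1)) : Option Bool))) ++
        [(none : Option Bool)]).foldl δ (q 1) = t ↔
      ∃ i, 1 ≤ i ∧ i ≤ n ∧ c i (z i) = true := by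
  -- t is absorbing
  have habs : ∀ (l : List (Option Bool)), l.foldl δ t = t := by
    intro l; induction l with
    | nil => rfl
    | cons a l ih => simp [List.foldl_cons, ht, ih]
  -- primed chain leads to t
  have hprime : ∀ d j, 2 ≤ j → j + d = n →
      ((List.range' j (d+1)).map (fun i => (some (z i) : Option Bool))).foldl δ (q' j) = t := by
    intro d
    induction d with
    | zero =>
      intro j hj hjn
      simp only [Nat.add_zero] at hjn
      subst hjn
      simp [List.range'_succ, hq' j hj le_rfl]
    | succ d ih =>
      intro j hj hjn
      have hjlt : j < n := by omega
      rw [List.range'_succ]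
      simp only [List.map_cons, List.foldl_cons]
      rw [hq' j hj (le_of_lt hjlt), if_neg (by omega)]
      exact ih (j+1) (by omega) (by omega)
  -- main lemma
  have main : ∀ d j, 1 ≤ j → j + d = n →
      ((((List.range' j (d+1)).map (fun i => (some (z i) : Option Bool))) ++
        [(none : Option Bool)]).foldl δ (q j) = t ↔
      ∃ i, j ≤ i ∧ i ≤ n ∧ c i (z i) = true) := by
    intro d
    induction d with
    | zero =>
      intro j hj hjn
      simp only [Nat.add_zero] at hjn
      subst hjn
      simp only [List.range'_succ, List.range'_zero, List.map_cons, List.map_nil,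
        List.nil_append, List.cons_append, List.foldl_cons, List.foldl_nil]
      rw [hq j hj le_rfl, if_pos rfl]
      by_cases hc : c j (z j) = true
      · simp only [hc, if_true, ht]
        constructor
        · intro _; exact ⟨j, le_rfl, le_rfl, hc⟩
        · intro _; trivial
      · rw [if_neg hc]
        rw [hrq (j+1) (by omega) (by omega)]
        constructor
        · intro h; exact absurd h hst
        · rintro ⟨i, h1, h2, h3⟩
          have : i = j := by omega
          subst this; exact absurd h3 hc
    | succ d ih =>
      intro j hj hjn
      have hjlt : j < n := by omega
      rw [List.range'_succ]
      simp only [List.map_cons, List.cons_append, List.foldl_cons]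
      rw [hq j hj (le_of_lt hjlt)]
      by_cases hc : c j (z j) = true
      · rw [if_pos hc, if_neg (by omega)]
        rw [List.foldl_append, hprime d (j+1) (by omega) (by omega)]
        simp only [List.foldl_cons, List.foldl_nil, ht]
        constructor
        · intro _; exact ⟨j, le_rfl, le_of_lt hjlt, hc⟩
        · intro _; trivial
      · rw [if_neg hc]
        rw [ih (j+1) (by omega) (by omega)]
        constructor
        · rintro ⟨i, h1, h2, h3⟩; exact ⟨i, by omega, h2, h3⟩
        · rintro ⟨i, h1, h2, h3⟩
          rcases eq_or_lt_of_le h1 with rfl | h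
          · exact absurd h3 hc
          · exact ⟨i, by omega, h2, h3⟩
  have hlist : (List.range n).map (fun i => (some (z (i + 1)) : Option Bool)) =
      (List.range' 1 n).map (fun i => (some (z i) : Option Bool)) := by
    rw [List.range_eq_range', List.range'_eq_map_range, List.range'_eq_map_range]
    simp [List.map_map, Function.comp, Nat.add_comm]
  rw [hlist]
  have := main (n-1) 1 le_rfl (by omega)
  rwa [show n - 1 + 1 = n by omega] at this
end

section
/- The clause-gadget automaton A_c (over alphabet {0,1,r}, with states s, q₁, q₂, q'₂, q₃, q'₃, ..., qₙ, q'ₙ, q_{n+1}, t, transitions as in the construction) is monotonic: all its transitions preserve the linear order s < q₁ < q₂ < q'₂ < q₃ < q'₃ < ... < qₙ < q'ₙ < q_{n+1} < t. It is also weakly acyclic. -/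
/-- The clause gadget automaton is monotonic: all its transitions preserve the
linear order `s < q₁ < q₂ < q'₂ < q₃ < q'₃ < … < qₙ < q'ₙ < q_{n+1} < t`
(encoded by the rank function `ρ`), and it is weakly acyclic (some injective
ranking of its states is non-decreasing along every transition). -/
theorem stmt13 {Q : Type*} (n : ℕ) (hn : 1 ≤ n)
    (δ : Q → Option Bool → Q) (s t : Q) (q q' : ℕ → Q)
    (c : ℕ → Bool → Bool)
    (ρ : Q → ℕ)
    (hρs : ρ s = 0) (hρq1 : ρ (q 1) = 1)
    (hρq : ∀ i, 2 ≤ i → i ≤ n + 1 → ρ (q i) = 2 * i - 2)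
    (hρq' : ∀ i, 2 ≤ i → i ≤ n → ρ (q' i) = 2 * i - 1)
    (hρt : ρ t = 2 * n + 1)
    (hq : ∀ i, 1 ≤ i → i ≤ n → ∀ x : Bool,
      δ (q i) (some x) = if c i x then (if i = n then t else q' (i + 1)) else q (i + 1))
    (hqlast : ∀ x : Bool, δ (q (n + 1)) (some x) = t)
    (hq' : ∀ i, 2 ≤ i → i ≤ n → ∀ x : Bool,
      δ (q' i) (some x) = if i = n then t else q' (i + 1))
    (ht : ∀ x : Option Bool, δ t x = t)
    (hs : ∀ x : Option Bool, δ s x = s)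
    (hrq : ∀ i, 1 ≤ i → i ≤ n + 1 → δ (q i) none = s)
    (hrq' : ∀ i, 2 ≤ i → i ≤ n → δ (q' i) none = s) :
    (∀ x : Option Bool,
      ∀ a ∈ ({s, t} ∪ {p | ∃ i, 1 ≤ i ∧ i ≤ n + 1 ∧ p = q i} ∪
        {p | ∃ i, 2 ≤ i ∧ i ≤ n ∧ p = q' i} : Set Q),
      ∀ b ∈ ({s, t} ∪ {p | ∃ i, 1 ≤ i ∧ i ≤ n + 1 ∧ p = q i} ∪
        {p | ∃ i, 2 ≤ i ∧ i ≤ n ∧ p = q' i} : Set Q),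
      ρ a ≤ ρ b → ρ (δ a x) ≤ ρ (δ b x)) ∧
    (∃ σ : Q → ℕ,
      Set.InjOn σ ({s, t} ∪ {p | ∃ i, 1 ≤ i ∧ i ≤ n + 1 ∧ p = q i} ∪
        {p | ∃ i, 2 ≤ i ∧ i ≤ n ∧ p = q' i} : Set Q) ∧
      ∀ a ∈ ({s, t} ∪ {p | ∃ i, 1 ≤ i ∧ i ≤ n + 1 ∧ p = q i} ∪
        {p | ∃ i, 2 ≤ i ∧ i ≤ n ∧ p = q' i} : Set Q),
      ∀ x : Option Bool, σ a ≤ σ (δ a x)) := by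
  set S : Set Q := {s, t} ∪ {p | ∃ i, 1 ≤ i ∧ i ≤ n + 1 ∧ p = q i} ∪
      {p | ∃ i, 2 ≤ i ∧ i ≤ n ∧ p = q' i} with hS
  have hmem : ∀ p : Q, p ∈ S ↔
      (p = s ∨ p = t ∨ (∃ i, 1 ≤ i ∧ i ≤ n + 1 ∧ p = q i) ∨
        (∃ i, 2 ≤ i ∧ i ≤ n ∧ p = q' i)) := by
    intro p
    simp [hS, Set.mem_union, Set.mem_insert_iff, Set.mem_singleton_iff,
      Set.mem_setOf_eq, or_assoc]
  have htS : t ∈ S := (hmem t).2 (Or.inr (Or.inl rfl))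
  -- convenient value lemma for `q i`
  have hρqi : ∀ i, 1 ≤ i → i ≤ n + 1 →
      (2 ≤ i ∧ ρ (q i) = 2 * i - 2) ∨ (i = 1 ∧ ρ (q i) = 1) := by
    intro i h1 h2
    rcases Nat.lt_or_ge 1 i with h | h
    · exact Or.inl ⟨by omega, hρq i (by omega) h2⟩
    · have hi : i = 1 := by omega
      subst hi
      exact Or.inr ⟨rfl, hρq1⟩
  -- upper bound on ranks
  have hub : ∀ a ∈ S, ρ a ≤ 2 * n + 1 := by
    intro a ha
    rcases (hmem a).1 ha with rfl | rfl | ⟨i, hi1, hi2, rfl⟩ | ⟨i, hi1, hi2, rfl⟩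
    · rw [hρs]; omega
    · rw [hρt]
    · rcases hρqi i hi1 hi2 with ⟨h2, hv⟩ | ⟨h2, hv⟩ <;> rw [hv] <;> omega
    · rw [hρq' i hi1 hi2]; omega
  -- injectivity of ρ on S
  have hinj : ∀ a ∈ S, ∀ b ∈ S, ρ a = ρ b → a = b := by
    intro a ha b hb hab
    rcases (hmem a).1 ha with rfl | rfl | ⟨i, hi1, hi2, rfl⟩ | ⟨i, hi1, hi2, rfl⟩ <;>
      rcases (hmem b).1 hb with rfl | rfl | ⟨j, hj1, hj2, rfl⟩ | ⟨j, hj1, hj2, rfl⟩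
    · rfl
    · rw [hρs, hρt] at hab; omega
    · rcases hρqi j hj1 hj2 with ⟨h2, hv⟩ | ⟨h2, hv⟩ <;>
        rw [hρs, hv] at hab <;> omega
    · rw [hρs, hρq' j hj1 hj2] at hab; omega
    · rw [hρs, hρt] at hab; omega
    · rfl
    · rcases hρqi j hj1 hj2 with ⟨h2, hv⟩ | ⟨h2, hv⟩ <;>
        rw [hρt, hv] at hab <;> omega
    · rw [hρt, hρq' j hj1 hj2] at hab; omega
    · rcases hρqi i hi1 hi2 with ⟨h2, hv⟩ | ⟨h2, hv⟩ <;>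
        rw [hρs, hv] at hab <;> omega
    · rcases hρqi i hi1 hi2 with ⟨h2, hv⟩ | ⟨h2, hv⟩ <;>
        rw [hρt, hv] at hab <;> omega
    · rcases hρqi i hi1 hi2 with ⟨h2, hv⟩ | ⟨h2, hv⟩ <;>
        rcases hρqi j hj1 hj2 with ⟨h3, hw⟩ | ⟨h3, hw⟩ <;>
        rw [hv, hw] at hab
      · obtain rfl : i = j := by omega
        rfl
      · omega
      · omega
      · obtain rfl : i = 1 := h2
        obtain rfl : j = 1 := h3
        rfl
    · rcases hρqi i hi1 hi2 with ⟨h2, hv⟩ | ⟨h2, hv⟩ <;>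
        rw [hv, hρq' j hj1 hj2] at hab <;> omega
    · rw [hρq' i hi1 hi2, hρs] at hab; omega
    · rw [hρq' i hi1 hi2, hρt] at hab; omega
    · rcases hρqi j hj1 hj2 with ⟨h2, hv⟩ | ⟨h2, hv⟩ <;>
        rw [hρq' i hi1 hi2, hv] at hab <;> omega
    · rw [hρq' i hi1 hi2, hρq' j hj1 hj2] at hab
      obtain rfl : i = j := by omega
      rfl
  -- what the reset letter does
  have hnone : ∀ a ∈ S, a = t ∨ δ a none = s := by
    intro a ha
    rcases (hmem a).1 ha with rfl | rfl | ⟨i, hi1, hi2, rfl⟩ | ⟨i, hi1, hi2, rfl⟩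
    · exact Or.inr (hs none)
    · exact Or.inl rfl
    · exact Or.inr (hrq i hi1 hi2)
    · exact Or.inr (hrq' i hi1 hi2)
  -- key structural lemma about letters 0/1
  have key : ∀ a ∈ S, ∀ xb : Bool,
      (ρ a = 0 ∧ ρ (δ a (some xb)) = 0) ∨
      (1 ≤ ρ a ∧ ρ a ≤ 2 * n - 1 ∧
        2 * (ρ a / 2) + 2 ≤ ρ (δ a (some xb)) ∧
        ρ (δ a (some xb)) ≤ 2 * (ρ a / 2) + 3 ∧
        (ρ a % 2 = 1 ∧ ρ a ≠ 1 → ρ (δ a (some xb)) = 2 * (ρ a / 2) + 3)) ∨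
      (2 * n ≤ ρ a ∧ ρ (δ a (some xb)) = 2 * n + 1) := by
    intro a ha xb
    rcases (hmem a).1 ha with rfl | rfl | ⟨i, hi1, hi2, rfl⟩ | ⟨i, hi1, hi2, rfl⟩
    · left; rw [hs, hρs]; exact ⟨rfl, rfl⟩
    · right; right; rw [ht, hρt]; omega
    · rcases Nat.lt_or_ge i (n + 1) with hin' | hin'
      · have hin : i ≤ n := by omega
        rw [hq i hi1 hin xb]
        split_ifs with hc hieq
        · rw [hρt]
          rcases hρqi i hi1 hi2 with ⟨h2, hv⟩ | ⟨h2, hv⟩ <;> rw [hv] <;>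
            right <;> left <;> omega
        · rw [hρq' (i + 1) (by omega) (by omega)]
          rcases hρqi i hi1 hi2 with ⟨h2, hv⟩ | ⟨h2, hv⟩ <;> rw [hv] <;>
            right <;> left <;> omega
        · rw [hρq (i + 1) (by omega) (by omega)]
          rcases hρqi i hi1 hi2 with ⟨h2, hv⟩ | ⟨h2, hv⟩ <;> rw [hv] <;>
            right <;> left <;> omega
      · obtain rfl : i = n + 1 := by omega
        rw [hqlast xb, hρt, hρq (n + 1) (by omega) le_rfl]
        right; right; omega
    · rw [hq' i hi1 hi2 xb]
      split_ifs with hieq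
      · rw [hρt, hρq' i hi1 hi2]
        right; left; omega
      · rw [hρq' (i + 1) (by omega) (by omega), hρq' i hi1 hi2]
        right; left; omega
  constructor
  · -- monotonicity
    intro x a ha b hb hab
    cases x with
    | none =>
      rcases hnone b hb with hbt | hb0
      · rw [hbt, ht]
        rcases hnone a ha with hat | ha0
        · rw [hat, ht]
        · rw [ha0, hρs, hρt]; omega
      · rw [hb0, hρs]
        rcases hnone a ha with hat | ha0
        · have hbt : b = t := hinj b hb t htS (by
            have h1 := hub b hb
            have h2 : ρ t ≤ ρ b := hat ▸ hab
            rw [hρt] at h2 ⊢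
            omega)
          rw [hbt, ht] at hb0
          have h3 := congrArg ρ hb0
          rw [hρt, hρs] at h3
          omega
        · rw [ha0, hρs]
    | some xb =>
      rcases eq_or_lt_of_le hab with heq | hlt
      · rw [hinj a ha b hb heq]
      · have hka := key a ha xb
        have hkb := key b hb xb
        omega
  · -- weak acyclicity
    refine ⟨fun p => if ρ p = 0 then 2 * n + 2 else ρ p, ?_, ?_⟩
    · intro a ha b hb h
      simp only at h
      have ha' := hub a ha
      have hb' := hub b hb
      apply hinj a ha b hb
      split_ifs at h <;> omega
    · intro a ha x
      have ha' := hub a ha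
      cases x with
      | none =>
        rcases hnone a ha with hat | h0
        · rw [hat, ht]
        · rw [h0]
          simp only
          split_ifs <;> omega
      | some xb =>
        have hk := key a ha xb
        simp only
        split_ifs <;> omega
end

section
/- Let G = (V, E) be a strongly connected digraph in which every vertex has out-degree k, and let ℓ be the greatest common divisor of the lengths of all cycles of G, with the corresponding unique partition V = V₁ ∪ ... ∪ V_ℓ such that every arc goes from V_i to V_{i+1} (indices mod ℓ). Then for a subset S ⊆ V there exists a coloring of the arcs of G with k letters (each vertex's out-arcs receiving distinct letters) such that S is a synchronizing set in the resulting deterministic automaton if and only if S ⊆ V_i for some i. -/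
set_option linter.unusedSectionVars false
set_option maxHeartbeats 1000000

namespace RC
open Function List

variable {V : Type*}


/-! ### Words acting on automata -/

section Act
variable {k : ℕ} (δ : V → Fin k → V)

def act (p : V) (w : List (Fin k)) : V := w.foldl δ p

@[simp] lemma act_nil (p : V) : act δ p [] = p := rfl
@[simp] lemma act_cons (p : V) (x : Fin k) (w : List (Fin k)) :
    act δ p (x :: w) = act δ (δ p x) w := rfl

lemma act_append (p : V) (u w : List (Fin k)) :
    act δ p (u ++ w) = act δ (act δ p u) w := List.foldl_append ..

/-- mergeable pair -/
def Mg (p q : V) : Prop := ∃ w, act δ p w = act δ q w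

/-- stable pair -/
def Stable (p q : V) : Prop := ∀ u, Mg δ (act δ p u) (act δ q u)

variable {δ}

lemma mg_refl (p : V) : Mg δ p p := ⟨[], rfl⟩
lemma mg_symm {p q : V} (h : Mg δ p q) : Mg δ q p := by obtain ⟨w, hw⟩ := h; exact ⟨w, hw.symm⟩
lemma mg_of_eq {p q : V} (h : p = q) : Mg δ p q := h ▸ mg_refl p
-- (mergeability is NOT preserved forward in general; not needed)

lemma stable_refl (p : V) : Stable δ p p := fun _ => mg_refl _
lemma stable_symm {p q : V} (h : Stable δ p q) : Stable δ q p := fun u => mg_symm (h u)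
lemma Stable.mg {p q : V} (h : Stable δ p q) : Mg δ p q := by simpa using h []
lemma stable_act {p q : V} (h : Stable δ p q) (u : List (Fin k)) :
    Stable δ (act δ p u) (act δ q u) := by
  intro u'
  have := h (u ++ u')
  simpa [act_append] using this
lemma stable_step {p q : V} (h : Stable δ p q) (x : Fin k) :
    Stable δ (δ p x) (δ q x) := by
  have := stable_act h [x]
  simpa using this
lemma stable_trans {p q r : V} (h1 : Stable δ p q) (h2 : Stable δ q r) : Stable δ p r := by
  intro u
  obtain ⟨w1, hw1⟩ := h1 u
  obtain ⟨w2, hw2⟩ := h2 (u ++ w1)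
  refine ⟨w1 ++ w2, ?_⟩
  rw [act_append, act_append, hw1]
  have h3 : act δ (act δ (act δ q u) w1) w2 = act δ (act δ q (u ++ w1)) w2 := by
    rw [act_append]
  have h4 : act δ (act δ (act δ r u) w1) w2 = act δ (act δ r (u ++ w1)) w2 := by
    rw [act_append]
  rw [h3, h4, hw2]

lemma act_P {ℓ : ℕ} (P : V → ZMod ℓ) (hP : ∀ v j, P (δ v j) = P v + 1) :
    ∀ (w : List (Fin k)) (p : V), P (act δ p w) = P p + w.length := by
  intro w
  induction w with
  | nil => simp
  | cons x w ih =>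
    intro p
    rw [act_cons, ih, hP]
    simp only [List.length_cons, Nat.cast_add, Nat.cast_one]
    ring

lemma act_replicate (f : V → V) (x : Fin k) (hf : ∀ v, δ v x = f v) :
    ∀ (m : ℕ) (p : V), act δ p (List.replicate m x) = f^[m] p := by
  intro m
  induction m with
  | zero => simp
  | succ m ih =>
    intro p
    rw [List.replicate_succ, act_cons, ih, hf, ← Function.iterate_succ_apply]

end Act

/-! ### Colorings -/

section Col
variable {k : ℕ} (E : V → Fin k → V) (c : V → Equiv.Perm (Fin k))

def dlt : V → Fin k → V := fun p x => E p (c p x)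

lemma exists_dlt_word (w : List (Fin k)) :
    ∀ p : V, ∃ w' : List (Fin k), w'.length = w.length ∧ act (dlt E c) p w' = act E p w := by
  induction w with
  | nil => exact fun p => ⟨[], rfl, rfl⟩
  | cons j w ih =>
    intro p
    obtain ⟨w', hl, hw'⟩ := ih (E p j)
    refine ⟨(c p).symm j :: w', by simp [hl], ?_⟩
    rw [act_cons]
    have : dlt E c p ((c p).symm j) = E p j := by simp [dlt]
    rw [this, hw']
    rfl

/-- reachability transfers to any coloring -/
lemma dlt_reach (hsc : ∀ u v : V, ∃ w : List (Fin k), w.foldl E u = v) (u v : V) :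
    ∃ w, act (dlt E c) u w = v := by
  obtain ⟨w, hw⟩ := hsc u v
  obtain ⟨w', _, hw'⟩ := exists_dlt_word E c w u
  exact ⟨w', by rw [hw']; exact hw⟩

end Col



/-! ### Functional graphs: levels, periodic points -/

section FG
variable [Fintype V]

lemma per_iterate {f : V → V} {x : V} (hx : x ∈ periodicPts f) (n : ℕ) :
    f^[n] x ∈ periodicPts f := by
  obtain ⟨m, hm, hmx⟩ := hx
  exact ⟨m, hm, hmx.apply_iterate n⟩

lemma exists_lev (f : V → V) (x : V) : ∃ n ≤ Fintype.card V, f^[n] x ∈ periodicPts f := by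
  have hcard : Fintype.card V < Fintype.card (Fin (Fintype.card V + 1)) := by simp
  obtain ⟨i, j, hij, hfij⟩ := Fintype.exists_ne_map_eq_of_card_lt
    (fun i : Fin (Fintype.card V + 1) => f^[(i : ℕ)] x) hcard
  have key : ∀ a b : ℕ, a < b → b ≤ Fintype.card V → f^[a] x = f^[b] x →
      ∃ n ≤ Fintype.card V, f^[n] x ∈ periodicPts f := by
    intro a b hab hb he
    refine ⟨a, by omega, ⟨b - a, by omega, ?_⟩⟩
    show f^[b - a] (f^[a] x) = f^[a] x
    rw [← Function.iterate_add_apply]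
    have : b - a + a = b := by omega
    rw [this, he]
  have hne : (i : ℕ) ≠ (j : ℕ) := fun h => hij (Fin.ext h)
  rcases lt_or_gt_of_ne hne with h | h
  · exact key i j h (by omega) hfij
  · exact key j i h (by omega) hfij.symm

/-- level of a point: distance to the periodic part -/
noncomputable def lev (f : V → V) (x : V) : ℕ := sInf {n | f^[n] x ∈ periodicPts f}

lemma lev_set_nonempty (f : V → V) (x : V) : {n | f^[n] x ∈ periodicPts f}.Nonempty := by
  obtain ⟨n, _, hn⟩ := exists_lev f x; exact ⟨n, hn⟩

lemma lev_spec (f : V → V) (x : V) : f^[lev f x] x ∈ periodicPts f :=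
  Nat.sInf_mem (lev_set_nonempty f x)

lemma per_of_lev_le {f : V → V} {x : V} {n : ℕ} (h : lev f x ≤ n) :
    f^[n] x ∈ periodicPts f := by
  have h1 := lev_spec f x
  have h2 : f^[n - lev f x + lev f x] x ∈ periodicPts f := by
    rw [Function.iterate_add_apply]; exact per_iterate h1 _
  rwa [Nat.sub_add_cancel h] at h2

lemma not_per_of_lt_lev {f : V → V} {x : V} {n : ℕ} (h : n < lev f x) :
    f^[n] x ∉ periodicPts f := Nat.notMem_of_lt_sInf h

lemma lev_le_of_per {f : V → V} {x : V} {n : ℕ} (h : f^[n] x ∈ periodicPts f) :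
    lev f x ≤ n := Nat.sInf_le h

lemma lev_eq_iff {f : V → V} {x : V} {n : ℕ} :
    lev f x = n ↔ (f^[n] x ∈ periodicPts f ∧ ∀ m < n, f^[m] x ∉ periodicPts f) := by
  constructor
  · rintro rfl
    exact ⟨lev_spec f x, fun m hm => not_per_of_lt_lev hm⟩
  · rintro ⟨h1, h2⟩
    refine le_antisymm (lev_le_of_per h1) ?_
    by_contra hcon
    push_neg at hcon
    exact h2 _ hcon (lev_spec f x)

lemma lev_eq_zero_iff {f : V → V} {x : V} : lev f x = 0 ↔ x ∈ periodicPts f := by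
  rw [lev_eq_iff]; simp

lemma lev_le_card (f : V → V) (x : V) : lev f x ≤ Fintype.card V := by
  obtain ⟨n, h1, h2⟩ := exists_lev f x
  exact le_trans (lev_le_of_per h2) h1

lemma lev_iterate_le {f : V → V} (x : V) (i : ℕ) (h : i ≤ lev f x) :
    lev f (f^[i] x) = lev f x - i := by
  rw [lev_eq_iff]
  constructor
  · rw [← Function.iterate_add_apply]
    have e : lev f x - i + i = lev f x := by omega
    rw [e]; exact lev_spec f x
  · intro m hm
    rw [← Function.iterate_add_apply]
    exact not_per_of_lt_lev (show m + i < lev f x by omega)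

/-- maximal level -/
noncomputable def maxLev (f : V → V) : ℕ := Finset.univ.sup (lev f)

lemma lev_le_maxLev (f : V → V) (x : V) : lev f x ≤ maxLev f :=
  Finset.le_sup (Finset.mem_univ x)

lemma exists_maxLev [Nonempty V] (f : V → V) : ∃ x, lev f x = maxLev f := by
  obtain ⟨x, _, hx⟩ := Finset.exists_mem_eq_sup Finset.univ Finset.univ_nonempty (lev f)
  exact ⟨x, hx.symm⟩

lemma mp_le_card {f : V → V} {x : V} (hx : x ∈ periodicPts f) :
    minimalPeriod f x ≤ Fintype.card V := by
  have hpos := minimalPeriod_pos_of_mem_periodicPts hx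
  have key : ∀ a b : ℕ, a < b → b < minimalPeriod f x → f^[a] x = f^[b] x → False := by
    intro a b hab hb he
    have hper : IsPeriodicPt f (minimalPeriod f x - b + a) x := by
      show f^[minimalPeriod f x - b + a] x = x
      rw [Function.iterate_add_apply, he]
      show f^[minimalPeriod f x - b] (f^[b] x) = x
      rw [← Function.iterate_add_apply]
      have e : minimalPeriod f x - b + b = minimalPeriod f x := by omega
      rw [e]
      exact iterate_minimalPeriod
    have := hper.minimalPeriod_le (by omega)
    omega
  have hinj : Function.Injective (fun i : Fin (minimalPeriod f x) => f^[(i : ℕ)] x) := by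
    intro i j hij
    simp only at hij
    by_contra hne
    have hne' : (i : ℕ) ≠ (j : ℕ) := fun h => hne (Fin.ext h)
    rcases lt_or_gt_of_ne hne' with h | h
    · exact key i j h j.isLt hij
    · exact key j i h i.isLt hij.symm
  simpa using Fintype.card_le_of_injective _ hinj

lemma per_fix_factorial {f : V → V} {x : V} (hx : x ∈ periodicPts f) :
    f^[Nat.factorial (Fintype.card V)] x = x := by
  have h1 := minimalPeriod_pos_of_mem_periodicPts hx
  have h2 := mp_le_card hx
  obtain ⟨c, hc⟩ := Nat.dvd_factorial h1 h2
  have hper : IsPeriodicPt f (minimalPeriod f x * c) x :=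
    Function.IsPeriodicPt.mul_const (iterate_minimalPeriod) c
  rw [hc]
  exact hper

lemma cycle_iterate_injOn {f : V → V} {r : V} {i j : ℕ}
    (hi : i < minimalPeriod f r) (hj : j < minimalPeriod f r) (hij : f^[i] r = f^[j] r) :
    i = j := by
  have key : ∀ a b : ℕ, a < b → b < minimalPeriod f r → f^[a] r = f^[b] r → False := by
    intro a b hab hb he
    have hper : IsPeriodicPt f (minimalPeriod f r - b + a) r := by
      show f^[minimalPeriod f r - b + a] r = r
      rw [Function.iterate_add_apply, he, ← Function.iterate_add_apply]
      have e : minimalPeriod f r - b + b = minimalPeriod f r := by omega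
      rw [e]
      exact iterate_minimalPeriod
    have := hper.minimalPeriod_le (by omega)
    omega
  by_contra hne
  rcases lt_or_gt_of_ne hne with h | h
  · exact key i j h hj hij
  · exact key j i h hi hij.symm

lemma mp_iterate {f : V → V} {r : V} (hr : r ∈ periodicPts f) (i : ℕ) :
    minimalPeriod f (f^[i] r) = minimalPeriod f r := by
  induction i with
  | zero => rfl
  | succ i ih =>
    rw [Function.iterate_succ_apply', minimalPeriod_apply (per_iterate hr i), ih]

lemma iterate_cycle_mod {f : V → V} (r : V) (s : ℕ) :
    f^[s] r = f^[s % minimalPeriod f r] r := iterate_mod_minimalPeriod_eq.symm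

end FG

/-! ### update (redirect) and traces -/

section Upd
variable [DecidableEq V] {f : V → V} {x t : V}

lemma trace_lt (f : V → V) (x t : V) {y : V} {n : ℕ}
    (h : ∀ i < n, (Function.update f x t)^[i] y ≠ x) :
    (Function.update f x t)^[n] y = f^[n] y := by
  induction n with
  | zero => rfl
  | succ n ih =>
    have ihn := ih (fun i hi => h i (by omega))
    rw [Function.iterate_succ_apply', Function.iterate_succ_apply', ihn,
      Function.update_apply]
    have hne : f^[n] y ≠ x := by
      have := h n (by omega)
      rwa [ihn] at this
    simp [hne]

lemma trace_all (f : V → V) (x t : V) {y : V}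
    (h : ∀ i, f^[i] y ≠ x) (n : ℕ) :
    (Function.update f x t)^[n] y = f^[n] y := by
  induction n with
  | zero => rfl
  | succ n ih =>
    rw [Function.iterate_succ_apply', Function.iterate_succ_apply', ih,
      Function.update_apply]
    simp [h n]

variable [Fintype V]

/-- LEM-B : periodic points are preserved if the redirected vertex is non-periodic -/
lemma per_sub_per_update (hx : x ∉ periodicPts f) :
    periodicPts f ⊆ periodicPts (Function.update f x t) := by
  intro y hy
  have havoid : ∀ i, f^[i] y ≠ x := by
    intro i hi
    exact hx (hi ▸ per_iterate hy i)
  obtain ⟨m, hm, hmy⟩ := hy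
  exact ⟨m, hm, by rw [IsPeriodicPt, IsFixedPt, trace_all f x t havoid]; exact hmy⟩

/-- if the f-orbit of t avoids x, so does the orbit of t under the update,
and the two orbits agree -/
lemma orbit_update_eq_orbit (h : ∀ i, f^[i] t ≠ x) (i : ℕ) :
    (Function.update f x t)^[i] t = f^[i] t :=
  trace_all f x t h i

lemma orbit_t_avoids (h : ∀ i, f^[i] t ≠ x) (i : ℕ) :
    (Function.update f x t)^[i] t ≠ x := by
  rw [orbit_update_eq_orbit h]; exact h i

/-- LEM-C : no new periodic points if x is not in the f-orbit of the target t -/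
lemma per_update_sub (h : ∀ i, f^[i] t ≠ x) :
    periodicPts (Function.update f x t) ⊆ periodicPts f := by
  intro y hy
  set f' := Function.update f x t with hf'
  by_cases hav : ∀ i, f'^[i] y ≠ x
  · obtain ⟨m, hm, hmy⟩ := hy
    refine ⟨m, hm, ?_⟩
    have e : f'^[m] y = f^[m] y := trace_lt f x t (fun i _ => hav i)
    rwa [IsPeriodicPt, IsFixedPt, e] at hmy
  · exfalso
    push_neg at hav
    obtain ⟨i₀, hi₀⟩ := hav
    obtain ⟨m, hm, hmy⟩ := hy
    have hret : f'^[m * (i₀ + 1)] y = y := (hmy.mul_const (i₀ + 1))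
    have hge : m * (i₀ + 1) ≥ i₀ + 1 := by nlinarith
    have e1 : f'^[m * (i₀+1)] y = f'^[m * (i₀+1) - i₀ - 1] (f'^[i₀+1] y) := by
      rw [← Function.iterate_add_apply]
      congr 1
      omega
    have hstep : f'^[i₀+1] y = t := by
      rw [Function.iterate_succ_apply', hi₀, hf']
      simp
    rw [e1, hstep] at hret
    have : f'^[i₀] y ≠ x := by
      rw [← hret, ← Function.iterate_add_apply]
      exact orbit_t_avoids h _
    exact this hi₀

/-- LEM-D : a new periodic point appears when x lies on the f-orbit of t -/
lemma new_per_update (h : ∃ i, f^[i] t = x) :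
    x ∈ periodicPts (Function.update f x t) := by
  classical
  set f' := Function.update f x t with hf'
  let i₀ := Nat.find h
  have hi₀ : f^[i₀] t = x := Nat.find_spec h
  have hmin : ∀ j < i₀, f^[j] t ≠ x := fun j hj => Nat.find_min h hj
  have hpre : ∀ j, j ≤ i₀ → f'^[j] t = f^[j] t := by
    intro j
    induction j using Nat.strong_induction_on with
    | _ j ih =>
      intro hj
      apply trace_lt
      intro i hi hci
      have e : f'^[i] t = f^[i] t := ih i hi (by omega)
      rw [e] at hci
      exact hmin i (by omega) hci
  refine ⟨i₀ + 1, by omega, ?_⟩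
  show f'^[i₀+1] x = x
  have h1 : f' x = t := by rw [hf']; simp
  rw [Function.iterate_succ_apply, h1, hpre i₀ le_rfl, hi₀]

end Upd




section Dance
variable [Fintype V] [DecidableEq V] {k : ℕ} (E : V → Fin k → V)

def gfun (σ : V → Fin k) : V → V := fun v => E v (σ v)

lemma gfun_update (σ : V → Fin k) (x : V) (j : Fin k) :
    gfun E (Function.update σ x j) = Function.update (gfun E σ) x (E x j) := by
  funext v
  by_cases h : v = x
  · subst h; simp [gfun]
  · simp [gfun, Function.update_apply, h]

/-- number of cyclic (periodic) vertices -/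
noncomputable def NCyc (f : V → V) : ℕ := (periodicPts f).ncard

/-- extremal section: maximal number of cyclic vertices, then maximal level -/
structure Ext (σ : V → Fin k) : Prop where
  max1 : ∀ σ' : V → Fin k, NCyc (gfun E σ') ≤ NCyc (gfun E σ)
  max2 : ∀ σ' : V → Fin k, NCyc (gfun E σ') = NCyc (gfun E σ) →
    maxLev (gfun E σ') ≤ maxLev (gfun E σ)

/-- a good section: positive max level, and all max-level vertices have a
common image under maxLev iterations (i.e. lie in "one tree") -/
def Good (σ : V → Fin k) : Prop :=
  1 ≤ maxLev (gfun E σ) ∧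
  ∃ r : V, ∀ z : V, lev (gfun E σ) z = maxLev (gfun E σ) →
    (gfun E σ)^[maxLev (gfun E σ)] z = r

lemma maxLev_le_card (f : V → V) : maxLev f ≤ Fintype.card V :=
  Finset.sup_le (fun x _ => lev_le_card f x)

lemma exists_ext [Nonempty V] (hk : 0 < k) : ∃ σ : V → Fin k, Ext E σ := by
  classical
  haveI : Nonempty (Fin k) := ⟨⟨0, hk⟩⟩
  haveI : Nonempty (V → Fin k) := ⟨fun _ => ⟨0, hk⟩⟩
  set n := Fintype.card V with hn
  obtain ⟨σ, _, hσ⟩ := Finset.exists_max_image Finset.univ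
    (fun σ : V → Fin k => NCyc (gfun E σ) * (n + 1) + maxLev (gfun E σ))
    ⟨Classical.arbitrary _, Finset.mem_univ _⟩
  refine ⟨σ, ?_, ?_⟩
  · intro σ'
    have h := hσ σ' (Finset.mem_univ _)
    have h1 := maxLev_le_card (gfun E σ')
    have h2 := maxLev_le_card (gfun E σ)
    by_contra hcon
    push_neg at hcon
    nlinarith
  · intro σ' heq
    have h := hσ σ' (Finset.mem_univ _)
    rw [heq] at h
    omega

/-- package for GOODIFY -/
lemma goodify {σ' : V → Fin k} {r : V} {L : ℕ}
    (h1 : ∃ z, L < lev (gfun E σ') z)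
    (h2 : ∀ z, L < lev (gfun E σ') z → (gfun E σ')^[lev (gfun E σ') z] z = r) :
    Good E σ' := by
  obtain ⟨z₀, hz₀⟩ := h1
  have hML : L < maxLev (gfun E σ') := lt_of_lt_of_le hz₀ (lev_le_maxLev _ _)
  constructor
  · omega
  · refine ⟨r, fun z hz => ?_⟩
    rw [← hz]
    exact h2 z (by omega)

end Dance

/-! ### the far-redirect lemma -/

section Far
variable [Fintype V] [DecidableEq V]

/-- Redirecting any vertex x (not on the forward orbit of vv) to point at a
maximal-level vertex vv: every vertex of the new graph with level > L drains to
r = g^[L] vv, and x itself has level L+1. -/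
lemma update_lev_far (g : V → V) (x vv : V) (L : ℕ)
    (hxo : ∀ i, g^[i] vv ≠ x)
    (hlev : lev g vv = L)
    (hmax : ∀ z, lev g z ≤ L) :
    (∀ z, L < lev (Function.update g x vv) z →
      (Function.update g x vv)^[lev (Function.update g x vv) z] z = g^[L] vv) ∧
    lev (Function.update g x vv) x = L + 1 := by
  set g' := Function.update g x vv with hg'
  set r := g^[L] vv with hr
  have hrper : r ∈ periodicPts g := by
    have h := lev_spec g vv
    rw [hlev] at h
    exact h
  -- vv's orbit is unchanged
  have hvtrace : ∀ i, g'^[i] vv = g^[i] vv := trace_all g x vv hxo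
  -- r is periodic for g'
  have hrper' : r ∈ periodicPts g' := by
    obtain ⟨m, hm, hmr⟩ := hrper
    refine ⟨m, hm, ?_⟩
    show g'^[m] r = r
    have havoid : ∀ i, g^[i] r ≠ x := by
      intro i
      have : g^[i] r = g^[i + L] vv := by rw [hr, ← Function.iterate_add_apply]
      rw [this]; exact hxo _
    rw [trace_all g x vv havoid]
    exact hmr
  -- tail points are non-periodic for g'
  have htail_nonper' : ∀ i < L, g'^[i] vv ∉ periodicPts g' := by
    intro i hi hper
    obtain ⟨m, hm, hmp⟩ := hper
    have havoid : ∀ s, g^[s] (g^[i] vv) ≠ x := by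
      intro s
      rw [← Function.iterate_add_apply]; exact hxo _
    have : g^[m] (g^[i] vv) = g^[i] vv := by
      have e : g'^[m] (g'^[i] vv) = g'^[i] vv := hmp
      rw [hvtrace] at e
      rw [← trace_all g x vv havoid m]
      exact e
    have : g^[i] vv ∈ periodicPts g := ⟨m, hm, this⟩
    exact (not_per_of_lt_lev (by rw [hlev] at *; omega)) this
  have hlev'v : lev g' vv = L := by
    rw [lev_eq_iff]
    constructor
    · rw [hvtrace]; exact hrper'
    · intro m hm
      exact htail_nonper' m hm
  -- x is non-periodic for g'
  have hxnonper' : x ∉ periodicPts g' := by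
    rintro ⟨m, hm, hmp⟩
    have hx1 : g' x = vv := by rw [hg']; simp
    obtain ⟨m', rfl⟩ : ∃ m', m = m' + 1 := ⟨m - 1, by omega⟩
    have hmp' : g'^[m' + 1] x = x := hmp
    rw [Function.iterate_succ_apply, hx1, hvtrace] at hmp'
    exact hxo m' hmp'
  have hlev'x : lev g' x = L + 1 := by
    rw [lev_eq_iff]
    have hx1 : g' x = vv := by rw [hg']; simp
    constructor
    · rw [Function.iterate_succ_apply, hx1, hvtrace]
      exact hrper'
    · intro m hm
      rcases Nat.eq_zero_or_pos m with h0 | hpos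
      · subst h0; exact hxnonper'
      · obtain ⟨m', rfl⟩ : ∃ m', m = m' + 1 := ⟨m - 1, by omega⟩
        rw [Function.iterate_succ_apply, hx1]
        exact htail_nonper' m' (by omega)
  refine ⟨?_, hlev'x⟩
  intro z hz
  set lam := lev g' z with hlam
  by_cases hcase : ∀ i, g'^[i] z ≠ x
  · -- orbit avoids x entirely: levels agree, contradiction with hmax
    exfalso
    have htr : ∀ i, g'^[i] z = g^[i] z := by
      intro i
      exact trace_lt g x vv (fun j _ => hcase j)
    have hzper : g^[lam] z ∈ periodicPts g := by
      have h1 : g'^[lam] z ∈ periodicPts g' := lev_spec g' z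
      obtain ⟨m, hm, hmp⟩ := h1
      refine ⟨m, hm, ?_⟩
      have havoid2 : ∀ s, g'^[s] (g'^[lam] z) ≠ x := by
        intro s
        rw [← Function.iterate_add_apply]
        exact hcase _
      have e0 : g'^[m] (g'^[lam] z) = g^[m] (g'^[lam] z) :=
        trace_lt g x vv (fun j _ => havoid2 j)
      have hmp' : g'^[m] (g'^[lam] z) = g'^[lam] z := hmp
      rw [e0, htr] at hmp'
      show g^[m] (g^[lam] z) = g^[lam] z
      exact hmp'
    have : lev g z ≤ lam := lev_le_of_per hzper
    have : lev g z ≤ L := hmax z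
    -- but also each iterate below lam is non-per for g, so lev g z = lam > L
    have hnp : ∀ m < lam, g^[m] z ∉ periodicPts g := by
      intro m hm hper
      have : g^[m] z ∈ periodicPts g' := by
        obtain ⟨t, ht, htp⟩ := hper
        refine ⟨t, ht, ?_⟩
        have havoid3 : ∀ s, g^[s] (g^[m] z) ≠ x := by
          intro s
          rw [← Function.iterate_add_apply]
          rw [← htr]
          exact hcase _
        show g'^[t] (g^[m] z) = g^[m] z
        rw [trace_all g x vv havoid3]
        exact htp
      rw [← htr] at this
      exact (not_per_of_lt_lev (hlam ▸ hm)) this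
    have : lev g z = lam := by
      rw [lev_eq_iff]
      exact ⟨hzper, hnp⟩
    omega
  · -- orbit hits x
    push_neg at hcase
    classical
    set i₀ := Nat.find hcase with hi₀def
    have hi₀ : g'^[i₀] z = x := Nat.find_spec hcase
    have hmin : ∀ j < i₀, g'^[j] z ≠ x := fun j hj => Nat.find_min hcase hj
    have hx1 : g' x = vv := by rw [hg']; simp
    have hafter : ∀ s, g'^[i₀ + 1 + s] z = g^[s] vv := by
      intro s
      have e1 : i₀ + 1 + s = s + (1 + i₀) := by omega
      rw [e1, Function.iterate_add_apply]
      have e2 : g'^[1 + i₀] z = vv := by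
        rw [Nat.add_comm, Function.iterate_succ_apply', hi₀, hx1]
      rw [e2, hvtrace]
    -- prefix points are non-periodic for g'
    have hprefix : ∀ j ≤ i₀, g'^[j] z ∉ periodicPts g' := by
      intro j hj hper
      obtain ⟨t, ht, htp⟩ := hper
      -- returns: g'^[t*s] fixed; choose s with t*s ≥ i₀ + 1 - j
      have hbig : g'^[t * (i₀ + 1)] (g'^[j] z) = g'^[j] z := htp.mul_const _
      have hge : t * (i₀ + 1) ≥ i₀ + 1 - j := by
        have h9 : i₀ + 1 ≤ t * (i₀ + 1) := Nat.le_mul_of_pos_left _ ht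
        omega
      have e3 : g'^[t * (i₀+1)] (g'^[j] z) = g'^[j + t * (i₀+1)] z := by
        rw [← Function.iterate_add_apply]
        congr 1
        omega
      set D := j + t*(i₀+1) - i₀ - 1 with hD
      have e4 : g'^[j + t*(i₀+1)] z = g^[D] vv := by
        have e5 : j + t*(i₀+1) = i₀ + 1 + D := by omega
        rw [e5, hafter]
      -- so g'^[j] z is on the orbit of vv
      have e6 : g'^[j] z = g^[D] vv := by
        rw [← hbig, e3, e4]
      -- then x = g'^[i₀] z = g^[...] vv , contradicting hxo
      have e7 : g'^[i₀] z = g'^[i₀ - j] (g'^[j] z) := by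
        rw [← Function.iterate_add_apply]
        congr 1
        omega
      have e8 : g'^[i₀ - j] (g'^[j] z) = g^[i₀ - j] (g'^[j] z) := by
        apply trace_lt
        intro i hi
        rw [← Function.iterate_add_apply]
        have : i + j < i₀ := by omega
        exact hmin _ this
      have e9 : g^[i₀ - j] (g'^[j] z) = g^[i₀ - j + D] vv := by
        rw [e6, ← Function.iterate_add_apply]
      exact hxo _ (by rw [← e9, ← e8, ← e7, hi₀])
    have hlameq : lam = i₀ + 1 + L := by
      rw [hlam, lev_eq_iff]
      constructor
      · rw [hafter]
        exact hrper'
      · intro m hm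
        rcases Nat.lt_or_ge m (i₀ + 1) with h | h
        · exact hprefix m (by omega)
        · set D2 := m - i₀ - 1 with hD2
          have e7 : g'^[m] z = g'^[D2] vv := by
            have e : m = i₀ + 1 + D2 := by omega
            rw [e, hafter, ← hvtrace]
          rw [e7]
          exact htail_nonper' _ (by omega)
    rw [hlameq, hafter]

end Far

section CycRed

variable [Fintype V] [DecidableEq V]

/-- Context for redirecting a cycle vertex `x = g^[e] r` to point at a maximal
level vertex `v` with `g^[L] v = r`, `N` the cycle length. -/
structure CR (g : V → V) (v r x : V) (L N e : ℕ) : Prop where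
  hL : 1 ≤ L
  hlev : lev g v = L
  hr : g^[L] v = r
  hN : minimalPeriod g r = N
  he : e < N
  hx : g^[e] r = x

namespace CR

variable {g : V → V} {v r x : V} {L N e : ℕ}

lemma rper (h : CR g v r x L N e) : r ∈ periodicPts g := by
  have h1 := lev_spec g v
  rw [h.hlev, h.hr] at h1
  exact h1

lemma Npos (h : CR g v r x L N e) : 0 < N :=
  h.hN ▸ minimalPeriod_pos_of_mem_periodicPts h.rper

lemma xper (h : CR g v r x L N e) : x ∈ periodicPts g :=
  h.hx ▸ per_iterate h.rper e

lemma tail_nonper (h : CR g v r x L N e) : ∀ i < L, g^[i] v ∉ periodicPts g := by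
  intro i hi
  exact not_per_of_lt_lev (h.hlev ▸ hi)

lemma tail_ne_x (h : CR g v r x L N e) : ∀ i < L, g^[i] v ≠ x := by
  intro i hi hc
  exact h.tail_nonper i hi (hc ▸ h.xper)

lemma vnonper (h : CR g v r x L N e) : v ∉ periodicPts g := by
  have := h.tail_nonper 0 h.hL
  simpa using this

lemma zinj (h : CR g v r x L N e) {i j : ℕ} (hi : i < N) (hj : j < N)
    (hij : g^[i] r = g^[j] r) : i = j :=
  cycle_iterate_injOn (h.hN ▸ hi) (h.hN ▸ hj) hij

lemma gN (h : CR g v r x L N e) : g^[N] r = r := by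
  have := iterate_minimalPeriod (f := g) (x := r)
  rwa [h.hN] at this

lemma gmod (h : CR g v r x L N e) (s : ℕ) : g^[s] r = g^[s % N] r := by
  have := iterate_cycle_mod (f := g) r s
  rwa [h.hN] at this

lemma pre_inj (h : CR g v r x L N e) {i j : ℕ} (hi : i < j) (hj : j ≤ L)
    (hij : g^[i] v = g^[j] v) : False := by
  have hper : g^[i] v ∈ periodicPts g := by
    refine ⟨j - i, by omega, ?_⟩
    show g^[j-i] (g^[i] v) = g^[i] v
    rw [← Function.iterate_add_apply]
    have e1 : j - i + i = j := by omega
    rw [e1, hij]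
  exact h.tail_nonper i (by omega) hper

lemma upd_x (h : CR g v r x L N e) : Function.update g x v x = v := by simp

lemma upd_ne (h : CR g v r x L N e) {y : V} (hy : y ≠ x) :
    Function.update g x v y = g y := Function.update_of_ne hy _ _

/-- trace along the cycle up to x -/
lemma tr_r (h : CR g v r x L N e) : ∀ i ≤ e, (Function.update g x v)^[i] r = g^[i] r := by
  intro i
  induction i using Nat.strong_induction_on with
  | _ i ih =>
    intro hi
    apply trace_lt
    intro j hj hc
    rw [ih j hj (by omega)] at hc
    have hjN : j < N := by have := h.he; omega
    have := h.zinj (i := j) (j := e) hjN h.he (by rw [hc, h.hx])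
    omega

/-- trace along the tail of v -/
lemma tr_v' (h : CR g v r x L N e) : ∀ s ≤ L, (Function.update g x v)^[s] v = g^[s] v := by
  intro s
  induction s using Nat.strong_induction_on with
  | _ s ih =>
    intro hs
    apply trace_lt
    intro j hj hc
    rw [ih j hj (by omega)] at hc
    exact h.tail_ne_x j (by omega) hc

lemma tr_after (h : CR g v r x L N e) : ∀ s ≤ L,
    (Function.update g x v)^[e + 1 + s] r = g^[s] v := by
  intro s hs
  have e1 : e + 1 + s = s + (1 + e) := by omega
  rw [e1, Function.iterate_add_apply]
  have e2 : (Function.update g x v)^[1 + e] r = v := by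
    rw [Nat.add_comm, Function.iterate_succ_apply', h.tr_r e le_rfl, h.hx, h.upd_x]
  rw [e2, h.tr_v' s hs]

lemma rper' (h : CR g v r x L N e) :
    Function.IsPeriodicPt (Function.update g x v) (e + 1 + L) r := by
  show (Function.update g x v)^[e+1+L] r = r
  rw [h.tr_after L le_rfl, h.hr]

lemma rmem' (h : CR g v r x L N e) : r ∈ periodicPts (Function.update g x v) :=
  ⟨e + 1 + L, by omega, h.rper'⟩

lemma zper' (h : CR g v r x L N e) : ∀ i ≤ e, g^[i] r ∈ periodicPts (Function.update g x v) := by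
  intro i hi
  rw [← h.tr_r i hi]
  exact per_iterate h.rmem' i

lemma tper' (h : CR g v r x L N e) : ∀ s < L, g^[s] v ∈ periodicPts (Function.update g x v) := by
  intro s hs
  rw [← h.tr_after s (by omega)]
  exact per_iterate h.rmem' _

/-- all g'-iterates of r are in the new cycle -/
lemma enum (h : CR g v r x L N e) (d : ℕ) :
    (∃ i ≤ e, (Function.update g x v)^[d] r = g^[i] r) ∨
    (∃ s < L, (Function.update g x v)^[d] r = g^[s] v) := by
  set T0 := e + 1 + L with hT0
  have hT0pos : 0 < T0 := by omega
  have hmod : (Function.update g x v)^[d] r = (Function.update g x v)^[d % T0] r := by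
    conv_lhs => rw [← Nat.mod_add_div d T0]
    rw [Function.iterate_add_apply]
    have : (Function.update g x v)^[T0 * (d / T0)] r = r := h.rper'.mul_const _
    rw [this]
  rcases Nat.lt_or_ge (d % T0) (e + 1) with hc | hc
  · left
    exact ⟨d % T0, by omega, by rw [hmod, h.tr_r _ (by omega)]⟩
  · right
    set s0 := d % T0 - e - 1 with hs0
    have hs0L : s0 < L := by
      have := Nat.mod_lt d hT0pos
      omega
    refine ⟨s0, hs0L, ?_⟩
    rw [hmod]
    have e1 : d % T0 = e + 1 + s0 := by omega
    rw [e1, h.tr_after s0 (by omega)]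

lemma vchar (h : CR g v r x L N e) (d : ℕ) :
    (∃ i ≤ e, (Function.update g x v)^[d] v = g^[i] r) ∨
    (∃ s < L, (Function.update g x v)^[d] v = g^[s] v) := by
  have e1 : (Function.update g x v)^[d] v = (Function.update g x v)^[d + (e+1)] r := by
    rw [Function.iterate_add_apply]
    congr 1
    have := h.tr_after 0 (by omega)
    simpa using this.symm
  rw [e1]
  exact h.enum _

/-- trace along the rest of the old cycle (the part that gets destroyed) -/
lemma btr (h : CR g v r x L N e) : ∀ m, e < m → m < N → ∀ s, s ≤ N - m →
    (Function.update g x v)^[s] (g^[m] r) = g^[m + s] r := by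
  intro m hm1 hm2 s
  induction s using Nat.strong_induction_on with
  | _ s ih =>
    intro hs
    have key : ∀ j < s, (Function.update g x v)^[j] (g^[m] r) ≠ x := by
      intro j hj hc
      rw [ih j hj (by omega)] at hc
      have hmj : m + j < N := by omega
      have := h.zinj hmj h.he (by rw [hc, h.hx])
      omega
    have e0 : (Function.update g x v)^[s] (g^[m] r) = g^[s] (g^[m] r) :=
      trace_lt g x v key
    rw [e0, ← Function.iterate_add_apply]
    congr 1
    omega

lemma bnonper' (h : CR g v r x L N e) : ∀ m, e < m → m < N →
    g^[m] r ∉ periodicPts (Function.update g x v) := by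
  intro m hm1 hm2 hper
  obtain ⟨t, ht, htp⟩ := hper
  set y := g^[m] r with hy
  set g' := Function.update g x v with hg'
  have hreach : g'^[N - m] y = r := by
    have := h.btr m hm1 hm2 (N - m) le_rfl
    rw [hy, this]
    have e1 : m + (N - m) = N := by omega
    rw [e1, h.gN]
  have hbig : g'^[t * (N - m + 1)] y = y := htp.mul_const _
  have hge : t * (N - m + 1) ≥ N - m := by
    have : N - m + 1 ≤ t * (N - m + 1) := Nat.le_mul_of_pos_left _ ht
    omega
  have e2 : g'^[t * (N - m + 1)] y = g'^[t * (N - m + 1) - (N - m)] r := by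
    rw [← hreach, ← Function.iterate_add_apply]
    congr 1
    omega
  have e3 : y = g'^[t*(N-m+1) - (N-m)] r := by rw [← hbig, e2]
  rcases h.enum (t*(N-m+1) - (N-m)) with ⟨i, hi, hieq⟩ | ⟨s, hsL, hseq⟩
  · rw [← e3] at hieq
    have := h.zinj hm2 (show i < N by omega) hieq
    omega
  · rw [← e3] at hseq
    exact h.tail_nonper s hsL (by rw [← hseq]; exact per_iterate h.rper m)

/-- characterization of new periodic points (⊆ direction) -/
lemma per'_sub (h : CR g v r x L N e) {y : V}
    (hy : y ∈ periodicPts (Function.update g x v)) :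
    (y ∈ periodicPts g ∧ ∀ m, e < m → m < N → y ≠ g^[m] r) ∨ (∃ s < L, y = g^[s] v) := by
  set g' := Function.update g x v with hg'
  by_cases hav : ∀ i, g'^[i] y ≠ x
  · left
    obtain ⟨t, ht, htp⟩ := hy
    have e0 : g'^[t] y = g^[t] y := trace_lt g x v (fun j _ => hav j)
    constructor
    · exact ⟨t, ht, by rw [IsPeriodicPt, IsFixedPt, ← e0]; exact htp⟩
    · intro m hm1 hm2 hc
      -- y ∈ B : its g'-orbit reaches x, contradiction
      apply hav (N - m + e)
      have e1 : g'^[N - m + e] y = g'^[e] (g'^[N-m] y) := by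
        rw [← Function.iterate_add_apply]
        congr 1
        omega
      have e2 : g'^[N - m] y = r := by
        rw [hc, h.btr m hm1 hm2 (N-m) le_rfl]
        have e3 : m + (N - m) = N := by omega
        rw [e3, h.gN]
      rw [e1, e2, h.tr_r e le_rfl, h.hx]
  · push_neg at hav
    obtain ⟨i₀, hi₀⟩ := hav
    obtain ⟨t, ht, htp⟩ := hy
    have hbig : g'^[t * (i₀ + 1)] y = y := htp.mul_const _
    have hge : t * (i₀ + 1) ≥ i₀ + 1 := Nat.le_mul_of_pos_left _ ht
    have e1 : g'^[t * (i₀+1)] y = g'^[t*(i₀+1) - i₀ - 1] (g'^[i₀+1] y) := by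
      rw [← Function.iterate_add_apply]
      congr 1
      omega
    have e2 : g'^[i₀+1] y = v := by
      rw [Function.iterate_succ_apply', hi₀]
      exact h.upd_x
    have e3 : y = g'^[t*(i₀+1) - i₀ - 1] v := by rw [← hbig, e1, e2]
    rcases h.vchar (t*(i₀+1) - i₀ - 1) with ⟨i, hi, hieq⟩ | ⟨s, hsL, hseq⟩
    · left
      rw [← e3] at hieq
      constructor
      · rw [hieq]; exact per_iterate h.rper i
      · intro m hm1 hm2 hc
        rw [hieq] at hc
        have := h.zinj (show i < N by omega) hm2 hc
        omega
    · right
      rw [← e3] at hseq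
      exact ⟨s, hsL, hseq⟩

/-- (⊇ direction) old periodic points outside the destroyed arc stay periodic -/
lemma per'_sup (h : CR g v r x L N e) {y : V} (hy : y ∈ periodicPts g)
    (hyB : ∀ m, e < m → m < N → y ≠ g^[m] r) :
    y ∈ periodicPts (Function.update g x v) := by
  by_cases hz : ∃ i < N, y = g^[i] r
  · obtain ⟨i, hiN, rfl⟩ := hz
    have hie : i ≤ e := by
      by_contra hie
      exact hyB i (by omega) hiN rfl
    exact h.zper' i hie
  · push_neg at hz
    have hav : ∀ i, g^[i] y ≠ x := by
      intro i hc
      -- then y is on the cycle of x = cycle of r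
      obtain ⟨t, ht, htp⟩ := hy
      have hret : g^[t * (i+1)] y = y := htp.mul_const _
      have hge : i + 1 ≤ t * (i+1) := Nat.le_mul_of_pos_left _ ht
      set A := t*(i+1) - i with hA
      have e1 : g^[t*(i+1)] y = g^[A + e] r := by
        have e0 : t*(i+1) = A + i := by omega
        rw [e0, Function.iterate_add_apply, hc, ← h.hx, ← Function.iterate_add_apply]
      have e2 : y = g^[(A + e) % N] r := by
        rw [← h.gmod, ← e1, hret]
      exact hz _ (Nat.mod_lt _ h.Npos) e2
    obtain ⟨t, ht, htp⟩ := hy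
    exact ⟨t, ht, by
      show (Function.update g x v)^[t] y = y
      rw [trace_all g x v hav]
      exact htp⟩

end CR

end CycRed

section CycRed2

variable [Fintype V] [DecidableEq V]

def Bset (g : V → V) (r : V) (N e : ℕ) : Set V := (fun m => g^[m] r) '' Set.Ioo e N
def Tset (g : V → V) (v : V) (L : ℕ) : Set V := (fun s => g^[s] v) '' Set.Iio L

namespace CR
variable {g : V → V} {v r x : V} {L N e : ℕ}

lemma perset (h : CR g v r x L N e) :
    periodicPts (Function.update g x v) =
      (periodicPts g \ Bset g r N e) ∪ Tset g v L := by
  ext y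
  constructor
  · intro hy
    rcases h.per'_sub hy with ⟨h1, h2⟩ | ⟨s, hsL, rfl⟩
    · left
      refine ⟨h1, ?_⟩
      rintro ⟨m, hm, rfl⟩
      exact h2 m hm.1 hm.2 rfl
    · right
      exact ⟨s, hsL, rfl⟩
  · rintro (⟨h1, h2⟩ | ⟨s, hsL, rfl⟩)
    · refine h.per'_sup h1 (fun m hm1 hm2 hc => h2 ?_)
      exact ⟨m, ⟨hm1, hm2⟩, hc.symm⟩
    · exact h.tper' s hsL

lemma ncards (h : CR g v r x L N e) :
    NCyc (Function.update g x v) + (N - 1 - e) = NCyc g + L := by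
  have hB : Bset g r N e ⊆ periodicPts g := by
    rintro y ⟨m, _, rfl⟩
    exact per_iterate h.rper m
  have hT : ∀ y ∈ Tset g v L, y ∉ periodicPts g := by
    rintro y ⟨s, hs, rfl⟩
    exact h.tail_nonper s hs
  have hdisj : Disjoint (periodicPts g \ Bset g r N e) (Tset g v L) := by
    rw [Set.disjoint_right]
    intro y hyT hyd
    exact hT y hyT hyd.1
  have hcB : (Bset g r N e).ncard = N - 1 - e := by
    rw [Bset, Set.ncard_image_of_injOn]
    · rw [show Set.Ioo e N = ↑(Finset.Ioo e N) from (Finset.coe_Ioo e N).symm,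
        Set.ncard_coe_finset, Nat.card_Ioo]
      omega
    · intro m1 hm1 m2 hm2 heq
      exact h.zinj hm1.2 hm2.2 heq
  have hcT : (Tset g v L).ncard = L := by
    rw [Tset, Set.ncard_image_of_injOn]
    · rw [show Set.Iio L = ↑(Finset.Iio L) from (Finset.coe_Iio L).symm,
        Set.ncard_coe_finset, Nat.card_Iio]
    · intro m1 hm1 m2 hm2 heq
      by_contra hne
      rcases lt_or_gt_of_ne hne with hlt | hgt
      · exact h.pre_inj hlt (le_of_lt hm2) heq
      · exact h.pre_inj hgt (le_of_lt hm1) heq.symm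
  have hBle : (Bset g r N e).ncard ≤ NCyc g := Set.ncard_le_ncard hB (Set.toFinite _)
  have hunion : NCyc (Function.update g x v) =
      (periodicPts g \ Bset g r N e).ncard + (Tset g v L).ncard := by
    rw [NCyc, h.perset, Set.ncard_union_eq hdisj (Set.toFinite _) (Set.toFinite _)]
  have hdiff : (periodicPts g \ Bset g r N e).ncard = NCyc g - (Bset g r N e).ncard :=
    Set.ncard_diff hB (Set.toFinite _)
  rw [hunion, hdiff, hcB, hcT]
  omega

lemma levy0 (h : CR g v r x L N e) :
    lev (Function.update g x v) (g^[e+1] r) = N - 1 - e := by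
  rcases Nat.lt_or_ge (e+1) N with hlt | hge
  · rw [lev_eq_iff]
    constructor
    · have hb := h.btr (e+1) (by omega) hlt (N - 1 - e) (by omega)
      rw [hb]
      have e1 : e + 1 + (N - 1 - e) = N := by omega
      rw [e1, h.gN]
      exact h.rmem'
    · intro m hm
      rw [h.btr (e+1) (by omega) hlt m (by omega)]
      exact h.bnonper' (e+1+m) (by omega) (by omega)
  · have heq : e + 1 = N := by have := h.he; omega
    have e0 : N - 1 - e = 0 := by omega
    rw [heq, h.gN, e0, lev_eq_zero_iff]
    exact h.rmem'

/-- strict branch: all high-level vertices of the updated graph drain to r -/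
lemma strict_good (h : CR g v r x L N e) (hmaxg : ∀ z, lev g z ≤ L)
    (hstrict : L < N - 1 - e) :
    (∃ z, L < lev (Function.update g x v) z) ∧
    (∀ z, L < lev (Function.update g x v) z →
      (Function.update g x v)^[lev (Function.update g x v) z] z = r) := by
  set g' := Function.update g x v with hg'
  constructor
  · exact ⟨g^[e+1] r, by rw [hg', h.levy0]; omega⟩
  · intro z hz
    set lam := lev g' z with hlam
    by_cases hB : ∃ m < lam, ∃ mm, e < mm ∧ mm < N ∧ g'^[m] z = g^[mm] r
    · obtain ⟨m, hmlam, mm, hmm1, hmm2, hmeq⟩ := hB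
      have hreach : g'^[m + (N - mm)] z = r := by
        have e1 : m + (N - mm) = (N - mm) + m := by omega
        rw [e1, Function.iterate_add_apply, hmeq, h.btr mm hmm1 hmm2 (N - mm) le_rfl]
        have e2 : mm + (N - mm) = N := by omega
        rw [e2, h.gN]
      have hlam_le : lam ≤ m + (N - mm) := by
        apply lev_le_of_per
        rw [hreach]
        exact h.rmem'
      have hmid : ∀ s, 0 < s → s < N - mm → g'^[m + s] z ∉ periodicPts g' := by
        intro s hs1 hs2
        have e3 : g'^[m + s] z = g^[mm + s] r := by
          have e4 : m + s = s + m := by omega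
          rw [e4, Function.iterate_add_apply, hmeq, h.btr mm hmm1 hmm2 s (by omega)]
        rw [e3]
        exact h.bnonper' (mm + s) (by omega) (by omega)
      have hlam_eq : lam = m + (N - mm) := by
        by_contra hne
        have hlt : lam < m + (N - mm) := by omega
        have hs : lam = m + (lam - m) := by omega
        have := hmid (lam - m) (by omega) (by omega)
        rw [← hs] at this
        exact this (lev_spec g' z)
      rw [hlam_eq]
      exact hreach
    · exfalso
      push_neg at hB
      have hpre_ne_x : ∀ i < lam, g'^[i] z ≠ x := by
        intro i hi hc
        have : g'^[i] z ∈ periodicPts g' := by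
          rw [hc, ← h.hx]
          exact h.zper' e le_rfl
        exact not_per_of_lt_lev (hlam ▸ hi) this
      have htr : ∀ i ≤ lam, g'^[i] z = g^[i] z := by
        intro i hi
        exact trace_lt g x v (fun j hj => hpre_ne_x j (by omega))
      have hpre_nonper : ∀ i < lam, g^[i] z ∉ periodicPts g := by
        intro i hi hc
        have hper' : g^[i] z ∈ periodicPts g' := by
          apply h.per'_sup hc
          intro m hm1 hm2 hceq
          exact hB i hi m hm1 hm2 (by rw [htr i (by omega)]; exact hceq)
        rw [← htr i (by omega)] at hper'
        exact not_per_of_lt_lev (hlam ▸ hi) hper'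
      have hrho : g^[lam] z ∈ periodicPts g' := by
        rw [← htr lam le_rfl]
        exact lev_spec g' z
      rcases h.per'_sub hrho with ⟨h1, _⟩ | ⟨s, hsL, heq⟩
      · have : lev g z = lam := lev_eq_iff.mpr ⟨h1, hpre_nonper⟩
        have := hmaxg z
        omega
      · have hlev2 : lev g z = lam + (L - s) := by
          rw [lev_eq_iff]
          constructor
          · have e5 : lam + (L - s) = (L - s) + lam := by omega
            rw [e5, Function.iterate_add_apply, heq, ← Function.iterate_add_apply]
            have e6 : L - s + s = L := by omega
            rw [e6, h.hr]
            exact h.rper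
          · intro m hm
            rcases Nat.lt_or_ge m lam with hc | hc
            · exact hpre_nonper m hc
            · have e7 : g^[m] z = g^[s + (m - lam)] v := by
                have e8 : m = (m - lam) + lam := by omega
                rw [e8, Function.iterate_add_apply, heq, ← Function.iterate_add_apply]
                congr 1
                omega
              rw [e7]
              exact h.tail_nonper _ (by omega)
        have := hmaxg z
        omega

end CR

end CycRed2

section F1sec
variable [Fintype V] [DecidableEq V] {k : ℕ}

lemma per_orbit_back {f : V → V} {z : V} (hz : z ∈ periodicPts f) (M : ℕ) :
    ∃ M', z = f^[M'] (f^[M] z) := by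
  have hpos := minimalPeriod_pos_of_mem_periodicPts hz
  refine ⟨minimalPeriod f z * (M+1) - M, ?_⟩
  have h1 : IsPeriodicPt f (minimalPeriod f z * (M+1)) z :=
    Function.IsPeriodicPt.mul_const (iterate_minimalPeriod) _
  have hge : M ≤ minimalPeriod f z * (M+1) := by
    have : M + 1 ≤ minimalPeriod f z * (M+1) := Nat.le_mul_of_pos_left _ hpos
    omega
  rw [← Function.iterate_add_apply]
  have e1 : minimalPeriod f z * (M+1) - M + M = minimalPeriod f z * (M+1) := by omega
  rw [e1]
  exact h1.symm

lemma mp_eq_of_trace {f f' : V → V} {z : V} (hz : z ∈ periodicPts f)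
    (htr : ∀ i, f'^[i] z = f^[i] z) : minimalPeriod f' z = minimalPeriod f z := by
  have hz' : z ∈ periodicPts f' := by
    obtain ⟨t, ht, htp⟩ := hz
    exact ⟨t, ht, by show f'^[t] z = z; rw [htr]; exact htp⟩
  apply Nat.dvd_antisymm
  · exact Function.IsPeriodicPt.minimalPeriod_dvd
      (by show f'^[minimalPeriod f z] z = z; rw [htr]; exact iterate_minimalPeriod)
  · exact Function.IsPeriodicPt.minimalPeriod_dvd
      (by show f^[minimalPeriod f' z] z = z; rw [← htr]; exact iterate_minimalPeriod)

variable (E : V → Fin k → V)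

noncomputable def rOf (σ : V → Fin k) (v : V) : V := (gfun E σ)^[maxLev (gfun E σ)] v
noncomputable def NOf (σ : V → Fin k) (v : V) : ℕ :=
  minimalPeriod (gfun E σ) (rOf E σ v)
noncomputable def xsOf (σ : V → Fin k) (v : V) : V :=
  (gfun E σ)^[NOf E σ v - 1 - maxLev (gfun E σ)] (rOf E σ v)

variable {E}

/-- F1: either some section is good, or all in-edges of a max-level vertex v
come from the distinguished cycle vertex xsOf. -/
lemma F1 (σ : V → Fin k) (hext : Ext E σ) (v : V)
    (hv : lev (gfun E σ) v = maxLev (gfun E σ)) (hL : 1 ≤ maxLev (gfun E σ))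
    (hse : ∃ x j, E x j = v) :
    (∃ σ₁, Good E σ₁) ∨
    (maxLev (gfun E σ) + 1 ≤ NOf E σ v ∧
      ∀ x : V, (∃ j, E x j = v) → x = xsOf E σ v) := by
  by_cases hgood : ∃ σ₁, Good E σ₁
  · exact Or.inl hgood
  set g := gfun E σ with hg
  set L := maxLev g with hLdef
  set r := rOf E σ v with hrdef
  set N := NOf E σ v with hNdef
  have hrv : g^[L] v = r := rfl
  have hNr : minimalPeriod g r = N := rfl
  have hrper : r ∈ periodicPts g := by
    have h1 := lev_spec g v
    rwa [hv, hrv] at h1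
  have hNpos : 0 < N := hNr ▸ minimalPeriod_pos_of_mem_periodicPts hrper
  have classify : ∀ x : V, (∃ j, E x j = v) → L + 1 ≤ N ∧ x = xsOf E σ v := by
    intro x ⟨j, hj⟩
    by_cases hA : ∃ t, t < L ∧ g^[t] v = x
    · -- redirect x to v creates a new cycle : contradiction with max1
      exfalso
      obtain ⟨t, htL, hgt⟩ := hA
      set σ' := Function.update σ x j with hσ'
      have hgf : gfun E σ' = Function.update g x v := by
        rw [hσ', gfun_update, hj]
      have hxnp : x ∉ periodicPts g := by
        rw [← hgt]
        exact not_per_of_lt_lev (by omega)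
      have hsub : periodicPts g ⊆ periodicPts (Function.update g x v) :=
        per_sub_per_update hxnp
      have hxin : x ∈ periodicPts (Function.update g x v) :=
        new_per_update ⟨t, hgt⟩
      have hlt : NCyc g < NCyc (Function.update g x v) := by
        apply Set.ncard_lt_ncard
        · exact ⟨hsub, fun hss => hxnp (hss hxin)⟩
        · exact Set.toFinite _
      have hthis := hext.max1 σ'
      rw [hgf, ← hg] at hthis
      omega
    · by_cases hB : ∃ e, e < N ∧ g^[e] r = x
      · obtain ⟨e, heN, hex⟩ := hB
        have hcr : CR g v r x L N e :=
          ⟨hL, hv, hrv, hNr, heN, hex⟩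
        set σ' := Function.update σ x j with hσ'
        have hgf : gfun E σ' = Function.update g x v := by
          rw [hσ', gfun_update, hj]
        have hnc := hcr.ncards
        have hm1 := hext.max1 σ'
        rw [hgf, ← hg] at hm1
        have hLle : L ≤ N - 1 - e := by omega
        rcases Nat.lt_or_ge L (N - 1 - e) with hstrict | hge
        · exfalso
          have hmaxz : ∀ z, lev g z ≤ L := by
            intro z; rw [hLdef]; exact lev_le_maxLev g z
          obtain ⟨h1, h2⟩ := hcr.strict_good hmaxz hstrict
          refine hgood ⟨σ', ?_⟩
          apply goodify (r := r) (L := L)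
          · rw [hgf]; exact h1
          · rw [hgf]; exact h2
        · have heeq : e = N - 1 - L := by omega
          have hL1N : L + 1 ≤ N := by omega
          refine ⟨hL1N, ?_⟩
          rw [xsOf, ← hNdef, ← hrdef, ← hLdef, ← hg, ← heeq, hex]
      · -- x not on the orbit of v at all
        exfalso
        push_neg at hA
        push_neg at hB
        have hxo : ∀ i, g^[i] v ≠ x := by
          intro i hc
          rcases Nat.lt_or_ge i L with hiL | hiL
          · exact hA i hiL hc
          · set D := i - L with hD
            have e1 : g^[i] v = g^[D % N] r := by
              have e2 : i = D + L := by omega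
              rw [e2, Function.iterate_add_apply, hrv]
              have e3 := iterate_cycle_mod (f := g) r D
              rw [hNr] at e3
              exact e3
            exact hB (D % N) (Nat.mod_lt _ hNpos) (by rw [← e1, hc])
        have hmaxz : ∀ z, lev g z ≤ L := by
          intro z; rw [hLdef]; exact lev_le_maxLev g z
        obtain ⟨hdrain, hlx⟩ := update_lev_far g x v L hxo hv hmaxz
        set σ' := Function.update σ x j with hσ'
        have hgf : gfun E σ' = Function.update g x v := by
          rw [hσ', gfun_update, hj]
        have hm1 := hext.max1 σ'
        rw [hgf, ← hg] at hm1
        rcases Nat.lt_or_ge (NCyc (Function.update g x v)) (NCyc g) with hlt | hge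
        · refine hgood ⟨σ', ?_⟩
          apply goodify (r := g^[L] v) (L := L)
          · exact ⟨x, by rw [hgf, hlx]; omega⟩
          · rw [hgf]; exact hdrain
        · have heq : NCyc (gfun E σ') = NCyc (gfun E σ) := by
            rw [hgf, ← hg]; omega
          have hm2 := hext.max2 σ' heq
          have hm2' : maxLev (gfun E σ') ≤ L := by
            rw [hLdef, hg]; exact hm2
          have hbig : L + 1 ≤ maxLev (gfun E σ') := by
            rw [hgf, ← hlx]
            exact lev_le_maxLev _ _
          omega
  obtain ⟨x₀, j₀, hx₀⟩ := hse
  exact Or.inr ⟨(classify x₀ ⟨j₀, hx₀⟩).1, fun x hx => (classify x hx).2⟩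

end F1sec

section F2sec
variable [Fintype V] [DecidableEq V] {k : ℕ} {E : V → Fin k → V}

lemma iter_pre_inj [Fintype V] {g : V → V} {v : V} {i j : ℕ} (hij : i < j)
    (hj : j ≤ lev g v) (he : g^[i] v = g^[j] v) : False := by
  have hper : g^[i] v ∈ periodicPts g := by
    refine ⟨j - i, by omega, ?_⟩
    show g^[j-i] (g^[i] v) = g^[i] v
    rw [← Function.iterate_add_apply]
    have e1 : j - i + i = j := by omega
    rw [e1, he]
  exact not_per_of_lt_lev (show i < lev g v by omega) hper

/-- F2: either some section is good, or the tail vertex just before the root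
is a bunch pointing at the root. -/
lemma F2 (σ : V → Fin k) (hext : Ext E σ) (v : V)
    (hv : lev (gfun E σ) v = maxLev (gfun E σ)) (hL : 1 ≤ maxLev (gfun E σ))
    (hse : ∃ x j, E x j = v)
    (hin : ∃ jx, E (xsOf E σ v) jx = v) :
    (∃ σ₁, Good E σ₁) ∨
    (∀ j : Fin k, E ((gfun E σ)^[maxLev (gfun E σ) - 1] v) j = rOf E σ v) := by
  by_cases hgood : ∃ σ₁, Good E σ₁
  · exact Or.inl hgood
  right
  set g := gfun E σ with hg
  set L := maxLev g with hLdef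
  set r := rOf E σ v with hrdef
  set N := NOf E σ v with hNdef
  have hrv : g^[L] v = r := rfl
  have hNr : minimalPeriod g r = N := rfl
  have hrper : r ∈ periodicPts g := by
    have h1 := lev_spec g v
    rwa [hv, hrv] at h1
  have hNpos : 0 < N := hNr ▸ minimalPeriod_pos_of_mem_periodicPts hrper
  set w := g^[L-1] v with hwdef
  intro j
  by_contra hz0
  set z := E w j with hzdef
  set σ'' := Function.update σ w j with hσ''
  have hgf : gfun E σ'' = Function.update g w z := by
    rw [hσ'']
    exact gfun_update E σ w j
  have hwnp : w ∉ periodicPts g := by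
    rw [hwdef]
    exact not_per_of_lt_lev (show L - 1 < lev g v by omega)
  by_cases hhit : ∃ i, g^[i] z = w
  · exfalso
    have hsub := per_sub_per_update (t := z) hwnp
    have hwin : w ∈ periodicPts (Function.update g w z) := new_per_update hhit
    have hlt : NCyc g < NCyc (Function.update g w z) :=
      Set.ncard_lt_ncard ⟨hsub, fun hss => hwnp (hss hwin)⟩ (Set.toFinite _)
    have hm1 := hext.max1 σ''
    rw [hgf, ← hg] at hm1
    omega
  push_neg at hhit
  have hpereq : periodicPts (Function.update g w z) = periodicPts g :=
    subset_antisymm (per_update_sub hhit) (per_sub_per_update hwnp)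
  have hNCeq : NCyc (gfun E σ'') = NCyc (gfun E σ) := by
    rw [hgf, ← hg]
    simp only [NCyc]
    rw [hpereq]
  have hm2 := hext.max2 σ'' hNCeq
  have hml'' : maxLev (gfun E σ'') ≤ L := hm2
  -- traces
  have htrv : ∀ i, i ≤ L - 1 → (Function.update g w z)^[i] v = g^[i] v := by
    intro i
    induction i using Nat.strong_induction_on with
    | _ i ih =>
      intro hi
      apply trace_lt
      intro j2 hj2 hc
      rw [ih j2 hj2 (by omega)] at hc
      rw [hwdef] at hc
      exact iter_pre_inj (show j2 < L - 1 by omega) (show L - 1 ≤ lev g v by omega) hc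
  have hwL : (Function.update g w z)^[L-1] v = w := by
    rw [htrv (L-1) le_rfl, ← hwdef]
  have htrz : ∀ s, (Function.update g w z)^[s] z = g^[s] z := trace_all g w z hhit
  have hstep : ∀ s, (Function.update g w z)^[L + s] v = g^[s] z := by
    intro s
    have e1 : L + s = (s + 1) + (L-1) := by omega
    rw [e1, Function.iterate_add_apply, hwL, Function.iterate_succ_apply]
    have e2 : Function.update g w z w = z := by simp
    rw [e2, htrz]
  have hlev''v0 : lev (Function.update g w z) v = L + lev g z := by
    rw [lev_eq_iff]
    constructor
    · rw [hstep, hpereq]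
      exact lev_spec g z
    · intro m hm
      rcases Nat.lt_or_ge m L with hc | hc
      · rw [htrv m (by omega), hpereq]
        exact not_per_of_lt_lev (show m < lev g v by omega)
      · have e3 : m = L + (m - L) := by omega
        rw [e3, hstep, hpereq]
        exact not_per_of_lt_lev (show m - L < lev g z by omega)
  have hlevz : lev g z = 0 := by
    have h1 : lev (Function.update g w z) v ≤ maxLev (gfun E σ'') := by
      rw [hgf]
      exact lev_le_maxLev _ _
    omega
  have hzper : z ∈ periodicPts g := by rwa [← lev_eq_zero_iff]
  have hlev''v : lev (Function.update g w z) v = L := by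
    rw [hlev''v0, hlevz]
    omega
  have hml''eq : maxLev (gfun E σ'') = L := by
    refine le_antisymm hml'' ?_
    rw [hgf, ← hlev''v]
    exact lev_le_maxLev _ _
  have hext'' : Ext E σ'' := by
    constructor
    · intro σ₁
      rw [hNCeq]
      exact hext.max1 σ₁
    · intro σ₁ h1
      rw [hNCeq] at h1
      exact le_trans (hext.max2 σ₁ h1) (le_of_eq hml''eq.symm)
  have hv'' : lev (gfun E σ'') v = maxLev (gfun E σ'') := by
    rw [hml''eq, hgf]
    exact hlev''v
  have hL'' : 1 ≤ maxLev (gfun E σ'') := by rw [hml''eq]; exact hL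
  rcases F1 σ'' hext'' v hv'' hL'' hse with hgood' | ⟨hN'', hall⟩
  · exact hgood hgood'
  have hxs := hall (xsOf E σ v) hin
  -- identify the quantities of σ''
  have hr'' : rOf E σ'' v = z := by
    show (gfun E σ'')^[maxLev (gfun E σ'')] v = z
    rw [hml''eq, hgf]
    have := hstep 0
    simpa using this
  have hN''z : NOf E σ'' v = minimalPeriod g z := by
    show minimalPeriod (gfun E σ'') (rOf E σ'' v) = _
    rw [hr'', hgf]
    exact mp_eq_of_trace hzper htrz
  set Mz := minimalPeriod g z with hMz
  have hxs2 : xsOf E σ'' v = g^[Mz - 1 - L] z := by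
    show (gfun E σ'')^[NOf E σ'' v - 1 - maxLev (gfun E σ'')] (rOf E σ'' v) = _
    rw [hr'', hN''z, hml''eq, hgf, htrz, hMz]
  set a := N - 1 - L with ha
  have hxseq : xsOf E σ v = g^[a] r := rfl
  have hxs3 : g^[a] r = g^[Mz - 1 - L] z := by
    rw [← hxseq, hxs, hxs2]
  obtain ⟨M', hM'⟩ := per_orbit_back hzper (Mz - 1 - L)
  have h5 : z = g^[M' + a] r := by
    calc z = g^[M'] (g^[Mz - 1 - L] z) := hM'
    _ = g^[M'] (g^[a] r) := by rw [← hxs3]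
    _ = g^[M' + a] r := by rw [← Function.iterate_add_apply]
  have h6 : g^[M' + a] r = g^[(M' + a) % N] r := by
    have := iterate_cycle_mod (f := g) r (M' + a)
    rwa [hNr] at this
  have hzc : z = g^[(M' + a) % N] r := h5.trans h6
  set m₀ := (M' + a) % N with hm₀
  have hm₀N : m₀ < N := Nat.mod_lt _ hNpos
  have hMzN : Mz = N := by
    rw [hMz, hzc, mp_iterate hrper, hNr]
  have hfin : g^[a] r = g^[(a + m₀) % N] r := by
    calc g^[a] r = g^[Mz - 1 - L] z := hxs3
    _ = g^[a] z := by rw [hMzN, ← ha]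
    _ = g^[a] (g^[m₀] r) := by rw [← hzc]
    _ = g^[a + m₀] r := by rw [← Function.iterate_add_apply]
    _ = g^[(a + m₀) % N] r := by
        have := iterate_cycle_mod (f := g) r (a + m₀)
        rwa [hNr] at this
  have haN : a < N := by omega
  have hidx : a = (a + m₀) % N := by
    apply cycle_iterate_injOn (f := g) (r := r) ?_ ?_ hfin
    · rwa [hNr]
    · rw [hNr]
      exact Nat.mod_lt _ hNpos
  have hm₀0 : m₀ = 0 := by
    have h7 : (a + m₀) % N = a := hidx.symm
    rcases Nat.lt_or_ge (a + m₀) N with hc | hc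
    · rw [Nat.mod_eq_of_lt hc] at h7
      omega
    · have h8 : (a + m₀) % N = (a + m₀ - N) % N := Nat.mod_eq_sub_mod hc
      have h9 : a + m₀ - N < N := by omega
      rw [h8, Nat.mod_eq_of_lt h9] at h7
      omega
  have hzr2 : z = r := by
    rw [hzc, hm₀0]
    rfl
  exact hz0 hzr2

end F2sec

section Assembly
variable [Fintype V] [DecidableEq V] {k : ℕ} {E : V → Fin k → V}

lemma in_edge_exists (hk : 0 < k) (hsc : ∀ u v : V, ∃ w : List (Fin k), w.foldl E u = v)
    (v : V) : ∃ x j, E x j = v := by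
  obtain ⟨w, hw⟩ := hsc (E v ⟨0, hk⟩) v
  rcases List.eq_nil_or_concat w with rfl | ⟨w', b, rfl⟩
  · exact ⟨v, ⟨0, hk⟩, by simpa using hw⟩
  · rw [List.concat_eq_append, List.foldl_append] at hw
    exact ⟨_, b, by simpa using hw⟩

lemma perm_good (σ : V → Fin k) (hperm : maxLev (gfun E σ) = 0)
    (htwo : ∃ wv p q : V, p ≠ q ∧ (∃ j, E p j = wv) ∧ (∃ j', E q j' = wv)) :
    ∃ σ₁, Good E σ₁ := by
  set g := gfun E σ with hg
  have hallper : ∀ y, y ∈ periodicPts g := by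
    intro y
    rw [← lev_eq_zero_iff]
    have h1 := lev_le_maxLev g y
    omega
  have hinj : Function.Injective g := by
    intro a b hab
    obtain ⟨ma, hma, hpa⟩ := hallper a
    obtain ⟨mb, hmb, hpb⟩ := hallper b
    have h1 : g^[ma*mb] a = a := hpa.mul_const mb
    have h2 : g^[ma*mb] b = b := by rw [Nat.mul_comm]; exact hpb.mul_const ma
    have hpos : 0 < ma * mb := Nat.mul_pos hma hmb
    obtain ⟨c, hc⟩ : ∃ c, ma * mb = c + 1 := ⟨ma*mb - 1, by omega⟩
    rw [hc, Function.iterate_succ_apply, hab] at h1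
    rw [hc, Function.iterate_succ_apply] at h2
    exact h1.symm.trans h2
  obtain ⟨wv, p, q, hpq, ⟨jp, hjp⟩, ⟨jq, hjq⟩⟩ := htwo
  have hex : ∃ p' j', E p' j' = wv ∧ g p' ≠ wv := by
    by_cases hc : g p = wv
    · refine ⟨q, jq, hjq, fun hcq => hpq (hinj (hc.trans hcq.symm))⟩
    · exact ⟨p, jp, hjp, hc⟩
  obtain ⟨p', j', hj', hgp'⟩ := hex
  set σ' := Function.update σ p' j' with hσ'
  have hgf : gfun E σ' = Function.update g p' wv := by
    rw [hσ', gfun_update, hj']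
  set t := g p' with ht
  have hrange : ∀ y, Function.update g p' wv y ≠ t := by
    intro y hy
    by_cases hc : y = p'
    · subst hc
      rw [Function.update_self] at hy
      exact hgp' hy.symm
    · rw [Function.update_of_ne hc] at hy
      exact hc (hinj hy)
  have htnp : t ∉ periodicPts (Function.update g p' wv) := by
    rintro ⟨m, hm, hmp⟩
    obtain ⟨c, hc⟩ : ∃ c, m = c + 1 := ⟨m - 1, by omega⟩
    have : (Function.update g p' wv)^[m] t = t := hmp
    rw [hc, Function.iterate_succ_apply'] at this
    exact hrange _ this
  have hsurj : ∀ z, z ≠ t → ∃ u, Function.update g p' wv u = z := by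
    intro z hz
    obtain ⟨u, hu⟩ := (Finite.injective_iff_surjective.mp hinj) z
    by_cases hc : u = p'
    · exfalso
      exact hz (by rw [← hu, hc, ht])
    · exact ⟨u, by rw [Function.update_of_ne hc]; exact hu⟩
  have hlevt : 1 ≤ lev (Function.update g p' wv) t := by
    have h0 : lev (Function.update g p' wv) t ≠ 0 := fun h0 =>
      htnp (lev_eq_zero_iff.mp h0)
    omega
  have hML : 1 ≤ maxLev (Function.update g p' wv) :=
    le_trans hlevt (lev_le_maxLev _ _)
  have huniq : ∀ z, lev (Function.update g p' wv) z = maxLev (Function.update g p' wv) →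
      z = t := by
    intro z hzL
    by_contra hne
    obtain ⟨u, hu⟩ := hsurj z hne
    have hz_nonper : z ∉ periodicPts (Function.update g p' wv) := by
      rw [← lev_eq_zero_iff]
      omega
    have hu_nonper : u ∉ periodicPts (Function.update g p' wv) := by
      intro hup
      apply hz_nonper
      rw [← hu]
      have := per_iterate hup 1
      simpa using this
    have hu1 : 1 ≤ lev (Function.update g p' wv) u := by
      have h0 : lev (Function.update g p' wv) u ≠ 0 := fun h0 =>
        hu_nonper (lev_eq_zero_iff.mp h0)
      omega
    have hlevu : lev (Function.update g p' wv) (Function.update g p' wv u) =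
        lev (Function.update g p' wv) u - 1 := by
      have := lev_iterate_le (f := Function.update g p' wv) u 1 hu1
      simpa using this
    rw [hu] at hlevu
    have := lev_le_maxLev (Function.update g p' wv) u
    omega
  refine ⟨σ', ?_, ?_⟩
  · rw [hgf]
    exact hML
  · refine ⟨(Function.update g p' wv)^[maxLev (Function.update g p' wv)] t, ?_⟩
    intro z hz
    rw [hgf] at hz ⊢
    rw [huniq z hz]

/-- the key graph-theoretic dichotomy -/
lemma dance [Nonempty V] (hk : 0 < k)
    (hsc : ∀ u v : V, ∃ w : List (Fin k), w.foldl E u = v)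
    (htwo : ∃ wv p q : V, p ≠ q ∧ (∃ j, E p j = wv) ∧ (∃ j', E q j' = wv)) :
    (∃ σ, Good E σ) ∨
    (∃ b₁ b₂ rr : V, b₁ ≠ b₂ ∧ (∀ j, E b₁ j = rr) ∧ (∀ j, E b₂ j = rr)) := by
  obtain ⟨σ, hext⟩ := exists_ext E hk
  by_cases hgood : ∃ σ₁, Good E σ₁
  · exact Or.inl hgood
  rcases Nat.eq_zero_or_pos (maxLev (gfun E σ)) with hL0 | hL
  · exact absurd (perm_good σ hL0 htwo) hgood
  right
  obtain ⟨v, hv⟩ := exists_maxLev (gfun E σ)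
  have hse : ∃ x j, E x j = v := in_edge_exists hk hsc v
  rcases F1 σ hext v hv hL hse with h | ⟨hN1, hall⟩
  · exact absurd h hgood
  obtain ⟨x₀, j₀, hx₀⟩ := hse
  have hx₀eq : x₀ = xsOf E σ v := hall x₀ ⟨j₀, hx₀⟩
  have hin : ∃ jx, E (xsOf E σ v) jx = v := ⟨j₀, by rw [← hx₀eq]; exact hx₀⟩
  rcases F2 σ hext v hv hL ⟨x₀, j₀, hx₀⟩ hin with h | hbunch1
  · exact absurd h hgood
  -- now the equal-branch redirect at xs
  set g := gfun E σ with hg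
  set L := maxLev g with hLdef
  set r := rOf E σ v with hrdef
  set N := NOf E σ v with hNdef
  set e := N - 1 - L with hedef
  set xs := xsOf E σ v with hxsdef
  have hrv : g^[L] v = r := rfl
  have hNr : minimalPeriod g r = N := rfl
  have hrper : r ∈ periodicPts g := by
    have h1 := lev_spec g v
    rwa [hv, hrv] at h1
  have hNpos : 0 < N := hNr ▸ minimalPeriod_pos_of_mem_periodicPts hrper
  have hxs_eq : g^[e] r = xs := rfl
  have he : e < N := by omega
  have hcr : CR g v r xs L N e := ⟨hL, hv, hrv, hNr, he, hxs_eq⟩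
  obtain ⟨jv, hjv⟩ := hin
  set σ' := Function.update σ xs jv with hσ'
  have hgf : gfun E σ' = Function.update g xs v := by
    rw [hσ', gfun_update, hjv]
  have hNCeq : NCyc (gfun E σ') = NCyc (gfun E σ) := by
    have hnc := hcr.ncards
    rw [hgf, ← hg]
    omega
  set y₀ := g^[e+1] r with hy₀
  have hlevy : lev (Function.update g xs v) y₀ = L := by
    rw [hy₀, hcr.levy0]
    omega
  have hml' : maxLev (gfun E σ') = L := by
    refine le_antisymm (hext.max2 σ' hNCeq) ?_
    rw [hgf, ← hlevy]
    exact lev_le_maxLev _ _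
  have hv' : lev (gfun E σ') y₀ = maxLev (gfun E σ') := by
    rw [hml', hgf]
    exact hlevy
  have hext' : Ext E σ' :=
    ⟨fun σ₁ => le_trans (hext.max1 σ₁) (le_of_eq hNCeq.symm),
     fun σ₁ h1 => le_trans (hext.max2 σ₁ (h1.trans hNCeq)) (le_of_eq hml'.symm)⟩
  have hy₀edge : E xs (σ xs) = y₀ := by
    show g xs = y₀
    rw [← hxs_eq, hy₀, Function.iterate_succ_apply']
  have hse' : ∃ x j, E x j = y₀ := ⟨xs, σ xs, hy₀edge⟩
  have hL' : 1 ≤ maxLev (gfun E σ') := by rw [hml']; exact hL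
  -- identify the invariants of σ'
  have he1N : e + 1 < N := by omega
  have hr' : rOf E σ' y₀ = r := by
    show (gfun E σ')^[maxLev (gfun E σ')] y₀ = r
    rw [hml', hgf, hy₀]
    have hbtr := hcr.btr (e+1) (by omega) he1N L (by omega)
    rw [hbtr]
    have e2 : e + 1 + L = N := by omega
    rw [e2, hcr.gN]
  have hmp' : minimalPeriod (Function.update g xs v) r = N := by
    have hI : Function.IsPeriodicPt (Function.update g xs v) N r := by
      have h2 := hcr.rper'
      rwa [show e + 1 + L = N by omega] at h2
    have hle : minimalPeriod (Function.update g xs v) r ≤ N :=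
      hI.minimalPeriod_le hNpos
    have hpos : 0 < minimalPeriod (Function.update g xs v) r :=
      minimalPeriod_pos_of_mem_periodicPts hcr.rmem'
    have hnotlt : ¬ (minimalPeriod (Function.update g xs v) r < N) := by
      intro hlt
      have hq : (Function.update g xs v)^[minimalPeriod (Function.update g xs v) r] r = r :=
        iterate_minimalPeriod
      set q := minimalPeriod (Function.update g xs v) r with hqdef
      rcases Nat.lt_or_ge q (e+1) with hc | hc
      · rw [hcr.tr_r q (by omega)] at hq
        have := hcr.zinj (show q < N by omega) hNpos (by simpa using hq)
        omega
      · have e3 : q = e + 1 + (q - e - 1) := by omega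
        rw [e3, hcr.tr_after _ (by omega)] at hq
        exact hcr.tail_nonper (q - e - 1) (by omega) (hq ▸ hcr.rper)
    omega
  have hN' : NOf E σ' y₀ = N := by
    show minimalPeriod (gfun E σ') (rOf E σ' y₀) = N
    rw [hr', hgf]
    exact hmp'
  have hxs' : xsOf E σ' y₀ = xs := by
    show (gfun E σ')^[NOf E σ' y₀ - 1 - maxLev (gfun E σ')] (rOf E σ' y₀) = xs
    rw [hN', hml', hr', hgf]
    rw [show N - 1 - L = e by omega, hcr.tr_r e le_rfl]
    exact hcr.hx
  rcases F1 σ' hext' y₀ hv' hL' hse' with h | ⟨hN1', hall'⟩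
  · exact absurd h hgood
  have hin' : ∃ jx, E (xsOf E σ' y₀) jx = y₀ := ⟨σ xs, by rw [hxs']; exact hy₀edge⟩
  rcases F2 σ' hext' y₀ hv' hL' hse' hin' with h | hbunch2
  · exact absurd h hgood
  have hb2 : (gfun E σ')^[maxLev (gfun E σ') - 1] y₀ = g^[N-1] r := by
    rw [hml', hgf, hy₀]
    have hbtr := hcr.btr (e+1) (by omega) he1N (L-1) (by omega)
    rw [hbtr]
    congr 1
    omega
  refine ⟨g^[L-1] v, g^[N-1] r, r, ?_, ?_, ?_⟩
  · intro heq
    exact hcr.tail_nonper (L-1) (by omega) (heq ▸ per_iterate hcr.rper (N-1))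
  · exact hbunch1
  · intro j
    rw [← hb2]
    exact (hbunch2 j).trans hr'

end Assembly

section Clique
variable [Fintype V] [DecidableEq V] {k : ℕ} {E : V → Fin k → V}

lemma stable_of_bunches (hk : 0 < k) (b₁ b₂ rr : V)
    (h1 : ∀ j, E b₁ j = rr) (h2 : ∀ j, E b₂ j = rr) (c : V → Equiv.Perm (Fin k)) :
    Stable (dlt E c) b₁ b₂ := by
  intro u
  cases u with
  | nil =>
    refine ⟨[⟨0, hk⟩], ?_⟩
    simp only [act_nil, act_cons]
    have e1 : dlt E c b₁ ⟨0, hk⟩ = rr := h1 _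
    have e2 : dlt E c b₂ ⟨0, hk⟩ = rr := h2 _
    rw [e1, e2]
  | cons x u' =>
    refine ⟨[], ?_⟩
    simp only [act_nil, act_cons]
    have e1 : dlt E c b₁ x = rr := h1 _
    have e2 : dlt E c b₂ x = rr := h2 _
    rw [e1, e2]

variable (δ : V → Fin k → V)

def IsAnti (A : Finset V) : Prop := ∀ p ∈ A, ∀ q ∈ A, p ≠ q → ¬ Mg δ p q

variable {δ}

lemma anti_image {A : Finset V} (hA : IsAnti δ A) (u : List (Fin k)) :
    IsAnti δ (A.image (fun p => act δ p u)) ∧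
    (A.image (fun p => act δ p u)).card = A.card := by
  constructor
  · intro p' hp' q' hq' hne hmg
    obtain ⟨p, hp, rfl⟩ := Finset.mem_image.mp hp'
    obtain ⟨q, hq, rfl⟩ := Finset.mem_image.mp hq'
    have hpq : p ≠ q := fun h => hne (by rw [h])
    obtain ⟨w, hw⟩ := hmg
    exact hA p hp q hq hpq ⟨u ++ w, by rw [act_append, act_append]; exact hw⟩
  · apply Finset.card_image_of_injOn
    intro p hp q hq heq
    by_contra hne
    exact hA p hp q hq hne ⟨u, heq⟩

noncomputable def sMax (δ : V → Fin k → V) : ℕ :=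
  @Nat.findGreatest (fun m => ∃ A : Finset V, IsAnti δ A ∧ A.card = m)
    (Classical.decPred _) (Fintype.card V)

lemma card_le_sMax {A : Finset V} (hA : IsAnti δ A) : A.card ≤ sMax δ := by
  apply @Nat.le_findGreatest _ _ (Classical.decPred _)
  · exact le_trans (Finset.card_le_univ A) (le_of_eq (Finset.card_univ))
  · exact ⟨A, hA, rfl⟩

lemma sMax_witness [Nonempty V] (δ : V → Fin k → V) :
    ∃ A : Finset V, IsAnti δ A ∧ A.card = sMax δ := by
  have hsing : IsAnti δ {Classical.arbitrary V} := by
    intro p hp q hq hne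
    rw [Finset.mem_singleton] at hp hq
    exact absurd (hp.trans hq.symm) hne
  have h := @Nat.findGreatest_spec 1
    (fun m => ∃ A : Finset V, IsAnti δ A ∧ A.card = m) (Classical.decPred _)
    (Fintype.card V)
    (by have : 0 < Fintype.card V := Fintype.card_pos; omega)
    ⟨{Classical.arbitrary V}, hsing, Finset.card_singleton _⟩
  exact h

/-- a Good section yields a nontrivial stable pair for a suitable coloring -/
lemma key_of_good [Nonempty V] (hk : 0 < k)
    (hsc : ∀ u v : V, ∃ w : List (Fin k), w.foldl E u = v)
    {pw qw : V} (hpqw : pw ≠ qw)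
    (σ : V → Fin k) (hgood : Good E σ) :
    ∃ c : V → Equiv.Perm (Fin k), ∃ p q : V, p ≠ q ∧ Stable (dlt E c) p q := by
  classical
  obtain ⟨hL1, rh, hrh⟩ := hgood
  set g := gfun E σ with hg
  set L := maxLev g with hLdef
  set a₀ : Fin k := ⟨0, hk⟩ with ha₀
  set c : V → Equiv.Perm (Fin k) := fun v => Equiv.swap a₀ (σ v) with hc
  set δ := dlt E c with hδ
  refine ⟨c, ?_⟩
  have hga : ∀ v, δ v a₀ = g v := by
    intro v
    show E v (Equiv.swap a₀ (σ v) a₀) = gfun E σ v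
    rw [Equiv.swap_apply_left]
    rfl
  have hrep : ∀ (m : ℕ) (p : V), act δ p (List.replicate m a₀) = g^[m] p := by
    intro m p
    exact act_replicate g a₀ hga m p
  by_cases hs : ∀ p q : V, Mg δ p q
  · exact ⟨pw, qw, hpqw, fun u => hs _ _⟩
  push_neg at hs
  obtain ⟨pp, qq, hppqq⟩ := hs
  have hppne : pp ≠ qq := fun h => hppqq (mg_of_eq h)
  have hs2 : 2 ≤ sMax δ := by
    have hanti : IsAnti δ {pp, qq} := by
      intro p hp q hq hne
      simp only [Finset.mem_insert, Finset.mem_singleton] at hp hq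
      rcases hp with rfl | rfl <;> rcases hq with rfl | rfl
      · exact absurd rfl hne
      · exact hppqq
      · exact fun h => hppqq (mg_symm h)
      · exact absurd rfl hne
    have := card_le_sMax hanti
    rwa [Finset.card_pair hppne] at this
  obtain ⟨A₀, hA₀, hcard₀⟩ := sMax_witness δ
  obtain ⟨p₀, hp₀⟩ := exists_maxLev g
  have hA₀ne : A₀.Nonempty := by
    rw [← Finset.card_pos, hcard₀]
    omega
  obtain ⟨x₀, hx₀⟩ := hA₀ne
  obtain ⟨u₀, hu₀⟩ := dlt_reach E c hsc x₀ p₀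
  set A := A₀.image (fun p => act δ p u₀) with hA
  obtain ⟨hAanti, hAcard⟩ := anti_image hA₀ u₀
  rw [hcard₀] at hAcard
  have hp₀A : p₀ ∈ A := Finset.mem_image.mpr ⟨x₀, hx₀, hu₀⟩
  have hlow : ∀ x ∈ A, x ≠ p₀ → lev g x < L := by
    intro x hx hne
    by_contra hge
    push_neg at hge
    have hxL : lev g x = L := le_antisymm (lev_le_maxLev g x) hge
    have hmg : Mg δ x p₀ :=
      ⟨List.replicate L a₀, by rw [hrep, hrep, hrh x hxL, hrh p₀ hp₀]⟩
    exact hAanti x hx p₀ hp₀A hne hmg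
  set D := A.image (fun p => act δ p (List.replicate (L-1) a₀)) with hD
  obtain ⟨hDanti, hDcard⟩ := anti_image hAanti (List.replicate (L-1) a₀)
  rw [hAcard] at hDcard
  set qv := g^[L-1] p₀ with hqv
  have hqvD : qv ∈ D := Finset.mem_image.mpr ⟨p₀, hp₀A, by rw [hrep]⟩
  have hqv_lev : lev g qv = 1 := by
    rw [hqv, lev_iterate_le p₀ (L-1) (by omega)]
    omega
  have hqv_nonper : qv ∉ periodicPts g := by
    rw [← lev_eq_zero_iff]
    omega
  have hDper : ∀ y ∈ D, y ≠ qv → y ∈ periodicPts g := by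
    intro y hy hne
    obtain ⟨x, hx, rfl⟩ := Finset.mem_image.mp hy
    rw [hrep]
    by_cases hxp : x = p₀
    · exfalso
      apply hne
      rw [hrep, hxp, ← hqv]
    · have := hlow x hx hxp
      exact per_of_lev_le (by omega)
  set T := Nat.factorial (Fintype.card V) with hT
  have hTpos : 0 < T := Nat.factorial_pos _
  have hfix : ∀ y ∈ periodicPts g, act δ y (List.replicate T a₀) = y := by
    intro y hy
    rw [hrep]
    exact per_fix_factorial hy
  set qv' := g^[T] qv with hqv'
  have hqv'per : qv' ∈ periodicPts g := by
    rw [hqv']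
    exact per_of_lev_le (by omega)
  have hqvne : qv ≠ qv' := fun hceq => hqv_nonper (hceq ▸ hqv'per)
  set D' := D.image (fun p => act δ p (List.replicate T a₀)) with hD'
  obtain ⟨hD'anti, hD'card⟩ := anti_image hDanti (List.replicate T a₀)
  rw [hDcard] at hD'card
  have hqv'D' : qv' ∈ D' := Finset.mem_image.mpr ⟨qv, hqvD, by rw [hrep]⟩
  have hsub : D.erase qv ⊆ D' := by
    intro y hy
    have hyD := Finset.mem_of_mem_erase hy
    have hyne := Finset.ne_of_mem_erase hy
    exact Finset.mem_image.mpr ⟨y, hyD, hfix y (hDper y hyD hyne)⟩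
  have hqv'notin : qv' ∉ D.erase qv := by
    intro hmem
    have hDsub : D' ⊆ D.erase qv := by
      intro y hy
      obtain ⟨x, hx, rfl⟩ := Finset.mem_image.mp hy
      by_cases hxq : x = qv
      · subst hxq
        rw [hrep, ← hqv']
        exact hmem
      · rw [hfix x (hDper x hx hxq)]
        exact Finset.mem_erase.mpr ⟨hxq, hx⟩
    have h1 : D'.card ≤ (D.erase qv).card := Finset.card_le_card hDsub
    rw [hD'card, Finset.card_erase_of_mem hqvD, hDcard] at h1
    omega
  -- the stable pair
  refine ⟨qv, qv', hqvne, ?_⟩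
  intro u
  by_contra hnmg
  have hquD' : act δ qv' u ∉ D.image (fun p => act δ p u) := by
    intro hmem
    obtain ⟨y, hyD, hye⟩ := Finset.mem_image.mp hmem
    by_cases hyq : y = qv
    · subst hyq
      exact hnmg (mg_of_eq hye)
    · have hyD' : y ∈ D' := hsub (Finset.mem_erase.mpr ⟨hyq, hyD⟩)
      have hyne' : y ≠ qv' := fun h =>
        hqv'notin (h ▸ Finset.mem_erase.mpr ⟨hyq, hyD⟩)
      exact hD'anti y hyD' qv' hqv'D' hyne' ⟨u, hye⟩
  set F := insert (act δ qv' u) (D.image (fun p => act δ p u)) with hF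
  obtain ⟨hDu_anti, hDu_card⟩ := anti_image hDanti u
  have hFanti : IsAnti δ F := by
    intro p hp q hq hne hmg
    rw [hF, Finset.mem_insert] at hp hq
    rcases hp with rfl | hp
    · rcases hq with rfl | hq
      · exact hne rfl
      · obtain ⟨y, hyD, rfl⟩ := Finset.mem_image.mp hq
        obtain ⟨w, hw⟩ := hmg
        by_cases hyq : y = qv
        · subst hyq
          exact hnmg (mg_symm ⟨w, hw⟩)
        · have hyD' : y ∈ D' := hsub (Finset.mem_erase.mpr ⟨hyq, hyD⟩)
          have hyne' : qv' ≠ y := fun h =>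
            hqv'notin (h ▸ Finset.mem_erase.mpr ⟨hyq, hyD⟩)
          exact hD'anti qv' hqv'D' y hyD' hyne' ⟨u ++ w, by
            rw [act_append, act_append]; exact hw⟩
    · rcases hq with rfl | hq
      · obtain ⟨y, hyD, rfl⟩ := Finset.mem_image.mp hp
        obtain ⟨w, hw⟩ := hmg
        by_cases hyq : y = qv
        · subst hyq
          exact hnmg ⟨w, hw⟩
        · have hyD' : y ∈ D' := hsub (Finset.mem_erase.mpr ⟨hyq, hyD⟩)
          have hyne' : y ≠ qv' := fun h =>
            hqv'notin (h ▸ Finset.mem_erase.mpr ⟨hyq, hyD⟩)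
          exact hD'anti y hyD' qv' hqv'D' hyne' ⟨u ++ w, by
            rw [act_append, act_append]; exact hw⟩
      · exact hDu_anti p hp q hq hne hmg
  have hFcard : F.card = sMax δ + 1 := by
    rw [hF, Finset.card_insert_of_notMem hquD', hDu_card, hDcard]
  have := card_le_sMax hFanti
  omega

/-- THE KEY LEMMA: a nontrivial stable pair exists for some coloring -/
lemma key_lemma [Nonempty V] (hk : 0 < k)
    (hsc : ∀ u v : V, ∃ w : List (Fin k), w.foldl E u = v)
    (htwo : ∃ wv p q : V, p ≠ q ∧ (∃ j, E p j = wv) ∧ (∃ j', E q j' = wv))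
    {pw qw : V} (hpqw : pw ≠ qw) :
    ∃ c : V → Equiv.Perm (Fin k), ∃ p q : V, p ≠ q ∧ Stable (dlt E c) p q := by
  rcases dance hk hsc htwo with ⟨σ, hgood⟩ | ⟨b₁, b₂, rr, hne, h1, h2⟩
  · exact key_of_good hk hsc hpqw σ hgood
  · exact ⟨fun _ => 1, b₁, b₂, hne, stable_of_bunches hk b₁ b₂ rr h1 h2 _⟩

end Clique

section TwoSources
variable [Fintype V] [DecidableEq V] {k ℓ : ℕ} {E : V → Fin k → V}

lemma two_sources (hk : 0 < k) (hℓ : 0 < ℓ)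
    (hsc : ∀ u v : V, ∃ w : List (Fin k), w.foldl E u = v)
    (P : V → ZMod ℓ) (hP : ∀ v j, P (E v j) = P v + 1)
    (hgcd : ∀ d : ℕ,
      (∀ m : ℕ, 0 < m →
        (∃ (v : V) (w : List (Fin k)), w.length = m ∧ w.foldl E v = v) → d ∣ m) →
      d ∣ ℓ)
    {p q : V} (hpq : p ≠ q) (hPeq : P p = P q) :
    ∃ wv pp qq : V, pp ≠ qq ∧ (∃ j, E pp j = wv) ∧ (∃ j', E qq j' = wv) := by
  by_contra hcon
  push_neg at hcon
  have hsrc : ∀ wv : V, ∃ pp j, E pp j = wv := fun wv => in_edge_exists hk hsc wv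
  choose s js hjs using hsrc
  have huniq' : ∀ (pp : V) (j : Fin k), s (E pp j) = pp := by
    intro pp j
    by_contra h
    exact hcon (E pp j) pp (s (E pp j)) (fun he => h he.symm) ⟨j, rfl⟩ (js (E pp j)) (hjs (E pp j))
  have hkey : ∀ (w : List (Fin k)) (u vv : V), w.foldl E u = vv → u = s^[w.length] vv := by
    intro w
    induction w with
    | nil =>
      intro u vv h
      simpa using h
    | cons j w ih =>
      intro u vv h
      have h1 : E u j = s^[w.length] vv := ih (E u j) vv h
      have h2 : s (E u j) = u := huniq' u j
      rw [List.length_cons, Function.iterate_succ_apply', ← h1, h2]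
  have hper : ∀ vv : V, vv ∈ periodicPts s := by
    intro vv
    obtain ⟨w, hw⟩ := hsc (E vv ⟨0, hk⟩) vv
    have h3 : ((⟨0, hk⟩ : Fin k) :: w).foldl E vv = vv := hw
    have h4 := hkey _ vv vv h3
    rw [List.length_cons] at h4
    exact ⟨w.length + 1, by omega, h4.symm⟩
  have hn : ∀ vv : V, minimalPeriod s vv = Fintype.card V := by
    intro vv
    have hle := mp_le_card (hper vv)
    have hpos := minimalPeriod_pos_of_mem_periodicPts (hper vv)
    have hsurj : ∀ u : V, ∃ i, i < minimalPeriod s vv ∧ s^[i] vv = u := by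
      intro u
      obtain ⟨w, hw⟩ := hsc u vv
      have h5 := hkey w u vv hw
      refine ⟨w.length % minimalPeriod s vv, Nat.mod_lt _ hpos, ?_⟩
      rw [← iterate_cycle_mod vv w.length]
      exact h5.symm
    have hinj2 : Fintype.card V ≤ minimalPeriod s vv := by
      have hf : Function.Surjective (fun i : Fin (minimalPeriod s vv) => s^[(i : ℕ)] vv) := by
        intro u
        obtain ⟨i, hi, he⟩ := hsurj u
        exact ⟨⟨i, hi⟩, he⟩
      have := Fintype.card_le_of_surjective _ hf
      simpa using this
    omega
  have hdvd_all : ∀ m : ℕ, 0 < m →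
      (∃ (v : V) (w : List (Fin k)), w.length = m ∧ w.foldl E v = v) →
      Fintype.card V ∣ m := by
    rintro m hm ⟨v, w, hlen, hclosed⟩
    have h6 := hkey w v v hclosed
    have hisper : IsPeriodicPt s m v := by
      show s^[m] v = v
      rw [← hlen]
      exact h6.symm
    have := hisper.minimalPeriod_dvd
    rwa [hn v] at this
  have hnl : Fintype.card V ∣ ℓ := hgcd _ hdvd_all
  obtain ⟨w, hw⟩ := hsc p q
  have hkey2 : p = s^[w.length] q := hkey w p q hw
  haveI : NeZero ℓ := ⟨hℓ.ne'⟩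
  have hlen0 : (w.length : ZMod ℓ) = 0 := by
    have h7 := act_P (δ := E) P hP w p
    have h8 : act E p w = q := hw
    rw [h8, hPeq] at h7
    have h9 : P q + 0 = P q + (w.length : ZMod ℓ) := by
      rw [add_zero]; exact h7
    exact (add_left_cancel h9).symm
  have hldvd : ℓ ∣ w.length := (ZMod.natCast_eq_zero_iff _ _).mp hlen0
  have hndvd : Fintype.card V ∣ w.length := dvd_trans hnl hldvd
  have hfix : s^[w.length] q = q := by
    obtain ⟨cc, hcc⟩ := hndvd
    have h10 : IsPeriodicPt s (Fintype.card V * cc) q := by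
      apply Function.IsPeriodicPt.mul_const
      rw [← hn q]
      exact iterate_minimalPeriod
    rw [hcc]
    exact h10
  exact hpq (hkey2.trans hfix)

end TwoSources

section Aux

universe u

theorem aux : ∀ (n : ℕ) (V : Type u) [Fintype V] [Nonempty V],
    Fintype.card V ≤ n →
    ∀ (k ℓ : ℕ), 0 < k → 0 < ℓ →
    ∀ (E : V → Fin k → V), (∀ u v : V, ∃ w : List (Fin k), w.foldl E u = v) →
    ∀ (P : V → ZMod ℓ), (∀ (v : V) (j : Fin k), P (E v j) = P v + 1) →
    (∀ d : ℕ,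
      (∀ m : ℕ, 0 < m →
        (∃ (v : V) (w : List (Fin k)), w.length = m ∧ w.foldl E v = v) → d ∣ m) →
      d ∣ ℓ) →
    ∃ c : V → Equiv.Perm (Fin k), ∀ p q : V, P p = P q → Stable (dlt E c) p q := by
  intro n
  induction n with
  | zero =>
    intro V _ _ hcard
    exfalso
    have : 0 < Fintype.card V := Fintype.card_pos
    omega
  | succ n ih =>
    intro V instF instN hcard k ℓ hk hℓ E hsc P hP hgcd
    classical
    by_cases htriv : ∀ p q : V, P p = P q → p = q
    · refine ⟨fun _ => 1, fun p q hpq => ?_⟩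
      rw [htriv p q hpq]
      exact stable_refl _
    push_neg at htriv
    obtain ⟨p₁, q₁, hP1, hne1⟩ := htriv
    have htwo := two_sources hk hℓ hsc P hP hgcd hne1 hP1
    obtain ⟨c₀, pk, qk, hpqk, hstab⟩ := key_lemma hk hsc htwo hne1
    set δ₀ := dlt E c₀ with hδ₀
    have hPδ : ∀ (v : V) (x : Fin k), P (δ₀ v x) = P v + 1 := fun v x => hP v (c₀ v x)
    let sd : Setoid V :=
      ⟨Stable δ₀, ⟨stable_refl, fun h => stable_symm h, fun h1 h2 => stable_trans h1 h2⟩⟩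
    let Q := Quotient sd
    haveI : Finite Q := Quotient.finite sd
    haveI : Fintype Q := Fintype.ofFinite Q
    haveI : Nonempty Q := ⟨Quotient.mk sd p₁⟩
    have hmk_surj : Function.Surjective (Quotient.mk sd) := fun κ => ⟨κ.out, κ.out_eq⟩
    have hmk_ninj : ¬ Function.Injective (Quotient.mk sd) := by
      intro hinj
      exact hpqk (hinj (Quotient.sound hstab))
    have hcardQ : Fintype.card Q < Fintype.card V :=
      Fintype.card_lt_of_surjective_not_injective _ hmk_surj hmk_ninj
    -- quotient automaton
    let EQ : Q → Fin k → Q := fun κ x =>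
      Quotient.liftOn κ (fun p => Quotient.mk sd (δ₀ p x))
        (fun a b hab => Quotient.sound (stable_step hab x))
    have hEQ : ∀ (p : V) (x : Fin k), EQ (Quotient.mk sd p) x = Quotient.mk sd (δ₀ p x) :=
      fun p x => rfl
    have hcomm : ∀ (w : List (Fin k)) (p : V),
        Quotient.mk sd (act δ₀ p w) = act EQ (Quotient.mk sd p) w := by
      intro w
      induction w with
      | nil => intro p; rfl
      | cons x w ihw =>
        intro p
        rw [act_cons, act_cons, ihw, hEQ]
    have hstP : ∀ a b : V, Stable δ₀ a b → P a = P b := by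
      intro a b hab
      obtain ⟨w, hw⟩ := hab []
      simp only [act_nil] at hw
      have h1 := act_P (δ := δ₀) P hPδ w a
      have h2 := act_P (δ := δ₀) P hPδ w b
      rw [hw] at h1
      rw [h1] at h2
      exact add_right_cancel h2
    let PQ : Q → ZMod ℓ := Quotient.lift P hstP
    have hPQmk : ∀ p : V, PQ (Quotient.mk sd p) = P p := fun p => rfl
    -- hypotheses for the quotient
    have hscQ : ∀ κ κ' : Q, ∃ w : List (Fin k), w.foldl EQ κ = κ' := by
      intro κ κ'
      induction κ using Quotient.inductionOn with
      | _ a =>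
      induction κ' using Quotient.inductionOn with
      | _ b =>
      obtain ⟨w, hw⟩ := dlt_reach E c₀ hsc a b
      refine ⟨w, ?_⟩
      show act EQ (Quotient.mk sd a) w = Quotient.mk sd b
      rw [← hcomm, hw]
    have hPQ : ∀ (κ : Q) (x : Fin k), PQ (EQ κ x) = PQ κ + 1 := by
      intro κ x
      induction κ using Quotient.inductionOn with
      | _ a => exact hPδ a x
    have hgcdQ : ∀ d : ℕ,
        (∀ m : ℕ, 0 < m →
          (∃ (κ : Q) (w : List (Fin k)), w.length = m ∧ w.foldl EQ κ = κ) → d ∣ m) →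
        d ∣ ℓ := by
      intro d hd
      apply hgcd d
      rintro m hm ⟨v, w, hlen, hclosed⟩
      apply hd m hm
      obtain ⟨w', hlen', hact⟩ := exists_dlt_word E c₀ w v
      refine ⟨Quotient.mk sd v, w', by rw [hlen', hlen], ?_⟩
      show act EQ (Quotient.mk sd v) w' = Quotient.mk sd v
      rw [← hcomm]
      congr 1
      rw [hact]
      exact hclosed
    obtain ⟨cQ, hcQ⟩ := ih Q (by omega) k ℓ hk hℓ EQ hscQ PQ hPQ hgcdQ
    -- combined coloring
    let c₁ : V → Equiv.Perm (Fin k) := fun p => (cQ (Quotient.mk sd p)).trans (c₀ p)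
    have hδ₁ : ∀ (p : V) (x : Fin k),
        dlt E c₁ p x = δ₀ p (cQ (Quotient.mk sd p) x) := fun p x => rfl
    have hmk₁ : ∀ (p : V) (x : Fin k),
        Quotient.mk sd (dlt E c₁ p x) = dlt EQ cQ (Quotient.mk sd p) x := fun p x => rfl
    have hcomm₁ : ∀ (w : List (Fin k)) (p : V),
        Quotient.mk sd (act (dlt E c₁) p w) = act (dlt EQ cQ) (Quotient.mk sd p) w := by
      intro w
      induction w with
      | nil => intro p; rfl
      | cons x w ihw =>
        intro p
        rw [act_cons, act_cons, ihw, hmk₁]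
    -- transfer of merging words
    have mg_transfer : ∀ (w₀ : List (Fin k)) (a b : V), Stable δ₀ a b →
        ∃ w₁, act (dlt E c₁) a w₁ = act δ₀ a w₀ ∧ act (dlt E c₁) b w₁ = act δ₀ b w₀ := by
      intro w₀
      induction w₀ with
      | nil => exact fun a b _ => ⟨[], rfl, rfl⟩
      | cons y w₀ ihw =>
        intro a b hab
        have hmkeq : Quotient.mk sd a = Quotient.mk sd b := Quotient.sound hab
        set x := (cQ (Quotient.mk sd a)).symm y with hx
        have hax : dlt E c₁ a x = δ₀ a y := by
          rw [hδ₁, hx]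
          congr 1
          exact Equiv.apply_symm_apply _ _
        have hbx : dlt E c₁ b x = δ₀ b y := by
          rw [hδ₁, hx, hmkeq]
          congr 1
          exact Equiv.apply_symm_apply _ _
        obtain ⟨w₁, h1, h2⟩ := ihw (δ₀ a y) (δ₀ b y) (stable_step hab y)
        refine ⟨x :: w₁, ?_, ?_⟩
        · rw [act_cons, act_cons, hax, h1]
        · rw [act_cons, act_cons, hbx, h2]
    have stable_mg₁ : ∀ a b : V, Stable δ₀ a b → Mg (dlt E c₁) a b := by
      intro a b hab
      obtain ⟨w₀, hw₀⟩ := hab []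
      simp only [act_nil] at hw₀
      obtain ⟨w₁, h1, h2⟩ := mg_transfer w₀ a b hab
      exact ⟨w₁, by rw [h1, h2, hw₀]⟩
    refine ⟨c₁, ?_⟩
    intro p q hPpq
    intro u
    -- quotient states after u
    have hPQu : PQ (act (dlt EQ cQ) (Quotient.mk sd p) u) =
        PQ (act (dlt EQ cQ) (Quotient.mk sd q) u) := by
      have hPQδ : ∀ (κ : Q) (x : Fin k), PQ (dlt EQ cQ κ x) = PQ κ + 1 := by
        intro κ x
        exact hPQ κ (cQ κ x)
      rw [act_P (δ := dlt EQ cQ) PQ hPQδ, act_P (δ := dlt EQ cQ) PQ hPQδ,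
        hPQmk, hPQmk, hPpq]
    have hstQ := hcQ _ _ hPQu
    obtain ⟨wQ, hwQ⟩ := hstQ []
    simp only [act_nil] at hwQ
    -- back in V : after u ++ wQ the two states are δ₀-stable
    have hmkst : Quotient.mk sd (act (dlt E c₁) p (u ++ wQ)) =
        Quotient.mk sd (act (dlt E c₁) q (u ++ wQ)) := by
      rw [hcomm₁, hcomm₁, act_append, act_append]
      exact hwQ
    have hstv : Stable δ₀ (act (dlt E c₁) p (u ++ wQ)) (act (dlt E c₁) q (u ++ wQ)) :=
      Quotient.exact hmkst
    obtain ⟨w₂, hw₂⟩ := stable_mg₁ _ _ hstv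
    refine ⟨wQ ++ w₂, ?_⟩
    have e1 : act (dlt E c₁) (act (dlt E c₁) p u) (wQ ++ w₂) =
        act (dlt E c₁) (act (dlt E c₁) p (u ++ wQ)) w₂ := by
      rw [act_append, act_append]
    have e2 : act (dlt E c₁) (act (dlt E c₁) q u) (wQ ++ w₂) =
        act (dlt E c₁) (act (dlt E c₁) q (u ++ wQ)) w₂ := by
      rw [act_append, act_append]
    rw [e1, e2, hw₂]

end Aux

section Sync
variable [Fintype V] [Nonempty V] {k ℓ : ℕ} {E : V → Fin k → V}

lemma sync_aux (c : V → Equiv.Perm (Fin k)) (P : V → ZMod ℓ)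
    (hPδ : ∀ (v : V) (x : Fin k), P (dlt E c v x) = P v + 1)
    (hc : ∀ p q : V, P p = P q → Stable (dlt E c) p q) :
    ∀ (n : ℕ) (T : Finset V), T.card ≤ n → (∀ p ∈ T, ∀ q ∈ T, P p = P q) →
    ∃ (w : List (Fin k)) (qq : V), ∀ v ∈ T, act (dlt E c) v w = qq := by
  classical
  intro n
  induction n with
  | zero =>
    intro T hT _
    rw [Nat.le_zero, Finset.card_eq_zero] at hT
    subst hT
    exact ⟨[], Classical.arbitrary V, by simp⟩
  | succ n ih =>
    intro T hT hsame
    by_cases hex : ∃ p ∈ T, ∃ q ∈ T, p ≠ q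
    · obtain ⟨p, hp, q, hq, hpq⟩ := hex
      have hst := hc p q (hsame p hp q hq)
      obtain ⟨w₀, hw₀⟩ := hst []
      simp only [act_nil] at hw₀
      set T' := T.image (fun v => act (dlt E c) v w₀) with hT'
      have hsub : T' ⊆ (T.erase q).image (fun v => act (dlt E c) v w₀) := by
        intro y hy
        obtain ⟨v, hv, rfl⟩ := Finset.mem_image.mp hy
        by_cases hvq : v = q
        · subst hvq
          exact Finset.mem_image.mpr ⟨p, Finset.mem_erase.mpr ⟨hpq, hp⟩, hw₀⟩
        · exact Finset.mem_image.mpr ⟨v, Finset.mem_erase.mpr ⟨hvq, hv⟩, rfl⟩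
      have hcard' : T'.card ≤ n := by
        have h1 := Finset.card_le_card hsub
        have h2 := Finset.card_image_le (f := fun v => act (dlt E c) v w₀) (s := T.erase q)
        have h3 := Finset.card_erase_of_mem hq
        omega
      have hsame' : ∀ p' ∈ T', ∀ q' ∈ T', P p' = P q' := by
        intro p' hp' q' hq'
        obtain ⟨a, ha, rfl⟩ := Finset.mem_image.mp hp'
        obtain ⟨b, hb, rfl⟩ := Finset.mem_image.mp hq'
        rw [act_P (δ := dlt E c) P hPδ, act_P (δ := dlt E c) P hPδ, hsame a ha b hb]
      obtain ⟨w₁, qq, hw₁⟩ := ih T' hcard' hsame'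
      refine ⟨w₀ ++ w₁, qq, fun v hv => ?_⟩
      rw [act_append]
      exact hw₁ _ (Finset.mem_image.mpr ⟨v, hv, rfl⟩)
    · push_neg at hex
      rcases T.eq_empty_or_nonempty with rfl | ⟨x, hx⟩
      · exact ⟨[], Classical.arbitrary V, by simp⟩
      · refine ⟨[], x, fun v hv => ?_⟩
        rw [act_nil]
        exact hex v hv x hx

end Sync

end RC

/-- Subset road coloring: a strongly connected digraph with all out-degrees
equal to `k` (out-arcs enumerated by `E : V → Fin k → V`), with `ℓ` the gcd of
its cycle lengths and `P : V → ZMod ℓ` the corresponding cyclic partition,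
admits an arc coloring (a permutation of the out-arc labels at each vertex)
making a subset `S` of vertices synchronizing iff `S` lies inside one part. -/
theorem stmt14 {V : Type*} [Fintype V] [Nonempty V] (k ℓ : ℕ) (hk : 0 < k)
    (hℓ : 0 < ℓ) (E : V → Fin k → V)
    (hsc : ∀ u v : V, ∃ w : List (Fin k), w.foldl E u = v)
    (P : V → ZMod ℓ) (hP : ∀ (v : V) (j : Fin k), P (E v j) = P v + 1)
    (hdvd : ∀ m : ℕ, 0 < m →
      (∃ (v : V) (w : List (Fin k)), w.length = m ∧ w.foldl E v = v) → ℓ ∣ m)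
    (hgcd : ∀ d : ℕ,
      (∀ m : ℕ, 0 < m →
        (∃ (v : V) (w : List (Fin k)), w.length = m ∧ w.foldl E v = v) → d ∣ m) →
      d ∣ ℓ)
    (S : Set V) :
    (∃ c : V → Equiv.Perm (Fin k), ∃ (w : List (Fin k)) (q : V),
        ∀ v ∈ S, w.foldl (fun p x => E p (c p x)) v = q) ↔
      ∃ i : ZMod ℓ, ∀ v ∈ S, P v = i := by
  classical
  constructor
  · rintro ⟨c, w, q, hsync⟩
    refine ⟨P q - (w.length : ZMod ℓ), fun v hv => ?_⟩
    have h1 := RC.act_P (δ := RC.dlt E c) P (fun v j => hP v (c v j)) w v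
    have h2 : RC.act (RC.dlt E c) v w = q := hsync v hv
    rw [h2] at h1
    rw [h1]
    ring
  · rintro ⟨i, hi⟩
    obtain ⟨c, hc⟩ := RC.aux (Fintype.card V) V le_rfl k ℓ hk hℓ E hsc P hP hgcd
    have hPδ : ∀ (v : V) (x : Fin k), P (RC.dlt E c v x) = P v + 1 :=
      fun v x => hP v (c v x)
    set T := (Set.toFinite S).toFinset with hT
    have hsame : ∀ p ∈ T, ∀ q ∈ T, P p = P q := by
      intro p hp q hq
      rw [hT, Set.Finite.mem_toFinset] at hp hq
      rw [hi p hp, hi q hq]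
    obtain ⟨w, qq, hw⟩ := RC.sync_aux c P hPδ hc T.card T le_rfl hsame
    refine ⟨c, w, qq, fun v hv => ?_⟩
    exact hw v (by rw [hT, Set.Finite.mem_toFinset]; exact hv)
end

section
/- Consider k partial monotonic automata each obtained from the 3-state counter gadget by deleting the failure state f_i: states {s_i, t_i}, alphabet {a₁,...,a_k}, with δ_i(s_i, a_i) = t_i, δ_i(t_i, a_j) = s_i for j > i, δ_i undefined on (s_i, a_j) for j > i, and self-loops otherwise. A word over {a₁,...,a_k} maps every s_i to t_i (with all intermediate transitions defined) only if its length is at least 2^k − 1, and the bound 2^k − 1 is attained. -/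
/-- Run of a partial automaton on a word. -/
def prun {Q A : Type*} (δ : Q → A → Option Q) : Q → List A → Option Q
  | q, [] => some q
  | q, x :: w => (δ q x).bind (fun q' => prun δ q' w)

/-- The `i`-th counter gadget with the failure state removed: states are
`Bool` (`false = sᵢ`, `true = tᵢ`), alphabet `Fin k`.
`δᵢ(sᵢ, aᵢ) = tᵢ`; for `j > i`: `δᵢ(tᵢ, aⱼ) = sᵢ` and `δᵢ(sᵢ, aⱼ)` is
undefined; all other transitions are self-loops. -/
def cdelta (k : ℕ) (i : Fin k) (b : Bool) (a : Fin k) : Option Bool :=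
  if a = i then some true
  else if i < a then (if b then some false else none)
  else some b

def Uword : ℕ → List ℕ
  | 0 => []
  | n + 1 => Uword n ++ n :: Uword n

lemma Uword_length (n : ℕ) : (Uword n).length = 2 ^ n - 1 := by
  induction n with
  | zero => simp [Uword]
  | succ n ih =>
    have h1 : 1 ≤ 2 ^ n := Nat.one_le_two_pow
    simp [Uword, ih, pow_succ]
    omega

lemma prun_append {Q A : Type*} (δ : Q → A → Option Q) (q : Q) (u v : List A) :
    prun δ q (u ++ v) = (prun δ q u).bind (fun q' => prun δ q' v) := by
  induction u generalizing q with
  | nil => simp [prun]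
  | cons x u ih =>
    simp only [List.cons_append, prun]
    cases δ q x <;> simp [ih]

lemma sum_pow_two (n : ℕ) : ∑ i ∈ Finset.range n, 2 ^ i = 2 ^ n - 1 := by
  induction n with
  | zero => simp
  | succ n ih =>
    have h1 : 1 ≤ 2 ^ n := Nat.one_le_two_pow
    rw [Finset.sum_range_succ, ih]
    omega

section
variable (k : ℕ)

lemma run_U (hk : 0 < k) (n : ℕ) (hn : n ≤ k) (i : Fin k) (b : Bool) :
    prun (cdelta k i) b ((Uword n).map (fun a => (⟨a % k, Nat.mod_lt _ hk⟩ : Fin k)))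
      = some (if (i : ℕ) < n then true else b) := by
  induction n generalizing b with
  | zero => simp [Uword, prun]
  | succ n ih =>
    have hnk : n < k := hn
    have hfin : (⟨n % k, Nat.mod_lt _ hk⟩ : Fin k) = ⟨n, hnk⟩ := Fin.ext (Nat.mod_eq_of_lt hnk)
    simp only [Uword, List.map_append, List.map_cons, prun_append, hfin]
    rw [ih (le_of_lt hnk) b]
    simp only [Option.bind_some, prun]
    rcases lt_trichotomy (i : ℕ) n with h | h | h
    · have hi : (if (i : ℕ) < n then true else b) = true := by simp [h]
      have hcd : cdelta k i true ⟨n, hnk⟩ = some false := by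
        simp [cdelta, Fin.ext_iff, Fin.lt_def, h, (Nat.ne_of_lt h).symm]
      rw [hi, hcd]
      simp only [Option.bind_some]
      rw [ih (le_of_lt hnk) false]
      simp [h]
      omega
    · have hcd : cdelta k i (if (i : ℕ) < n then true else b) ⟨n, hnk⟩ = some true := by
        simp [cdelta, Fin.ext_iff, h]
      rw [hcd]
      simp only [Option.bind_some]
      rw [ih (le_of_lt hnk) true]
      simp [h]
    · have hi : (if (i : ℕ) < n then true else b) = b := by
        have : ¬ (i : ℕ) < n := by omega
        simp [this]
      have hcd : cdelta k i b ⟨n, hnk⟩ = some b := by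
        simp [cdelta, Fin.ext_iff, Fin.lt_def, Nat.ne_of_lt h, Nat.not_lt.mpr h.le]
      rw [hi, hcd]
      simp only [Option.bind_some]
      rw [ih (le_of_lt hnk) b]
      have h1 : ¬ (i : ℕ) < n := by omega
      have h2 : ¬ (i : ℕ) < n + 1 := by omega
      simp [h1, h2]

def cval (s : Fin k → Bool) : ℕ := ∑ i : Fin k, if s i then 2 ^ (i : ℕ) else 0

lemma cval_step (s s' : Fin k → Bool) (x : Fin k)
    (h : ∀ i, cdelta k i (s i) x = some (s' i)) :
    cval k s' ≤ cval k s + 1 := by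
  have key : ∀ i : Fin k,
      (if s' i then 2 ^ (i : ℕ) else 0) + (if (i : ℕ) < (x : ℕ) then 2 ^ (i : ℕ) else 0)
        = (if s i then 2 ^ (i : ℕ) else 0)
          + (if i = x then (if s x then 0 else 2 ^ (x : ℕ)) else 0) := by
    intro i
    have hi := h i
    rcases lt_trichotomy (i : ℕ) (x : ℕ) with hc | hc | hc
    · have hne : ¬ (x = i) := by simp only [Fin.ext_iff]; omega
      have hlt : i < x := hc
      simp only [cdelta, hne, if_false, if_pos hlt] at hi
      have hne' : i ≠ x := by simp only [Ne, Fin.ext_iff]; omega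
      cases hsi : s i with
      | false => rw [hsi] at hi; simp at hi
      | true =>
        rw [hsi] at hi; simp at hi
        simp [hi, hsi, hc, hne']
    · have heq : i = x := Fin.ext hc
      subst heq
      have hi' : s' i = true := by
        simp [cdelta] at hi
        simp [hi]
      simp [hi']
      cases s i <;> simp
    · have hne : ¬ (x = i) := by simp only [Fin.ext_iff]; omega
      have hnlt : ¬ (i < x) := by simp only [Fin.lt_def]; omega
      simp only [cdelta, hne, if_false, if_neg hnlt, Option.some.injEq] at hi
      have hne' : i ≠ x := by simp only [Ne, Fin.ext_iff]; omega
      simp [hi, hne', Nat.not_lt.mpr (le_of_lt hc)]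
  have hsum : cval k s' + (∑ i : Fin k, if (i : ℕ) < (x : ℕ) then 2 ^ (i : ℕ) else 0)
      = cval k s + (∑ i : Fin k, if i = x then (if s x then 0 else 2 ^ (x : ℕ)) else 0) := by
    unfold cval
    rw [← Finset.sum_add_distrib, ← Finset.sum_add_distrib]
    exact Finset.sum_congr rfl (fun i _ => key i)
  have hC : (∑ i : Fin k, if (i : ℕ) < (x : ℕ) then 2 ^ (i : ℕ) else 0) = 2 ^ (x : ℕ) - 1 := by
    rw [Fin.sum_univ_eq_sum_range (fun i => if i < (x : ℕ) then 2 ^ i else 0) k]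
    rw [← Finset.sum_subset (Finset.range_subset_range.2 x.2.le)
      (by intro j hj hj'; simp at hj'; simp; omega)]
    rw [← sum_pow_two (x : ℕ)]
    exact Finset.sum_congr rfl (by intro j hj; simp at hj; simp [hj])
  have hD : (∑ i : Fin k, if i = x then (if s x then 0 else 2 ^ (x : ℕ)) else 0) ≤ 2 ^ (x : ℕ) := by
    rw [Finset.sum_ite_eq' Finset.univ x (fun _ => if s x then 0 else 2 ^ (x : ℕ))]
    simp
    cases s x <;> simp
  have h1 : 1 ≤ 2 ^ (x : ℕ) := Nat.one_le_two_pow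
  omega

lemma run_bound (s t : Fin k → Bool) (w : List (Fin k))
    (h : ∀ i, prun (cdelta k i) (s i) w = some (t i)) :
    cval k t ≤ cval k s + w.length := by
  induction w generalizing s with
  | nil =>
    have : s = t := funext fun i => by have := h i; simp [prun] at this; exact this
    simp [this]
  | cons x w ih =>
    set s' : Fin k → Bool := fun i => (cdelta k i (s i) x).getD false with hs'
    have hstep : ∀ i, cdelta k i (s i) x = some (s' i) := by
      intro i
      have hi := h i
      simp only [prun] at hi
      cases hc : cdelta k i (s i) x with
      | none => rw [hc] at hi; simp at hi
      | some q => simp [hs', hc]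
    have hrest : ∀ i, prun (cdelta k i) (s' i) w = some (t i) := by
      intro i
      have hi := h i
      simp only [prun, hstep i] at hi
      simpa using hi
    have := cval_step k s s' x hstep
    have := ih s' hrest
    simp only [List.length_cons]
    omega

end

/-- A word over `{a₁, …, a_k}` that maps every `sᵢ` to `tᵢ` with all
intermediate transitions defined has length at least `2^k - 1`, and this bound
is attained. Each gadget `cdelta k i` is monotonic (for the order
`false < true`). -/
theorem stmt17 (k : ℕ) :
    (∀ (i : Fin k) (x : Fin k) (a b a' b' : Bool), a ≤ b →
      cdelta k i a x = some a' → cdelta k i b x = some b' → a' ≤ b') ∧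
    (∃ w : List (Fin k), w.length = 2 ^ k - 1 ∧
      ∀ i : Fin k, prun (cdelta k i) false w = some true) ∧
    (∀ w : List (Fin k), (∀ i : Fin k, prun (cdelta k i) false w = some true) →
      2 ^ k - 1 ≤ w.length) := by
  refine ⟨?_, ?_, ?_⟩
  · intro i x a b a' b' hab h1 h2
    unfold cdelta at h1 h2
    split_ifs at h1 h2 <;> cases a <;> cases b <;> simp_all
  · rcases Nat.eq_zero_or_pos k with hk | hk
    · subst hk
      exact ⟨[], by simp, fun i => i.elim0⟩
    · refine ⟨(Uword k).map (fun a => (⟨a % k, Nat.mod_lt _ hk⟩ : Fin k)), ?_, ?_⟩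
      · simp [Uword_length]
      · intro i
        have := run_U k hk k le_rfl i false
        simpa [i.2] using this
  · intro w hw
    have hb := run_bound k (fun _ => false) (fun _ => true) w hw
    have hvf : cval k (fun _ => false) = 0 := by simp [cval]
    have hvt : cval k (fun _ => true) = 2 ^ k - 1 := by
      unfold cval
      simp only [if_pos]
      rw [Fin.sum_univ_eq_sum_range (fun i => 2 ^ i) k, sum_pow_two]
    omega
end

section
/- In any monotonic automaton A with state order q₁ < ... < qₙ, if w = w₁...w_m is a shortest word synchronizing a subset S with q_ℓ = min S and q_r = max S, then the sequence of pairs (δ(q_ℓ, w₁...w_k), δ(q_r, w₁...w_k)) for k = 0, 1, ..., m contains no repeated pair, satisfies δ(q_ℓ, prefix) ≤ δ(q_r, prefix) for every prefix, and only the final pair has equal components. -/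
/-- For a shortest word `w` synchronizing a subset `S` of a monotonic
automaton, with `q_ℓ = min S` and `q_r = max S`: the sequence of pairs of
images of `q_ℓ` and `q_r` under the prefixes of `w` contains no repeated pair,
the image of `q_ℓ` is always at most the image of `q_r`, and only the final
pair has equal components. -/
theorem stmt18 {Q A : Type*} [LinearOrder Q] (δ : Q → A → Q)
    (hmono : ∀ x : A, Monotone (fun q => δ q x))
    (S : Set Q) (ql qr : Q) (hql : ql ∈ S) (hqr : qr ∈ S)
    (hmin : ∀ s ∈ S, ql ≤ s) (hmax : ∀ s ∈ S, s ≤ qr)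
    (w : List A) (hw : ∃ p : Q, ∀ s ∈ S, w.foldl δ s = p)
    (hshort : ∀ w' : List A, (∃ p : Q, ∀ s ∈ S, w'.foldl δ s = p) →
      w.length ≤ w'.length) :
    (∀ k1 ≤ w.length, ∀ k2 ≤ w.length,
      ((w.take k1).foldl δ ql, (w.take k1).foldl δ qr) =
        ((w.take k2).foldl δ ql, (w.take k2).foldl δ qr) → k1 = k2) ∧
    (∀ k ≤ w.length, (w.take k).foldl δ ql ≤ (w.take k).foldl δ qr) ∧
    (∀ k ≤ w.length, (w.take k).foldl δ ql = (w.take k).foldl δ qr →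
      k = w.length) := by
  have hm : ∀ (u : List A) (a b : Q), a ≤ b → u.foldl δ a ≤ u.foldl δ b := by
    intro u
    induction u with
    | nil => intro a b h; exact h
    | cons x t ih => intro a b h; exact ih _ _ (hmono x h)
  -- a word synchronizes S iff it identifies ql and qr
  have hsync : ∀ u : List A, u.foldl δ ql = u.foldl δ qr →
      ∃ p : Q, ∀ s ∈ S, u.foldl δ s = p := by
    intro u h
    refine ⟨u.foldl δ ql, fun s hs => le_antisymm ?_ (hm u ql s (hmin s hs))⟩
    rw [h]; exact hm u s qr (hmax s hs)
  have hne : ∀ k ≤ w.length, (w.take k).foldl δ ql = (w.take k).foldl δ qr →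
      k = w.length := by
    intro k hk h
    have := hshort _ (hsync _ h)
    have hlen : (w.take k).length = k := by
      simp [List.length_take, Nat.min_eq_left hk]
    omega
  refine ⟨?_, fun k _ => hm _ _ _ (hmin qr hqr), hne⟩
  -- injectivity
  have key : ∀ k1 k2, k1 ≤ w.length → k2 ≤ w.length → k1 < k2 →
      ((w.take k1).foldl δ ql, (w.take k1).foldl δ qr) =
        ((w.take k2).foldl δ ql, (w.take k2).foldl δ qr) → False := by
    intro k1 k2 hk1 hk2 hlt h
    obtain ⟨h1, h2⟩ := Prod.mk.injEq .. ▸ h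
    set w' := w.take k1 ++ w.drop k2 with hw'
    have hql' : w'.foldl δ ql = w.foldl δ ql := by
      rw [hw', List.foldl_append, h1, ← List.foldl_append, List.take_append_drop]
    have hqr' : w'.foldl δ qr = w.foldl δ qr := by
      rw [hw', List.foldl_append, h2, ← List.foldl_append, List.take_append_drop]
    obtain ⟨p, hp⟩ := hw
    have : w'.foldl δ ql = w'.foldl δ qr := by
      rw [hql', hqr', hp ql hql, hp qr hqr]
    have hlong := hshort _ (hsync _ this)
    have : w'.length = k1 + (w.length - k2) := by
      simp [hw', List.length_take, List.length_drop, Nat.min_eq_left hk1]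
    omega
  intro k1 hk1 k2 hk2 h
  rcases lt_trichotomy k1 k2 with hlt | heq | hgt
  · exact absurd (key k1 k2 hk1 hk2 hlt h) (fun f => f)
  · exact heq
  · exact absurd (key k2 k1 hk2 hk1 hgt h.symm) (fun f => f)
end
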